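/- arXiv:1209.2882 — 5 statements merged into one kernel-verified Lean document; each statement's English description precedes it below -/
import Mathlib

section
/- Let P be the symmetric pyramid associated to positive integers p_1 ≤ … ≤ p_r and p_0, and let p be the partition obtained by sorting the multiset (p_1, p_1, …, p_r, p_r, p_0). If A, B ∈ sTab^≤(P) and part(RS(A)) = p, then RS(A) = RS(B) if and only if A = B. -/
namespace BG

variable {α : Type*}

/-- One step of Robinson–Schensted row insertion: insert `x` into a weakly
increasing row, bumping the leftmost entry strictly greater than `x`. -/
def rowInsert [LinearOrder α] : List α → α → List α × Option α
  | [], x => ([x], none)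
  | y :: ys, x =>
    if x < y then (x :: ys, some y)
    else
      let p := rowInsert ys x
      (y :: p.1, p.2)

/-- Insert a letter into a tableau (list of rows, top row first) by
Robinson–Schensted row insertion. -/
def insertT [LinearOrder α] : List (List α) → α → List (List α)
  | [], x => [[x]]
  | r :: rs, x =>
    match rowInsert r x with
    | (r', none) => r' :: rs
    | (r', some y) => r' :: insertT rs y

/-- The insertion tableau of the Robinson–Schensted algorithm. -/
def RS [LinearOrder α] (w : List α) : List (List α) := w.foldl insertT []

/-- The partition underlying a tableau: the list of its row lengths
(top row first, so weakly decreasing). -/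
def part (T : List (List α)) : List ℕ := T.map List.length

/-- The reversed negation of a row. -/
def negRow [Neg α] (l : List α) : List α := l.reverse.map (fun x => -x)

/-- Every column of a left-justified array (list of rows, top to bottom) is
strictly decreasing from top to bottom, where entries must decrease strictly
across any gap occurring in the middle of a column. -/
def ColumnStrict [LT α] (B : List (List α)) : Prop :=
  ∀ j : ℕ, List.Chain' (fun x y => y < x) (B.filterMap (fun r => r[j]?))

/-- A left-justified array is row equivalent to column strict if its entries can
be permuted within rows so that every column is strictly decreasing. -/
def RowEquivColumnStrict [LT α] (A : List (List α)) : Prop :=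
  ∃ B, List.Forall₂ List.Perm A B ∧ ColumnStrict B

/-- Elementary Knuth moves on words of integers. -/
inductive KnuthStep : List ℤ → List ℤ → Prop
  | move1 (u v : List ℤ) (x y z : ℤ) (hxy : x ≤ y) (hyz : y < z) :
      KnuthStep (u ++ x :: z :: y :: v) (u ++ z :: x :: y :: v)
  | move2 (u v : List ℤ) (x y z : ℤ) (hxy : x < y) (hyz : y ≤ z) :
      KnuthStep (u ++ y :: x :: z :: v) (u ++ y :: z :: x :: v)

/-- Knuth equivalence of words of integers. -/
def KnuthEquiv : List ℤ → List ℤ → Prop := Relation.EqvGen KnuthStep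

/-- Generators of the τ-equivalence: Knuth moves (R1), negating the last letter
when its absolute value exceeds that of the previous letter (R2), and
transposing the last two letters when they have opposite signs (R3). -/
inductive TauStep : List ℤ → List ℤ → Prop
  | knuth (u v : List ℤ) : KnuthStep u v → TauStep u v
  | negLast (u : List ℤ) (b a : ℤ) (h : |b| < |a|) :
      TauStep (u ++ [b, a]) (u ++ [b, -a])
  | swapLast (u : List ℤ) (b a : ℤ) (h : b * a < 0) :
      TauStep (u ++ [b, a]) (u ++ [a, b])

/-- The τ-equivalence on words of integers. -/
def TauEquiv : List ℤ → List ℤ → Prop := Relation.EqvGen TauStep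

/-- A larger-smaller transposition. -/
inductive LSStep : List ℤ → List ℤ → Prop
  | swap (u w : List ℤ) (a b : ℤ) (h : b < a) :
      LSStep (u ++ a :: b :: w) (u ++ b :: a :: w)

/-- Dominance order on partitions (weakly decreasing lists of naturals). -/
def DomLE (μ ν : List ℕ) : Prop :=
  μ.sum = ν.sum ∧ ∀ k : ℕ, (μ.take k).sum ≤ (ν.take k).sum

/-- The content of a partition, given as a weakly decreasing list of naturals:
reverse to increasing order `(q₁ ≤ … ≤ q_m)`, prepend a zero part if necessary
so that the number of parts is odd, and take the multiset of
`⌊(qᵢ + i - 1)/2⌋` (1-indexed). -/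
def contentP (q : List ℕ) : Multiset ℕ :=
  let q₁ := q.reverse
  let q₂ := if q₁.length % 2 = 1 then q₁ else 0 :: q₁
  ↑((List.range q₂.length).map (fun i => (q₂.getD i 0 + i) / 2))

/-- Membership in `sTab^≤(P)` where `rows` is the list of row lengths of the
symmetric pyramid `P` (top to bottom): correct shape, skew-symmetry with
respect to the centre of the pyramid, weakly increasing rows, and all entries
in `ℤ` or all entries in `½ + ℤ`. -/
def MemSTabLe (rows : List ℕ) (A : List (List ℚ)) : Prop :=
  A.map List.length = rows ∧
  A.reverse.map negRow = A ∧
  (∀ row ∈ A, List.Chain' (· ≤ ·) row) ∧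
  ((∀ x ∈ A.flatten, ∃ z : ℤ, x = (z : ℚ)) ∨
   (∀ x ∈ A.flatten, ∃ z : ℤ, x = (z : ℚ) + 1 / 2))

/-! ### Auxiliary development -/

section Aux

variable [LinearOrder α]

/-- Reverse bumping in a row: replace the rightmost entry `< z` by `z`,
returning the new row and the removed entry. -/
def unbump : List α → α → List α × α
  | [], z => ([], z)
  | w :: ws, z =>
    if ∃ u ∈ ws, u < z then
      let p := unbump ws z; (w :: p.1, p.2)
    else (z :: ws, w)

theorem chain'_le_of_head {y : α} {ys : List α} (hr : List.Chain' (· ≤ ·) (y :: ys)) :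
    ∀ u ∈ ys, y ≤ u :=
  (List.pairwise_cons.1 ((List.isChain_iff_pairwise).1 hr)).1

theorem rowInsert_none {r : List α} {x : α} {r' : List α}
    (h : rowInsert r x = (r', none)) : r' = r ++ [x] ∧ ∀ u ∈ r, u ≤ x := by
  induction r generalizing r' with
  | nil =>
    simp only [rowInsert, Prod.mk.injEq] at h
    exact ⟨h.1.symm, by simp⟩
  | cons y ys ih =>
    by_cases hxy : x < y
    · simp [rowInsert, hxy] at h
    · rcases hp : rowInsert ys x with ⟨t, o⟩
      simp only [rowInsert, if_neg hxy, hp, Prod.mk.injEq] at h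
      obtain ⟨h1, h2⟩ := h
      obtain ⟨ht, hall⟩ := ih (by rw [hp, h2])
      subst ht
      refine ⟨by simp [← h1], ?_⟩
      intro u hu
      rcases List.mem_cons.1 hu with hu | hu
      · exact hu ▸ le_of_not_gt hxy
      · exact hall u hu

theorem rowInsert_of_all_le {r : List α} {x : α} (h : ∀ u ∈ r, u ≤ x) :
    rowInsert r x = (r ++ [x], none) := by
  induction r with
  | nil => simp [rowInsert]
  | cons y ys ih =>
    have hy : ¬ x < y := not_lt.2 (h y (by simp))
    simp [rowInsert, hy, ih fun u hu => h u (by simp [hu])]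

theorem rowInsert_some {r : List α} {x : α} {r' : List α} {b : α}
    (h : rowInsert r x = (r', some b)) :
    x < b ∧ x ∈ r' ∧ b ∈ r ∧ r'.length = r.length := by
  induction r generalizing r' with
  | nil => simp [rowInsert] at h
  | cons y ys ih =>
    by_cases hxy : x < y
    · simp only [rowInsert, if_pos hxy, Prod.mk.injEq, Option.some.injEq] at h
      obtain ⟨h1, h2⟩ := h
      subst h2
      simp [← h1, hxy]
    · rcases hp : rowInsert ys x with ⟨t, o⟩
      simp only [rowInsert, if_neg hxy, hp, Prod.mk.injEq] at h
      obtain ⟨h1, h2⟩ := h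
      rcases o with _ | c
      · simp at h2
      · simp only [Option.some.injEq] at h2; subst h2
        obtain ⟨hb1, hb2, hb3, hb4⟩ := ih hp
        exact ⟨hb1, by simp [← h1, hb2], by simp [hb3], by simp [← h1, hb4]⟩

theorem rowInsert_chain {r : List α} {x : α} (hr : List.Chain' (· ≤ ·) r) :
    List.Chain' (· ≤ ·) (rowInsert r x).1 := by
  induction r with
  | nil => simp [rowInsert, List.Chain']
  | cons y ys ih =>
    by_cases hxy : x < y
    · simp only [rowInsert, if_pos hxy]
      exact List.isChain_cons.2 ⟨fun z hz => le_trans hxy.le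
        ((List.isChain_cons.1 hr).1 z hz), hr.tail⟩
    · simp only [rowInsert, if_neg hxy]
      refine List.isChain_cons.2 ⟨?_, ih hr.tail⟩
      intro z hz
      rcases ys with _ | ⟨v, vs⟩
      · simp [rowInsert] at hz; subst hz; exact le_of_not_gt hxy
      · by_cases hxv : x < v
        · simp [rowInsert, hxv] at hz; subst hz; exact le_of_not_gt hxy
        · simp [rowInsert, hxv] at hz; subst hz
          exact (List.isChain_cons_cons.1 hr).1

theorem unbump_rowInsert {r : List α} {x : α} {r' : List α} {b : α}
    (hr : List.Chain' (· ≤ ·) r) (h : rowInsert r x = (r', some b)) :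
    unbump r' b = (r, x) := by
  induction r generalizing r' with
  | nil => simp [rowInsert] at h
  | cons y ys ih =>
    by_cases hxy : x < y
    · simp only [rowInsert, if_pos hxy, Prod.mk.injEq, Option.some.injEq] at h
      obtain ⟨h1, rfl⟩ := h
      have hno : ¬ ∃ u ∈ ys, u < y := by
        rintro ⟨u, hu, hub⟩
        exact absurd (chain'_le_of_head hr u hu) (not_le.2 hub)
      rw [← h1]
      simp [unbump, hno]
    · rcases hp : rowInsert ys x with ⟨t, _ | c⟩
      · simp [rowInsert, if_neg hxy, hp] at h
      · simp only [rowInsert, if_neg hxy, hp, Prod.mk.injEq, Option.some.injEq] at h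
        obtain ⟨h1, rfl⟩ := h
        have hps := rowInsert_some hp
        have hyes : ∃ u ∈ t, u < c := ⟨x, hps.2.1, hps.1⟩
        rw [← h1]
        simp only [unbump, if_pos hyes]
        rw [ih hr.tail hp]

theorem rowInsert_some_char {r : List α} {x : α} {r' : List α} {b : α}
    (h : rowInsert r x = (r', some b)) :
    ∃ p, r[p]? = some b ∧ r' = r.set p x ∧ ∀ i < p, ∀ a : α, r[i]? = some a → a ≤ x := by
  induction r generalizing r' with
  | nil => simp [rowInsert] at h
  | cons y ys ih =>
    by_cases hxy : x < y
    · simp only [rowInsert, if_pos hxy, Prod.mk.injEq, Option.some.injEq] at h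
      obtain ⟨h1, rfl⟩ := h
      exact ⟨0, by simp, by simp [← h1], by simp⟩
    · rcases hp : rowInsert ys x with ⟨t, _ | c⟩
      · simp [rowInsert, if_neg hxy, hp] at h
      · simp only [rowInsert, if_neg hxy, hp, Prod.mk.injEq, Option.some.injEq] at h
        obtain ⟨h1, rfl⟩ := h
        obtain ⟨p, hp1, hp2, hp3⟩ := ih hp
        refine ⟨p + 1, by simpa using hp1, by simp [← h1, hp2], ?_⟩
        intro i hi a ha
        rcases i with _ | i
        · simp at ha; exact ha ▸ le_of_not_gt hxy
        · exact hp3 i (by omega) a (by simpa using ha)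

/-- Row insertion returning also the row index of the new cell. -/
def insertTC : List (List α) → α → List (List α) × ℕ
  | [], x => ([[x]], 0)
  | r :: rs, x =>
    match rowInsert r x with
    | (r', none) => (r' :: rs, 0)
    | (r', some y) => let p := insertTC rs y; (r' :: p.1, p.2 + 1)

theorem insertTC_fst (T : List (List α)) (x : α) : (insertTC T x).1 = insertT T x := by
  induction T generalizing x with
  | nil => simp [insertTC, insertT]
  | cons r rs ih =>
    rcases hp : rowInsert r x with ⟨r', _ | y⟩
    · simp [insertTC, insertT, hp]
    · simp [insertTC, insertT, hp, ih]

/-- Increment entry `j` of a shape (appending a new row of size 1 if `j` is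
just past the end). -/
def incShape (s : List ℕ) (j : ℕ) : List ℕ :=
  if j < s.length then s.set j (s.getD j 0 + 1) else s ++ [1]

theorem incShape_cons {s : List ℕ} {j : ℕ} (h : j ≤ s.length) (a : ℕ) :
    incShape (a :: s) (j + 1) = a :: incShape s j := by
  rcases lt_or_eq_of_le h with h | h
  · simp [incShape, h, Nat.succ_lt_succ h]
  · subst h
    simp [incShape]

theorem insertTC_shape (T : List (List α)) (x : α) :
    part (insertTC T x).1 = incShape (part T) (insertTC T x).2 ∧
      (insertTC T x).2 ≤ T.length := by
  induction T generalizing x with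
  | nil => simp [insertTC, part, incShape]
  | cons r rs ih =>
    rcases hp : rowInsert r x with ⟨r', _ | y⟩
    · obtain ⟨h1, _⟩ := rowInsert_none hp
      subst h1
      simp [insertTC, hp, part, incShape]
    · obtain ⟨ih1, ih2⟩ := ih y
      have hlen := (rowInsert_some hp).2.2.2
      have hstep : insertTC (r :: rs) x = (r' :: (insertTC rs y).1, (insertTC rs y).2 + 1) := by
        simp [insertTC, hp]
      rw [hstep]
      constructor
      · show r'.length :: part (insertTC rs y).1 = incShape (r.length :: part rs) _
        rw [incShape_cons (by simpa [part] using ih2), hlen, ih1]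
      · simp; omega

/-- Validity of a tableau: nonempty weakly increasing rows, strictly
increasing columns (with row lengths weakly decreasing). -/
def ColRel (r s : List α) : Prop :=
  s.length ≤ r.length ∧ ∀ i : ℕ, ∀ a b : α, r[i]? = some a → s[i]? = some b → a < b

def TVal (T : List (List α)) : Prop :=
  (∀ r ∈ T, r ≠ [] ∧ List.Chain' (· ≤ ·) r) ∧ List.Chain' ColRel T

theorem TVal_nil : TVal ([] : List (List α)) := ⟨by simp, by simp [List.Chain']⟩

theorem TVal_insertT {T : List (List α)} (x : α) (hT : TVal T) : TVal (insertT T x) := by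
  induction T generalizing x with
  | nil =>
    simp only [insertT]
    exact ⟨by simp [List.Chain'], by simp [List.Chain']⟩
  | cons r rs ih =>
    obtain ⟨hrows, hcol⟩ := hT
    obtain ⟨hrne, hrch⟩ := hrows r (by simp)
    rcases hp : rowInsert r x with ⟨r', _ | b⟩
    · -- appended at end of first row
      obtain ⟨h1, hall⟩ := rowInsert_none hp
      subst h1
      simp only [insertT, hp]
      refine ⟨?_, ?_⟩
      · intro s hs
        rcases List.mem_cons.1 hs with hs | hs
        · subst hs
          exact ⟨by simp, by simpa [hp] using rowInsert_chain (x := x) hrch⟩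
        · exact hrows s (by simp [hs])
      · refine List.isChain_cons.2 ⟨?_, (List.isChain_cons.1 hcol).2⟩
        intro s hs
        have hcrs : ColRel r s := (List.isChain_cons.1 hcol).1 s hs
        refine ⟨by have := hcrs.1; simp; omega, ?_⟩
        intro i a b ha hb
        have hi : i < s.length := by
          by_contra hc
          simp [List.getElem?_eq_none (le_of_not_gt hc)] at hb
        have : (r ++ [x])[i]? = r[i]? := List.getElem?_append_left (lt_of_lt_of_le hi hcrs.1)
        exact hcrs.2 i a b (this ▸ ha) hb
    · -- bumped
      obtain ⟨p, hpb, hpr, hple⟩ := rowInsert_some_char hp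
      have hxb : x < b := (rowInsert_some hp).1
      have hplen : p < r.length := by
        by_contra hc
        simp [List.getElem?_eq_none (le_of_not_gt hc)] at hpb
      have hr'len : r'.length = r.length := by rw [hpr]; simp
      have hrsval : TVal rs := ⟨fun s hs => hrows s (by simp [hs]), (List.isChain_cons.1 hcol).2⟩
      have ihv := ih b hrsval
      simp only [insertT, hp]
      refine ⟨?_, ?_⟩
      · intro s hs
        rcases List.mem_cons.1 hs with hs | hs
        · subst hs
          refine ⟨by intro hc; rw [hc] at hr'len; simp at hr'len; omega, ?_⟩
          have := rowInsert_chain (x := x) hrch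
          rwa [hp] at this
        · exact ihv.1 s hs
      · refine List.isChain_cons.2 ⟨?_, ihv.2⟩
        intro s' hs'
        -- s' is the head of insertT rs b; analyze cases on rs
        rcases rs with _ | ⟨s, rs2⟩
        · -- new row [b]
          simp only [insertT, List.head?_cons, Option.mem_def, Option.some.injEq] at hs'
          subst hs'
          refine ⟨by simp only [List.length_singleton, hr'len]; omega, ?_⟩
          intro i a c ha hc
          rcases i with _ | i
          · simp at hc; subst hc
            rcases Nat.eq_zero_or_pos p with hp0 | hp0
            · subst hp0
              rw [hpr] at ha
              rw [List.getElem?_set_self hplen] at ha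
              simp at ha; subst ha; exact hxb
            · rw [hpr, List.getElem?_set_ne (by omega)] at ha
              exact lt_of_le_of_lt (hple 0 hp0 a ha) hxb
          · simp at hc
        · -- existing second row s
          have hcrs : ColRel r s := (List.isChain_cons.1 hcol).1 s (by simp)
          obtain ⟨hsne, hsch⟩ := hrows s (by simp)
          rcases hq : rowInsert s b with ⟨t, _ | c⟩
          · -- b appended to second row
            obtain ⟨ht, hallb⟩ := rowInsert_none hq
            subst ht
            simp only [insertT, hq, List.head?_cons, Option.mem_def, Option.some.injEq] at hs'
            subst hs'
            have hslen : s.length ≤ p := by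
              by_contra hc
              push_neg at hc
              have hsp : s[p]? = some (s[p]'hc) := List.getElem?_eq_getElem hc
              have h1 : b < s[p]'hc := hcrs.2 p b _ hpb hsp
              have h2 : s[p]'hc ≤ b := hallb _ (List.getElem_mem hc)
              exact absurd h2 (not_le.2 h1)
            refine ⟨by simp; omega, ?_⟩
            intro i a c ha hc
            by_cases hi : i < s.length
            · have hcieq : (s ++ [b])[i]? = s[i]? := List.getElem?_append_left hi
              rw [hcieq] at hc
              have hanep : i ≠ p := by omega
              rw [hpr, List.getElem?_set_ne (Ne.symm hanep)] at ha
              exact hcrs.2 i a c ha hc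
            · have hieq : i = s.length := by
                by_contra hne
                have : s.length + 1 ≤ i := by omega
                rw [List.getElem?_eq_none (by simp; omega)] at hc
                simp at hc
              subst hieq
              rw [List.getElem?_concat_length] at hc
              simp at hc; subst hc
              rcases lt_or_eq_of_le hslen with hlt | heq
              · rw [hpr, List.getElem?_set_ne (by omega)] at ha
                exact lt_of_le_of_lt (hple _ hlt a ha) hxb
              · rw [hpr, ← heq, List.getElem?_set_self (heq ▸ hplen)] at ha
                simp at ha; subst ha; exact hxb
          · -- b bumped c from second row
            obtain ⟨q, hqc, hqt, hqle⟩ := rowInsert_some_char hq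
            have hbc : b < c := (rowInsert_some hq).1
            have hqlen : q < s.length := by
              by_contra hcc
              simp [List.getElem?_eq_none (le_of_not_gt hcc)] at hqc
            simp only [insertT, hq, List.head?_cons, Option.mem_def, Option.some.injEq] at hs'
            subst hs'
            have hqp : q ≤ p := by
              by_contra hcc
              push_neg at hcc
              -- p < q, so s[p] ≤ b but r[p] = b < s[p]
              have hps : p < s.length := lt_trans hcc hqlen
              have hsp : s[p]? = some (s[p]'hps) := List.getElem?_eq_getElem hps
              have h1 : b < s[p]'hps := hcrs.2 p b _ hpb hsp
              have h2 : s[p]'hps ≤ b := hqle p hcc _ hsp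
              exact absurd h2 (not_le.2 h1)
            refine ⟨by rw [hqt, hpr]; simp [hcrs.1], ?_⟩
            intro i a c' ha hc'
            by_cases hiq : i = q
            · subst hiq
              rw [hqt, List.getElem?_set_self hqlen] at hc'
              simp at hc'; subst hc'
              rcases lt_or_eq_of_le hqp with hlt | heq
              · rw [hpr, List.getElem?_set_ne (by omega)] at ha
                exact lt_of_le_of_lt (hple _ hlt a ha) hxb
              · rw [hpr, heq, List.getElem?_set_self hplen] at ha
                simp at ha; subst ha; exact hxb
            · rw [hqt, List.getElem?_set_ne (Ne.symm hiq)] at hc'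
              by_cases hip : i = p
              · subst hip
                rw [hpr, List.getElem?_set_self hplen] at ha
                simp at ha; subst ha
                have hps : i < s.length := by
                  by_contra hcc
                  simp [List.getElem?_eq_none (le_of_not_gt hcc)] at hc'
                have hsp := List.getElem?_eq_getElem hps
                rw [hsp] at hc'
                simp at hc'; subst hc'
                exact lt_trans hxb (hcrs.2 _ b _ hpb hsp)
              · rw [hpr, List.getElem?_set_ne (Ne.symm hip)] at ha
                exact hcrs.2 i a c' ha hc'

/-- Reverse insertion: undo an insertion that terminated in row `j`. -/
def revIns (d : α) : List (List α) → ℕ → List (List α) × α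
  | [], _ => ([], d)
  | r :: rs, 0 => (if r.length ≤ 1 then rs else r.dropLast :: rs, r.getLastD d)
  | r :: rs, j+1 =>
    let p := revIns d rs j
    let q := unbump r p.2
    (q.1 :: p.1, q.2)

theorem revIns_insertTC (d : α) {T : List (List α)} {x : α}
    (hrows : ∀ r ∈ T, r ≠ [] ∧ List.Chain' (· ≤ ·) r) :
    revIns d (insertTC T x).1 (insertTC T x).2 = (T, x) := by
  induction T generalizing x with
  | nil => simp [insertTC, revIns]
  | cons r rs ih =>
    obtain ⟨hrne, hrch⟩ := hrows r (by simp)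
    rcases hp : rowInsert r x with ⟨r', _ | y⟩
    · obtain ⟨h1, _⟩ := rowInsert_none hp
      subst h1
      have hlen : ¬ (r ++ [x]).length ≤ 1 := by
        rcases r with _ | _
        · simp at hrne
        · simp
      simp [insertTC, hp, revIns, hlen, List.dropLast_concat, List.getLastD_concat, hrne]
    · have hstep : insertTC (r :: rs) x = (r' :: (insertTC rs y).1, (insertTC rs y).2 + 1) := by
        simp [insertTC, hp]
      rw [hstep]
      show ((unbump r' (revIns d (insertTC rs y).1 (insertTC rs y).2).2).1 ::
          (revIns d (insertTC rs y).1 (insertTC rs y).2).1,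
         (unbump r' (revIns d (insertTC rs y).1 (insertTC rs y).2).2).2) = _
      rw [ih (fun s hs => hrows s (by simp [hs]))]
      simp only
      rw [unbump_rowInsert hrch hp]

theorem rowInsert_pair {r : List α} {x y : α} {rx ry : List α} {b c : α}
    (hr : List.Chain' (· ≤ ·) r) (hxy : x ≤ y)
    (h1 : rowInsert r x = (rx, some b)) (h2 : rowInsert rx y = (ry, some c)) :
    b ≤ c := by
  induction r generalizing x y rx ry with
  | nil => simp [rowInsert] at h1
  | cons y0 ys ih =>
    by_cases hx0 : x < y0
    · simp only [rowInsert, if_pos hx0, Prod.mk.injEq, Option.some.injEq] at h1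
      obtain ⟨h1a, rfl⟩ := h1
      rw [← h1a] at h2
      have hyx : ¬ y < x := not_lt.2 hxy
      rcases hq : rowInsert ys y with ⟨t, _ | c'⟩
      · simp [rowInsert, hyx, hq] at h2
      · simp only [rowInsert, if_neg hyx, hq, Prod.mk.injEq, Option.some.injEq] at h2
        obtain ⟨_, rfl⟩ := h2
        exact chain'_le_of_head hr _ (rowInsert_some hq).2.2.1
    · rcases hp : rowInsert ys x with ⟨t, _ | b'⟩
      · simp [rowInsert, hx0, hp] at h1
      · simp only [rowInsert, if_neg hx0, hp, Prod.mk.injEq, Option.some.injEq] at h1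
        obtain ⟨h1a, rfl⟩ := h1
        rw [← h1a] at h2
        have hy0 : ¬ y < y0 := not_lt.2 (le_trans (le_of_not_gt hx0) hxy)
        rcases hq : rowInsert t y with ⟨t2, _ | c'⟩
        · simp [rowInsert, hy0, hq] at h2
        · simp only [rowInsert, if_neg hy0, hq, Prod.mk.injEq, Option.some.injEq] at h2
          obtain ⟨_, rfl⟩ := h2
          exact ih hr.tail hxy hp hq

theorem insertTC_pair {T : List (List α)} {x y : α}
    (hrows : ∀ r ∈ T, List.Chain' (· ≤ ·) r) (hxy : x ≤ y) :
    (insertTC (insertTC T x).1 y).2 ≤ (insertTC T x).2 := by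
  induction T generalizing x y with
  | nil =>
    have : rowInsert [x] y = ([x, y], none) := by
      simpa using rowInsert_of_all_le (r := [x]) (x := y) (by simpa using hxy)
    simp [insertTC, this]
  | cons r rs ih =>
    rcases hp : rowInsert r x with ⟨r', _ | b⟩
    · obtain ⟨h1, hall⟩ := rowInsert_none hp
      subst h1
      have : rowInsert (r ++ [x]) y = ((r ++ [x]) ++ [y], none) :=
        rowInsert_of_all_le (by
          intro u hu
          rcases List.mem_append.1 hu with hu | hu
          · exact le_trans (hall u hu) hxy
          · simp at hu; subst hu; exact hxy)
      simp [insertTC, hp, this]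
    · have hstep : insertTC (r :: rs) x = (r' :: (insertTC rs b).1, (insertTC rs b).2 + 1) := by
        simp [insertTC, hp]
      rw [hstep]
      rcases hq : rowInsert r' y with ⟨r'', _ | c⟩
      · simp [insertTC, hq]
      · have hbc : b ≤ c := rowInsert_pair (hrows r (by simp)) hxy hp hq
        have := ih (fun s hs => hrows s (by simp [hs])) hbc
        simp only [insertTC, hq]
        omega

/-- Insert a word, recording the cell rows chronologically. -/
def insWC : List (List α) → List α → List (List α) × List ℕ
  | T, [] => (T, [])
  | T, a :: u =>
    let p := insertTC T a
    let q := insWC p.1 u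
    (q.1, p.2 :: q.2)

theorem insWC_fst (T : List (List α)) (u : List α) :
    (insWC T u).1 = List.foldl insertT T u := by
  induction u generalizing T with
  | nil => simp [insWC]
  | cons a u ih => simp [insWC, ih, insertTC_fst]

theorem insWC_append (T : List (List α)) (u v : List α) :
    insWC T (u ++ v) = ((insWC (insWC T u).1 v).1, (insWC T u).2 ++ (insWC (insWC T u).1 v).2) := by
  induction u generalizing T with
  | nil => simp [insWC]
  | cons a u ih => simp [insWC, ih]

theorem insWC_cells_chain {T : List (List α)} {u : List α}
    (hT : TVal T) (hu : List.Chain' (· ≤ ·) u) :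
    List.Chain' (· ≥ ·) (insWC T u).2 := by
  induction u generalizing T with
  | nil => simp [insWC, List.Chain']
  | cons a u ih =>
    show List.Chain' (· ≥ ·) ((insertTC T a).2 :: (insWC (insertTC T a).1 u).2)
    refine List.isChain_cons.2 ⟨?_, ih (by rw [insertTC_fst]; exact TVal_insertT a hT) hu.tail⟩
    intro j hj
    rcases u with _ | ⟨b, u'⟩
    · simp [insWC] at hj
    · have hj' : j = (insertTC (insertTC T a).1 b).2 := by
        simpa [insWC] using hj.symm
      subst hj'
      exact insertTC_pair (fun r hr => (hT.1 r hr).2) (List.isChain_cons_cons.1 hu).1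

/-- A cell sequence is good for a shape: each lands within bounds and all
intermediate shapes are weakly decreasing. -/
def GoodSeq : List ℕ → List ℕ → Prop
  | μ, [] => List.Chain' (· ≥ ·) μ
  | μ, j :: js => j ≤ μ.length ∧ List.Chain' (· ≥ ·) μ ∧ GoodSeq (incShape μ j) js

theorem part_sorted {T : List (List α)} (hT : TVal T) :
    List.Chain' (· ≥ ·) (part T) := by
  have := hT.2
  unfold List.Chain' at this ⊢
  rw [part, List.isChain_map]
  exact this.imp (fun a b h => h.1)

theorem goodseq_insWC {T : List (List α)} (hT : TVal T) (u : List α) :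
    GoodSeq (part T) (insWC T u).2 ∧
      part (insWC T u).1 = List.foldl incShape (part T) (insWC T u).2 := by
  induction u generalizing T with
  | nil => exact ⟨part_sorted hT, rfl⟩
  | cons a u ih =>
    have hTa : TVal (insertTC T a).1 := by rw [insertTC_fst]; exact TVal_insertT a hT
    obtain ⟨ih1, ih2⟩ := ih hTa
    have hsh := insertTC_shape T a
    constructor
    · show (insertTC T a).2 ≤ (part T).length ∧ _ ∧ GoodSeq (incShape (part T) (insertTC T a).2) _
      refine ⟨by simpa [part] using hsh.2, part_sorted hT, ?_⟩
      rw [← hsh.1]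
      exact ih1
    · show part (insWC (insertTC T a).1 u).1 =
        List.foldl incShape (part T) ((insertTC T a).2 :: (insWC (insertTC T a).1 u).2)
      rw [List.foldl_cons, ← hsh.1, ih2]

/-! ### Shape combinatorics -/

/-- Partial sums of a shape. -/
def psum (s : List ℕ) (k : ℕ) : ℕ := (s.take k).sum

theorem psum_zero (s : List ℕ) : psum s 0 = 0 := rfl

theorem psum_succ (s : List ℕ) (k : ℕ) : psum s (k + 1) = psum s k + s.getD k 0 := by
  rw [psum, psum, List.take_succ, List.sum_append]
  congr 1
  rcases h : s[k]? with _ | a <;> simp [List.getD_eq_getElem?_getD, h]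

theorem psum_cons (a : ℕ) (s : List ℕ) (k : ℕ) : psum (a :: s) (k + 1) = a + psum s k := by
  simp [psum]

theorem psum_all {s : List ℕ} {k : ℕ} (h : s.length ≤ k) : psum s k = s.sum := by
  rw [psum, List.take_of_length_le h]

theorem sortedD_getD_mono {s : List ℕ} (hs : List.Chain' (· ≥ ·) s) {k j : ℕ} (hkj : k ≤ j) :
    s.getD j 0 ≤ s.getD k 0 := by
  by_cases hj : j < s.length
  · have hk : k < s.length := lt_of_le_of_lt hkj hj
    rcases lt_or_eq_of_le hkj with hlt | heq
    · have hp := (List.isChain_iff_pairwise.1 hs)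
      have := List.pairwise_iff_getElem.1 hp k j hk hj hlt
      rw [List.getD_eq_getElem?_getD, List.getD_eq_getElem?_getD,
        List.getElem?_eq_getElem hk, List.getElem?_eq_getElem hj]
      exact this
    · subst heq; rfl
  · rw [List.getD_eq_getElem?_getD, List.getElem?_eq_none (le_of_not_gt hj)]
    simp

theorem incShape_getD_self {s : List ℕ} {j : ℕ} (h : j ≤ s.length) :
    (incShape s j).getD j 0 = s.getD j 0 + 1 := by
  rcases lt_or_eq_of_le h with hlt | heq
  · simp [incShape, hlt, List.getD_eq_getElem?_getD, List.getElem?_set_self hlt]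
  · subst heq
    simp [incShape, List.getD_eq_getElem?_getD, List.getElem?_concat_length,
      List.getElem?_eq_none (le_refl s.length)]

theorem incShape_getD_ne {s : List ℕ} {j i : ℕ} (h : j ≤ s.length) (hij : i ≠ j) :
    (incShape s j).getD i 0 = s.getD i 0 := by
  rcases lt_or_eq_of_le h with hlt | heq
  · simp [incShape, hlt, List.getD_eq_getElem?_getD, List.getElem?_set_ne (Ne.symm hij)]
  · subst heq
    by_cases hi : i < s.length
    · simp [incShape, List.getD_eq_getElem?_getD, List.getElem?_append_left hi]
    · have hi2 : (s ++ [1]).length ≤ i := by simp; omega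
      simp [incShape, List.getD_eq_getElem?_getD, List.getElem?_eq_none (le_of_not_gt hi),
        List.getElem?_eq_none hi2]

theorem incShape_getD_mono {s : List ℕ} {j : ℕ} (h : j ≤ s.length) (i : ℕ) :
    s.getD i 0 ≤ (incShape s j).getD i 0 := by
  by_cases hij : i = j
  · subst hij; rw [incShape_getD_self h]; omega
  · rw [incShape_getD_ne h hij]

theorem incShape_lenle {s : List ℕ} {j : ℕ} :
    (incShape s j).length ≤ s.length + 1 := by
  by_cases hj : j < s.length <;> simp [incShape, hj]

theorem incShape_psum {s : List ℕ} {j : ℕ} (h : j ≤ s.length) (k : ℕ) :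
    psum (incShape s j) k = psum s k + if j < k then 1 else 0 := by
  induction k with
  | zero => simp [psum_zero]
  | succ k ihk =>
    rw [psum_succ, psum_succ, ihk]
    by_cases hjk : j = k
    · subst hjk
      rw [incShape_getD_self h]
      simp [Nat.lt_succ_iff]
      omega
    · rw [incShape_getD_ne h (Ne.symm hjk)]
      by_cases hj : j < k
      · have : j < k + 1 := by omega
        simp [hj, this]; omega
      · have : ¬ j < k + 1 := by omega
        simp [hj, this]

theorem incShape_sum {s : List ℕ} {j : ℕ} (h : j ≤ s.length) :
    (incShape s j).sum = s.sum + 1 := by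
  have h1 : (incShape s j).sum = psum (incShape s j) (s.length + 1) :=
    (psum_all incShape_lenle).symm
  rw [h1, incShape_psum h, psum_all (by omega)]
  simp [Nat.lt_succ_iff, h]

theorem goodseq_append {μ : List ℕ} {a b : List ℕ} :
    GoodSeq μ (a ++ b) ↔ GoodSeq μ a ∧ GoodSeq (List.foldl incShape μ a) b := by
  induction a generalizing μ with
  | nil =>
    simp only [List.nil_append, List.foldl_nil]
    constructor
    · intro h
      rcases b with _ | ⟨j, js⟩
      · exact ⟨h, h⟩
      · exact ⟨h.2.1, h⟩
    · exact fun h => h.2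
  | cons j js ih =>
    show (_ ∧ _ ∧ GoodSeq _ (js ++ b)) ↔ (_ ∧ _ ∧ GoodSeq _ js) ∧ _
    rw [ih]
    simp only [List.foldl_cons]
    tauto

theorem goodseq_psum {μ js : List ℕ} (h : GoodSeq μ js) (k : ℕ) :
    psum (List.foldl incShape μ js) k = psum μ k + js.countP (fun j => decide (j < k)) := by
  induction js generalizing μ with
  | nil => simp
  | cons j js ih =>
    obtain ⟨hj, _, hg⟩ := h
    rw [List.foldl_cons, ih hg, incShape_psum hj k, List.countP_cons]
    by_cases hjk : j < k <;> simp [hjk] <;> omega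

theorem goodseq_sum {μ js : List ℕ} (h : GoodSeq μ js) :
    (List.foldl incShape μ js).sum = μ.sum + js.length := by
  induction js generalizing μ with
  | nil => simp
  | cons j js ih =>
    obtain ⟨hj, _, hg⟩ := h
    rw [List.foldl_cons, ih hg, incShape_sum hj, List.length_cons]
    omega

theorem goodseq_sorted {μ js : List ℕ} (h : GoodSeq μ js) :
    List.Chain' (· ≥ ·) (List.foldl incShape μ js) := by
  induction js generalizing μ with
  | nil => exact h
  | cons j js ih => exact ih h.2.2

theorem chain_ge_all_of_concat {l : List ℕ} {j : ℕ}
    (h : List.Chain' (· ≥ ·) (l ++ [j])) : ∀ i ∈ l, j ≤ i := by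
  have hp := List.isChain_iff_pairwise.1 h
  rw [List.pairwise_append] at hp
  intro i hi
  exact hp.2.2 i hi j (by simp)

theorem goodseq_getD_ge {μ js : List ℕ} (hch : List.Chain' (· ≥ ·) js)
    (h : GoodSeq μ js) (k : ℕ) :
    js.countP (fun j => decide (k ≤ j)) ≤ (List.foldl incShape μ js).getD k 0 := by
  induction js using List.reverseRecOn generalizing k with
  | nil => simp
  | append_singleton js j ih =>
    obtain ⟨h1, h2⟩ := goodseq_append.1 h
    obtain ⟨hjlen, hsort', hfin⟩ := h2
    rw [List.foldl_append, List.foldl_cons, List.foldl_nil]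
    rw [List.countP_append]
    have hjall := chain_ge_all_of_concat hch
    by_cases hkj : k ≤ j
    · have hcnt : js.countP (fun i => decide (k ≤ i)) = js.length :=
        List.countP_eq_length.2 (fun i hi => by simpa using le_trans hkj (hjall i hi))
      have hne : (incShape (List.foldl incShape μ js) j).getD j 0 =
          (List.foldl incShape μ js).getD j 0 + 1 := incShape_getD_self hjlen
      have hIH : js.length ≤ (List.foldl incShape μ js).getD j 0 := by
        have := ih (hch.prefix ⟨[j], rfl⟩) h1 j
        rwa [List.countP_eq_length.2 (fun i hi => by simpa using hjall i hi)] at this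
      have hmono : (incShape (List.foldl incShape μ js) j).getD j 0 ≤
          (incShape (List.foldl incShape μ js) j).getD k 0 :=
        sortedD_getD_mono (by exact hfin) hkj
      have hone : List.countP (fun i => decide (k ≤ i)) [j] = 1 := by simp [hkj]
      rw [hcnt, hone]
      omega
    · have hzero : List.countP (fun i => decide (k ≤ i)) [j] = 0 := by simp [hkj]
      rw [hzero]
      calc js.countP (fun i => decide (k ≤ i)) + 0
          ≤ (List.foldl incShape μ js).getD k 0 := by
            simpa using ih (hch.prefix ⟨[j], rfl⟩) h1 k
        _ ≤ _ := incShape_getD_mono hjlen k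

/-- Insert into a weakly decreasing list of naturals, keeping it sorted. -/
def dins (x : ℕ) : List ℕ → List ℕ
  | [] => [x]
  | a :: s => if x ≤ a then a :: dins x s else x :: a :: s

theorem dins_perm (x : ℕ) (σ : List ℕ) : (dins x σ).Perm (x :: σ) := by
  induction σ with
  | nil => simp [dins]
  | cons a s ih =>
    by_cases hx : x ≤ a
    · simp only [dins, if_pos hx]
      exact (ih.cons a).trans (List.Perm.swap x a s)
    · simp [dins, hx]

theorem dins_sum (x : ℕ) (σ : List ℕ) : (dins x σ).sum = σ.sum + x := by
  have := (dins_perm x σ).sum_eq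
  simp at this
  omega

theorem dins_sorted {x : ℕ} {σ : List ℕ} (hs : List.Chain' (· ≥ ·) σ) :
    List.Chain' (· ≥ ·) (dins x σ) := by
  induction σ with
  | nil => simp [dins, List.Chain']
  | cons a s ih =>
    by_cases hx : x ≤ a
    · simp only [dins, if_pos hx]
      refine List.isChain_cons.2 ⟨?_, ih hs.tail⟩
      intro y hy
      rcases s with _ | ⟨b, s'⟩
      · simp [dins] at hy; subst hy; exact hx
      · by_cases hxb : x ≤ b
        · simp [dins, hxb] at hy; subst hy
          exact (List.isChain_cons_cons.1 hs).1
        · simp [dins, hxb] at hy; subst hy; exact hx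
    · simp only [dins, if_neg hx]
      exact List.isChain_cons_cons.2 ⟨by omega, hs⟩

theorem dins_pos {x : ℕ} {σ : List ℕ} (hx : 0 < x) (hσ : 0 ∉ σ) : 0 ∉ dins x σ := by
  intro hc
  rcases List.mem_cons.1 ((dins_perm x σ).mem_iff.1 hc) with h | h
  · omega
  · exact hσ h

theorem dins_psum {x : ℕ} {σ : List ℕ} (hs : List.Chain' (· ≥ ·) σ) (k : ℕ) :
    psum (dins x σ) (k + 1) = max (psum σ (k + 1)) (psum σ k + x) := by
  induction σ generalizing k with
  | nil => simp [dins, psum]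
  | cons a s ih =>
    by_cases hx : x ≤ a
    · simp only [dins, if_pos hx]
      rcases k with _ | m
      · simp [psum_cons, psum_zero, psum]
        omega
      · rw [psum_cons, ih hs.tail m, psum_cons, psum_cons]
        rw [Nat.max_def, Nat.max_def]
        split <;> split <;> omega
    · simp only [dins, if_neg hx]
      have hgd : (a :: s).getD k 0 ≤ a := sortedD_getD_mono hs (Nat.zero_le k)
      have h1 : psum (a :: s) (k + 1) ≤ psum (a :: s) k + x := by
        rw [psum_succ]
        omega
      rw [psum_cons]
      omega

theorem dins_getD_shift {x : ℕ} {σ : List ℕ} (hs : List.Chain' (· ≥ ·) σ) (k : ℕ) :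
    (dins x σ).getD (k + 1) 0 ≤ σ.getD k 0 := by
  induction σ generalizing k with
  | nil => simp [dins]
  | cons a s ih =>
    by_cases hx : x ≤ a
    · simp only [dins, if_pos hx]
      rcases k with _ | m
      · show (dins x s).getD 0 0 ≤ a
        rcases s with _ | ⟨b, s'⟩
        · simpa [dins] using hx
        · by_cases hxb : x ≤ b
          · simp only [dins, if_pos hxb]
            exact (List.isChain_cons_cons.1 hs).1
          · simpa [dins, hxb] using hx
      · show (dins x s).getD (m + 1) 0 ≤ (a :: s).getD (m + 1) 0
        exact ih hs.tail m
    · simp [dins, hx]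

theorem getD_ext_pos {s t : List ℕ} (hs : 0 ∉ s) (ht : 0 ∉ t)
    (h : ∀ k, s.getD k 0 = t.getD k 0) : s = t := by
  induction s generalizing t with
  | nil =>
    rcases t with _ | ⟨b, t'⟩
    · rfl
    · have h0 := h 0
      simp at h0
      exact absurd (by simp [← h0]) ht
  | cons a s' ih =>
    rcases t with _ | ⟨b, t'⟩
    · have h0 := h 0
      simp at h0
      exact absurd (by simp [h0]) hs
    · have h0 := h 0
      simp at h0
      subst h0
      rw [ih (fun hc => hs (List.mem_cons_of_mem _ hc)) (fun hc => ht (List.mem_cons_of_mem _ hc))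
        (fun k => by simpa using h (k + 1))]

theorem psum_lt_of_ne {s t : List ℕ} (hs : 0 ∉ s) (ht : 0 ∉ t)
    (hd : ∀ k, psum t k ≤ psum s k) (hne : s ≠ t) : ∃ k, psum t k < psum s k := by
  by_contra hc
  push_neg at hc
  have heq : ∀ k, psum t k = psum s k := fun k => le_antisymm (hd k) (hc k)
  refine hne ?_
  refine (getD_ext_pos hs ht fun k => ?_).symm.symm
  have h1 := psum_succ s k
  have h2 := psum_succ t k
  have := heq k; have := heq (k + 1)
  omega

/-- The key dominance/strictness step: adding a block of boxes at weakly
decreasing rows to a shape dominating `σ` yields a shape dominating the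
sorted insertion, with strict dominance propagating. -/
theorem countP_lt_le (js : List ℕ) (k : ℕ) :
    js.countP (fun j => decide (j < k)) + js.countP (fun j => decide (k ≤ j)) = js.length := by
  induction js with
  | nil => simp
  | cons j js ih =>
    rw [List.countP_cons, List.countP_cons, List.length_cons]
    by_cases h : j < k
    · have h2 : ¬ k ≤ j := by omega
      simp [h, h2]
      omega
    · have h2 : k ≤ j := by omega
      simp [h, h2]
      omega

theorem dom_step {σ μ js : List ℕ}
    (hσch : List.Chain' (· ≥ ·) σ)
    (hσpos : 0 ∉ σ) (hμpos : 0 ∉ μ)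
    (hsum : σ.sum = μ.sum)
    (hdom : ∀ k, psum σ k ≤ psum μ k)
    (hch : List.Chain' (· ≥ ·) js)
    (hgood : GoodSeq μ js) :
    (dins js.length σ).sum = (List.foldl incShape μ js).sum ∧
    (∀ k, psum (dins js.length σ) k ≤ psum (List.foldl incShape μ js) k) ∧
    (μ ≠ σ → List.foldl incShape μ js ≠ dins js.length σ) := by
  set x := js.length with hx
  set ν := List.foldl incShape μ js with hν
  have hcount : ∀ k, js.countP (fun j => decide (j < k)) + js.countP (fun j => decide (k ≤ j)) = x :=
    fun k => countP_lt_le js k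
  have hpν : ∀ k, psum ν k = psum μ k + js.countP (fun j => decide (j < k)) :=
    fun k => goodseq_psum hgood k
  have hgge : ∀ k, js.countP (fun j => decide (k ≤ j)) ≤ ν.getD k 0 :=
    fun k => goodseq_getD_ge hch hgood k
  refine ⟨?_, ?_, ?_⟩
  · rw [dins_sum, goodseq_sum hgood, hsum]
  · intro k
    rcases k with _ | k
    · simp [psum_zero]
    · rw [dins_psum hσch k]
      have hle1 : psum σ (k + 1) ≤ psum ν (k + 1) := le_trans (hdom _) (by rw [hpν]; omega)
      have hle2 : psum σ k + x ≤ psum ν (k + 1) := by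
        have h1 : psum ν (k + 1) = psum ν k + ν.getD k 0 := psum_succ ν k
        have h2 := hpν k
        have h3 := hgge k
        have h4 := hcount k
        have h5 := hdom k
        omega
      omega
  · intro hne heq
    classical
    have hex : ∃ k, psum σ k < psum μ k := psum_lt_of_ne hμpos hσpos hdom hne
    have hpos : Nat.find hex ≠ 0 := by
      intro hc
      have hsp := Nat.find_spec hex
      rw [hc] at hsp
      simp [psum_zero] at hsp
    obtain ⟨m, hm⟩ : ∃ m, Nat.find hex = m + 1 := ⟨Nat.find hex - 1, by omega⟩
    have hmlt : psum σ (m + 1) < psum μ (m + 1) := hm ▸ Nat.find_spec hex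
    have hmeq : psum σ m = psum μ m :=
      le_antisymm (hdom m) (le_of_not_gt (Nat.find_min hex (by omega)))
    have hpsum_eq : psum (dins x σ) (m + 1) = psum ν (m + 1) := by rw [heq]
    rw [dins_psum hσch m, hpν (m + 1)] at hpsum_eq
    have hc1 := hcount (m + 1)
    rcases max_choice (psum σ (m + 1)) (psum σ m + x) with hmax | hmax
    · rw [hmax] at hpsum_eq
      omega
    · rw [hmax] at hpsum_eq
      -- c := countP (m+1 ≤ ·) = μ.getD m 0
      have hceq : js.countP (fun j => decide (m + 1 ≤ j)) = μ.getD m 0 := by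
        have h1 := psum_succ μ m
        omega
      have hνge : μ.getD m 0 ≤ ν.getD (m + 1) 0 := hceq ▸ hgge (m + 1)
      have hstrict : σ.getD m 0 < μ.getD m 0 := by
        have h1 := psum_succ μ m
        have h2 := psum_succ σ m
        omega
      have hshift : (dins x σ).getD (m + 1) 0 ≤ σ.getD m 0 := dins_getD_shift hσch m
      rw [heq] at hνge
      omega

theorem TVal_foldl {T : List (List α)} (hT : TVal T) (u : List α) :
    TVal (List.foldl insertT T u) := by
  induction u generalizing T with
  | nil => exact hT
  | cons a u ih => exact ih (TVal_insertT a hT)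

theorem part_pos {T : List (List α)} (hT : TVal T) : 0 ∉ part T := by
  intro hc
  rw [part, List.mem_map] at hc
  obtain ⟨r, hr, hlen⟩ := hc
  exact (hT.1 r hr).1 (List.length_eq_zero_iff.1 hlen)

theorem incShape_inj {s t : List ℕ} {j : ℕ} (hs : j ≤ s.length) (ht : j ≤ t.length)
    (hps : 0 ∉ s) (hpt : 0 ∉ t) (h : incShape s j = incShape t j) : s = t := by
  refine getD_ext_pos hps hpt fun k => ?_
  by_cases hkj : k = j
  · subst hkj
    have h1 := incShape_getD_self hs
    have h2 := incShape_getD_self ht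
    rw [h] at h1
    omega
  · have h1 := incShape_getD_ne hs hkj
    have h2 := incShape_getD_ne ht hkj
    rw [h] at h1
    rw [← h1, h2]

theorem insertTC_inj {T S : List (List α)} {x y : α}
    (hT : ∀ r ∈ T, r ≠ [] ∧ List.Chain' (· ≤ ·) r)
    (hS : ∀ r ∈ S, r ≠ [] ∧ List.Chain' (· ≤ ·) r)
    (h1 : (insertTC T x).1 = (insertTC S y).1)
    (h2 : (insertTC T x).2 = (insertTC S y).2) : T = S ∧ x = y := by
  have hA := revIns_insertTC x hT (x := x)
  have hB := revIns_insertTC x hS (x := y)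
  rw [h1, h2, hB] at hA
  exact ⟨(Prod.ext_iff.1 hA).1.symm, (Prod.ext_iff.1 hA).2.symm⟩

theorem countP_eq_zero_of_lt {l : List ℕ} {j i : ℕ}
    (hall : ∀ m ∈ l, j ≤ m) (hij : i ≤ j) :
    l.countP (fun m => decide (m < i)) = 0 := by
  rw [List.countP_eq_zero]
  intro m hm
  have := hall m hm
  simp only [decide_eq_true_eq]
  omega

/-- Within a block of letters inserted in weakly increasing order, the shape is
unchanged strictly above the last cell's row, and strictly grows at it. -/
theorem block_last_cell {T : List (List α)} {u₀ : List α} {a : α}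
    (hT : TVal T) (hu : List.Chain' (· ≤ ·) (u₀ ++ [a])) :
    (∀ i < (insertTC (List.foldl insertT T u₀) a).2,
      (part (List.foldl insertT T (u₀ ++ [a]))).getD i 0 = (part T).getD i 0) ∧
    (part (List.foldl insertT T (u₀ ++ [a]))).getD (insertTC (List.foldl insertT T u₀) a).2 0 >
      (part T).getD (insertTC (List.foldl insertT T u₀) a).2 0 := by
  set u := u₀ ++ [a] with hu_def
  set Tm := List.foldl insertT T u₀ with hTm
  set ja := (insertTC Tm a).2 with hja
  have hWm : (insWC T u₀).1 = Tm := insWC_fst T u₀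
  have happ := insWC_append T u₀ [a]
  have hcellsA : (insWC T u).2 = (insWC T u₀).2 ++ [ja] := by
    rw [hu_def, happ, hWm]
    rfl
  have hWf : (insWC T u).1 = List.foldl insertT T u := insWC_fst T u
  have hchain : List.Chain' (· ≥ ·) ((insWC T u).2) := insWC_cells_chain hT hu
  have hall : ∀ m ∈ (insWC T u₀).2, ja ≤ m := by
    intro m hm
    apply chain_ge_all_of_concat (hcellsA ▸ hchain)
    exact hm
  have hgood := goodseq_insWC hT u
  have hps : ∀ k, psum (part (List.foldl insertT T u)) k =
      psum (part T) k + ((insWC T u).2).countP (fun j => decide (j < k)) := by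
    intro k
    rw [← hWf, hgood.2]
    exact goodseq_psum hgood.1 k
  have hallu : ∀ m ∈ (insWC T u).2, ja ≤ m := by
    intro m hm
    rw [hcellsA] at hm
    rcases List.mem_append.1 hm with hm | hm
    · exact hall m hm
    · simp at hm; omega
  constructor
  · intro i hi
    have e1 := hps i
    have e2 := hps (i + 1)
    have c1 : ((insWC T u).2).countP (fun j => decide (j < i)) = 0 :=
      countP_eq_zero_of_lt hallu (by omega)
    have c2 : ((insWC T u).2).countP (fun j => decide (j < i + 1)) = 0 :=
      countP_eq_zero_of_lt hallu (by omega)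
    have g1 := psum_succ (part (List.foldl insertT T u)) i
    have g2 := psum_succ (part T) i
    omega
  · have e1 := hps ja
    have e2 := hps (ja + 1)
    have c1 : ((insWC T u).2).countP (fun j => decide (j < ja)) = 0 :=
      countP_eq_zero_of_lt hallu (le_refl ja)
    have c2 : 0 < ((insWC T u).2).countP (fun j => decide (j < ja + 1)) := by
      rw [List.countP_pos_iff]
      refine ⟨ja, ?_, by simp⟩
      rw [hcellsA]
      simp
    have g1 := psum_succ (part (List.foldl insertT T u)) ja
    have g2 := psum_succ (part T) ja
    omega

theorem block_inj : ∀ (n : ℕ) (u v : List α) (T S : List (List α)),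
    u.length = n → v.length = n →
    TVal T → TVal S → List.Chain' (· ≤ ·) u → List.Chain' (· ≤ ·) v →
    part T = part S →
    List.foldl insertT T u = List.foldl insertT S v → T = S ∧ u = v := by
  intro n
  induction n with
  | zero =>
    intro u v T S hu hv _ _ _ _ _ hf
    rw [List.length_eq_zero_iff.1 hu, List.length_eq_zero_iff.1 hv] at hf ⊢
    exact ⟨hf, rfl⟩
  | succ n ih =>
    intro u v T S hulen hvlen hT hS huch hvch hpart hf
    rcases List.eq_nil_or_concat u with rfl | ⟨u₀, a, rfl⟩
    · simp at hulen
    rcases List.eq_nil_or_concat v with rfl | ⟨v₀, c, rfl⟩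
    · simp at hvlen
    rw [List.concat_eq_append] at hulen huch hf ⊢
    rw [List.concat_eq_append] at hvlen hvch hf ⊢
    set Tm := List.foldl insertT T u₀ with hTm
    set Sm := List.foldl insertT S v₀ with hSm
    set ja := (insertTC Tm a).2 with hja
    set jc := (insertTC Sm c).2 with hjc
    have hTmval : TVal Tm := TVal_foldl hT u₀
    have hSmval : TVal Sm := TVal_foldl hS v₀
    have hfa : List.foldl insertT T (u₀ ++ [a]) = (insertTC Tm a).1 := by
      rw [List.foldl_append, ← hTm]
      simp [insertTC_fst]
    have hfc : List.foldl insertT S (v₀ ++ [c]) = (insertTC Sm c).1 := by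
      rw [List.foldl_append, ← hSm]
      simp [insertTC_fst]
    obtain ⟨hAlo, hAhi⟩ := block_last_cell hT huch
    obtain ⟨hBlo, hBhi⟩ := block_last_cell hS hvch
    rw [← hTm] at hAlo hAhi
    rw [← hSm] at hBlo hBhi
    rw [← hja] at hAlo hAhi
    rw [← hjc] at hBlo hBhi
    have hFeq : List.foldl insertT T (u₀ ++ [a]) = List.foldl insertT S (v₀ ++ [c]) := hf
    have hjeq : ja = jc := by
      by_contra hne
      rcases Nat.lt_or_ge ja jc with hlt | hge
      · have h1 := hBlo ja hlt
        rw [← hFeq, ← hpart] at h1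
        omega
      · have hlt : jc < ja := by omega
        have h1 := hAlo jc hlt
        rw [hFeq, hpart] at h1
        omega
    -- shapes of Tm and Sm agree
    have hshTm := insertTC_shape Tm a
    have hshSm := insertTC_shape Sm c
    have hpartEq : part Tm = part Sm := by
      refine incShape_inj (j := ja) (by simpa [part] using hshTm.2)
        (by rw [hjeq]; simpa [part] using hshSm.2) (part_pos hTmval) (part_pos hSmval) ?_
      rw [← hshTm.1]
      rw [hjeq, ← hshSm.1]
      rw [← hfa, ← hfc, hFeq]
    have hstep : Tm = Sm ∧ a = c := by
      refine insertTC_inj hTmval.1 hSmval.1 ?_ ?_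
      · rw [← hfa, ← hfc, hFeq]
      · rw [← hja, ← hjc, hjeq]
    obtain ⟨hTS, hac⟩ := ih u₀ v₀ T S (by simp at hulen; omega) (by simp at hvlen; omega)
      hT hS (huch.prefix ⟨[a], rfl⟩) (hvch.prefix ⟨[c], rfl⟩) hpart
      (by rw [← hTm, ← hSm, hstep.1])
    exact ⟨hTS, by rw [hac, hstep.2]⟩

/-! ### Sorted row lengths and the forcing argument -/

def sortq (l : List ℕ) : List ℕ := l.foldl (fun s x => dins x s) []

theorem sortq_append (l : List ℕ) (x : ℕ) : sortq (l ++ [x]) = dins x (sortq l) := by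
  simp [sortq]

theorem sortq_sorted (l : List ℕ) : List.Chain' (· ≥ ·) (sortq l) := by
  induction l using List.reverseRecOn with
  | nil => simp [sortq, List.Chain']
  | append_singleton l x ih => rw [sortq_append]; exact dins_sorted ih

theorem sortq_pos {l : List ℕ} (h : ∀ x ∈ l, 0 < x) : 0 ∉ sortq l := by
  induction l using List.reverseRecOn with
  | nil => simp [sortq]
  | append_singleton l x ih =>
    rw [sortq_append]
    exact dins_pos (h x (by simp)) (ih fun y hy => h y (by simp [hy]))

theorem sortq_perm (l : List ℕ) : (sortq l).Perm l := by
  induction l using List.reverseRecOn with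
  | nil => simp [sortq]
  | append_singleton l x ih =>
    rw [sortq_append]
    exact (dins_perm x (sortq l)).trans ((ih.cons x).trans (List.perm_append_singleton x l).symm)

theorem insWC_len (T : List (List α)) (u : List α) : (insWC T u).2.length = u.length := by
  induction u generalizing T with
  | nil => simp [insWC]
  | cons a u ih => simp [insWC, ih]

theorem RS_append (w u : List α) : RS (w ++ u) = List.foldl insertT (RS w) u := by
  simp [RS]

/-- Dominance invariant over blocks. -/
theorem dom_blocks : ∀ Q : List (List α), (∀ r ∈ Q, r ≠ [] ∧ List.Chain' (· ≤ ·) r) →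
    (sortq (part Q)).sum = (part (RS Q.flatten)).sum ∧
    (∀ k, psum (sortq (part Q)) k ≤ psum (part (RS Q.flatten)) k) := by
  intro Q
  induction Q using List.reverseRecOn with
  | nil => intro _; exact ⟨rfl, fun k => le_refl _⟩
  | append_singleton Q u ih =>
    intro hok
    obtain ⟨ih1, ih2⟩ := ih (fun r hr => hok r (by simp [hr]))
    have hTval : TVal (RS Q.flatten) := TVal_foldl TVal_nil Q.flatten
    have hwc := goodseq_insWC hTval u
    have hflat : (Q ++ [u]).flatten = Q.flatten ++ u := by simp
    have hRSeq : RS ((Q ++ [u]).flatten) = (insWC (RS Q.flatten) u).1 := by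
      rw [hflat, RS_append, insWC_fst]
    have hchainu := insWC_cells_chain hTval (hok u (by simp)).2
    have hds := dom_step (sortq_sorted (part Q))
      (sortq_pos (fun x hx => by
        rw [part, List.mem_map] at hx
        obtain ⟨r, hr, hlen⟩ := hx
        have := (hok r (by simp [hr])).1
        rcases r with _ | _
        · simp at this
        · simp [← hlen]))
      (part_pos hTval) ih1 ih2 hchainu hwc.1
    have hpartapp : part (Q ++ [u]) = part Q ++ [u.length] := by simp [part]
    have hsq : sortq (part (Q ++ [u])) = dins u.length (sortq (part Q)) := by
      rw [hpartapp, sortq_append]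
    have hlen2 : (insWC (RS Q.flatten) u).2.length = u.length := insWC_len _ _
    rw [hsq, hRSeq, hwc.2]
    rw [← hlen2]
    exact ⟨hds.1, hds.2.1⟩

/-- Strictness propagation over one block. -/
theorem strict_blocks (Q : List (List α)) (u : List α)
    (hok : ∀ r ∈ Q ++ [u], r ≠ [] ∧ List.Chain' (· ≤ ·) r)
    (hne : part (RS Q.flatten) ≠ sortq (part Q)) :
    part (RS ((Q ++ [u]).flatten)) ≠ sortq (part (Q ++ [u])) := by
  obtain ⟨ih1, ih2⟩ := dom_blocks Q (fun r hr => hok r (by simp [hr]))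
  have hTval : TVal (RS Q.flatten) := TVal_foldl TVal_nil Q.flatten
  have hwc := goodseq_insWC hTval u
  have hflat : (Q ++ [u]).flatten = Q.flatten ++ u := by simp
  have hRSeq : RS ((Q ++ [u]).flatten) = (insWC (RS Q.flatten) u).1 := by
    rw [hflat, RS_append, insWC_fst]
  have hchainu := insWC_cells_chain hTval (hok u (by simp)).2
  have hds := dom_step (sortq_sorted (part Q))
    (sortq_pos (fun x hx => by
      rw [part, List.mem_map] at hx
      obtain ⟨r, hr, hlen⟩ := hx
      have := (hok r (by simp [hr])).1
      rcases r with _ | _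
      · simp at this
      · simp [← hlen]))
    (part_pos hTval) ih1 ih2 hchainu hwc.1
  have hpartapp : part (Q ++ [u]) = part Q ++ [u.length] := by simp [part]
  have hsq : sortq (part (Q ++ [u])) = dins u.length (sortq (part Q)) := by
    rw [hpartapp, sortq_append]
  have hlen2 : (insWC (RS Q.flatten) u).2.length = u.length := insWC_len _ _
  rw [hsq, hRSeq, hwc.2, ← hlen2]
  exact hds.2.2 hne

theorem forcing : ∀ (Q₁ Q₀ : List (List α)),
    (∀ r ∈ Q₀ ++ Q₁, r ≠ [] ∧ List.Chain' (· ≤ ·) r) →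
    part (RS (Q₀ ++ Q₁).flatten) = sortq (part (Q₀ ++ Q₁)) →
    part (RS Q₀.flatten) = sortq (part Q₀) := by
  intro Q₁
  induction Q₁ with
  | nil =>
    intro Q₀ _ h
    simpa using h
  | cons u rest ih =>
    intro Q₀ hok hfin
    have hassoc : Q₀ ++ u :: rest = (Q₀ ++ [u]) ++ rest := by simp
    have hmid : part (RS (Q₀ ++ [u]).flatten) = sortq (part (Q₀ ++ [u])) := by
      apply ih (Q₀ ++ [u])
      · intro r hr
        exact hok r (by rw [hassoc]; exact hr)
      · rw [← hassoc]
        exact hfin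
    by_contra hne
    exact strict_blocks Q₀ u (fun r hr => hok r (by
      rcases List.mem_append.1 hr with h | h
      · exact List.mem_append.2 (Or.inl h)
      · simp at h; simp [h])) hne hmid

/-- Main injectivity: two row-increasing arrays with the same row lengths whose
common `RS` has the sorted row lengths as shape must be equal. -/
theorem main_inj : ∀ (Q R : List (List α)),
    (∀ r ∈ Q, r ≠ [] ∧ List.Chain' (· ≤ ·) r) →
    (∀ r ∈ R, r ≠ [] ∧ List.Chain' (· ≤ ·) r) →
    part Q = part R →
    part (RS Q.flatten) = sortq (part Q) →
    RS Q.flatten = RS R.flatten → Q = R := by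
  intro Q
  induction Q using List.reverseRecOn with
  | nil =>
    intro R _ _ hpart _ _
    have : part R = [] := hpart.symm ▸ rfl
    rw [part] at this
    exact (List.map_eq_nil_iff.1 this).symm
  | append_singleton Q₀ u ih =>
    intro R hQok hRok hpart hshape hRS
    rcases List.eq_nil_or_concat R with rfl | ⟨R₀, v, rfl⟩
    · rw [part, part] at hpart; simp at hpart
    rw [List.concat_eq_append] at *
    have hpart' : part Q₀ = part R₀ ∧ u.length = v.length := by
      rw [part, part] at hpart
      simp only [List.map_append] at hpart
      have h1 := List.append_inj' hpart (by simp)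
      refine ⟨h1.1, by simpa using h1.2⟩
    have hshapeR : part (RS (R₀ ++ [v]).flatten) = sortq (part (R₀ ++ [v])) := by
      rw [← hRS, ← hpart]
      exact hshape
    have hforceQ : part (RS Q₀.flatten) = sortq (part Q₀) :=
      forcing [u] Q₀ hQok hshape
    have hforceR : part (RS R₀.flatten) = sortq (part R₀) :=
      forcing [v] R₀ hRok hshapeR
    have hTQ : TVal (RS Q₀.flatten) := TVal_foldl TVal_nil _
    have hTR : TVal (RS R₀.flatten) := TVal_foldl TVal_nil _
    have hpartT : part (RS Q₀.flatten) = part (RS R₀.flatten) := by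
      rw [hforceQ, hforceR, hpart'.1]
    have hfold : List.foldl insertT (RS Q₀.flatten) u = List.foldl insertT (RS R₀.flatten) v := by
      rw [← RS_append, ← RS_append]
      have h1 : (Q₀ ++ [u]).flatten = Q₀.flatten ++ u := by simp
      have h2 : (R₀ ++ [v]).flatten = R₀.flatten ++ v := by simp
      rw [← h1, ← h2]
      exact hRS
    obtain ⟨hTS, huv⟩ := block_inj u.length u v (RS Q₀.flatten) (RS R₀.flatten)
      rfl hpart'.2.symm hTQ hTR (hQok u (by simp)).2 (hRok v (by simp)).2 hpartT hfold
    have hQR : Q₀ = R₀ := by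
      apply ih R₀ (fun r hr => hQok r (by simp [hr])) (fun r hr => hRok r (by simp [hr]))
        hpart'.1 hforceQ
      rw [hTS]
    rw [hQR, huv]

end Aux

/-- Let `P` be the symmetric pyramid associated to positive integers
`p_1 ≤ … ≤ p_r` and `p0`, and let `pt` be the partition obtained by sorting the
multiset `(p_1, p_1, …, p_r, p_r, p0)`.  If `A, B ∈ sTab^≤(P)` and
`part(RS(A)) = pt`, then `RS(A) = RS(B)` if and only if `A = B`. -/
theorem stmt1 (r : ℕ) (p : Fin r → ℕ) (hppos : ∀ i, 0 < p i) (hpmono : Monotone p)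
    (p0 : ℕ) (hp0 : 0 < p0) (A B : List (List ℚ))
    (hA : MemSTabLe (List.ofFn p ++ [p0] ++ (List.ofFn p).reverse) A)
    (hB : MemSTabLe (List.ofFn p ++ [p0] ++ (List.ofFn p).reverse) B)
    (hpart : part (RS A.flatten) =
      (((p0 ::ₘ ((↑(List.ofFn p) : Multiset ℕ) + ↑(List.ofFn p))) :
          Multiset ℕ).sort (· ≤ ·)).reverse) :
    RS A.flatten = RS B.flatten ↔ A = B := by
  constructor
  · intro hRS
    set L : List ℕ := List.ofFn p ++ [p0] ++ (List.ofFn p).reverse with hL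
    set M : Multiset ℕ := p0 ::ₘ ((↑(List.ofFn p) : Multiset ℕ) + ↑(List.ofFn p)) with hM
    have hLpos : ∀ x ∈ L, 0 < x := by
      intro x hx
      rw [hL] at hx
      rcases List.mem_append.1 hx with hx | hx
      · rcases List.mem_append.1 hx with hx | hx
        · obtain ⟨i, hi⟩ := (List.mem_ofFn (f := p) (a := x)).1 hx
          exact hi ▸ hppos i
        · simp at hx; omega
      · obtain ⟨i, hi⟩ := (List.mem_ofFn (f := p) (a := x)).1 (List.mem_reverse.1 hx)
        exact hi ▸ hppos i
    have hok : ∀ (C : List (List ℚ)), MemSTabLe L C →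
        ∀ row ∈ C, row ≠ [] ∧ List.Chain' (· ≤ ·) row := by
      intro C hC row hrow
      refine ⟨?_, hC.2.2.1 row hrow⟩
      intro hc
      have h0 : (0 : ℕ) ∈ L := by
        rw [← hC.1]
        exact List.mem_map.2 ⟨row, hrow, by simp [hc]⟩
      exact absurd (hLpos 0 h0) (by omega)
    have hLM : (↑L : Multiset ℕ) = M := by
      rw [hL, hM]
      simp only [← Multiset.coe_add, Multiset.coe_reverse]
      rw [← Multiset.singleton_add]
      change (↑(List.ofFn p) : Multiset ℕ) + ↑[p0] + ↑(List.ofFn p) = _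
      rw [show (↑[p0] : Multiset ℕ) = ({p0} : Multiset ℕ) from rfl]
      rw [add_comm (↑(List.ofFn p) : Multiset ℕ) ({p0} : Multiset ℕ), add_assoc]
    have hperm : (sortq L).reverse.Perm (M.sort (· ≤ ·)) := by
      have h1 : (sortq L).reverse.Perm (sortq L) := (List.reverse_perm _)
      have h2 : (sortq L).Perm L := sortq_perm L
      have h3 : L.Perm (M.sort (· ≤ ·)) := by
        rw [← Multiset.coe_eq_coe, Multiset.sort_eq, hLM]
      exact (h1.trans h2).trans h3
    have hsorted1 : List.Pairwise (· ≤ ·) ((sortq L).reverse) := by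
      rw [List.pairwise_reverse]
      exact List.isChain_iff_pairwise.1 (sortq_sorted L)
    have hsorted2 : List.Pairwise (· ≤ ·) (M.sort (· ≤ ·)) := Multiset.pairwise_sort _ _
    have hkey : sortq L = (M.sort (· ≤ ·)).reverse := by
      rw [← List.Perm.eq_of_pairwise' hsorted1 hsorted2 hperm]
      simp
    have hpartA : part A = L := hA.1
    have hpartB : part B = L := hB.1
    have hshape : part (RS A.flatten) = sortq (part A) := by
      rw [hpartA, hkey]
      exact hpart
    exact main_inj A B (hok A hA) (hok B hB) (by rw [hpartA, hpartB]) hshape hRS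
  · intro h
    rw [h]

end BG
end

section
/- If u and w are words of integers and w can be obtained from u by a sequence of Knuth equivalences and larger-smaller transpositions, then part(RS(u)) ≤ part(RS(w)) in the dominance order on partitions. -/
namespace BG

variable {α : Type*}

section Greene
open List

/-- The letters of `w` colored `i` by the coloring `c`. -/
def ext (i : ℕ) (w : List ℤ) (c : List (Option ℕ)) : List ℤ :=
  ((w.zip c).filter fun p => p.2 = some i).map Prod.fst

@[simp] lemma ext_nil_left (i : ℕ) (c : List (Option ℕ)) : ext i [] c = [] := by simp [ext]
@[simp] lemma ext_nil_right (i : ℕ) (w : List ℤ) : ext i w [] = [] := by simp [ext]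

lemma ext_cons (i : ℕ) (a : ℤ) (o : Option ℕ) (w : List ℤ) (c : List (Option ℕ)) :
    ext i (a :: w) (o :: c) = if o = some i then a :: ext i w c else ext i w c := by
  by_cases h : o = some i <;> simp [ext, h]

lemma ext_append (i : ℕ) {u : List ℤ} {cu : List (Option ℕ)} (h : cu.length = u.length)
    (v : List ℤ) (cv : List (Option ℕ)) :
    ext i (u ++ v) (cu ++ cv) = ext i u cu ++ ext i v cv := by
  unfold ext
  rw [List.zip_append h.symm, List.filter_append, List.map_append]

/-- A valid `k`-coloring of the word `w`. -/
def Valid (k : ℕ) (w : List ℤ) (c : List (Option ℕ)) : Prop :=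
  c.length = w.length ∧ (∀ o ∈ c, ∀ i : ℕ, o = some i → i < k) ∧
    ∀ i, (ext i w c).Pairwise (· ≤ ·)

/-- The score of a coloring: total number of colored letters (counted through
the color classes). -/
def score (k : ℕ) (w : List ℤ) (c : List (Option ℕ)) : ℕ :=
  ∑ i ∈ Finset.range k, (ext i w c).length

lemma ext_length (i : ℕ) : ∀ (w : List ℤ) (c : List (Option ℕ)), c.length = w.length →
    (ext i w c).length = c.countP (fun o => o = some i)
  | [], [], _ => by simp
  | [], _ :: _, h => by simp at h
  | _ :: _, [], h => by simp at h
  | a :: w, o :: c, h => by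
    rw [ext_cons]
    by_cases ho : o = some i <;>
      simp [ho, List.countP_cons, ext_length i w c (by simpa using h)]

lemma sum_countP_eq (k : ℕ) (c : List (Option ℕ)) (hc : ∀ o ∈ c, ∀ i : ℕ, o = some i → i < k) :
    (∑ i ∈ Finset.range k, c.countP (fun o => o = some i)) = c.countP (fun o => o.isSome) := by
  induction c with
  | nil => simp
  | cons o c ih =>
    have hc' : ∀ o ∈ c, ∀ i : ℕ, o = some i → i < k := fun o ho => hc o (by simp [ho])
    simp only [List.countP_cons, Finset.sum_add_distrib, ih hc']
    congr 1
    cases o with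
    | none => simp
    | some i0 =>
      have hi0 : i0 < k := hc (some i0) (by simp) i0 rfl
      have : ∀ i ∈ Finset.range k,
          (if decide ((some i0 : Option ℕ) = some i) = true then 1 else 0) =
            (if i = i0 then (1:ℕ) else 0) := by
        intro i _
        by_cases h : i = i0
        · simp [h]
        · simp [h, Ne.symm h]
      rw [Finset.sum_congr rfl this, Finset.sum_ite_eq' (Finset.range k) i0 (fun _ => (1:ℕ))]
      simp [hi0]

lemma score_eq_countP {k : ℕ} {w : List ℤ} {c : List (Option ℕ)} (h : Valid k w c) :
    score k w c = c.countP (fun o => o.isSome) := by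
  unfold score
  rw [Finset.sum_congr rfl (fun i _ => ext_length i w c h.1)]
  exact sum_countP_eq k c h.2.1

end Greene
section Greene2
open List

/-- Swap the colors `i` and `j`. -/
def sw (i j m : ℕ) : ℕ := if m = i then j else if m = j then i else m

lemma sw_sw (i j m : ℕ) : sw i j (sw i j m) = m := by
  unfold sw; split_ifs <;> omega

lemma sw_eq_iff (i j m m' : ℕ) : sw i j m' = m ↔ m' = sw i j m := by
  constructor
  · rintro rfl; rw [sw_sw]
  · rintro rfl; rw [sw_sw]

/-- Swap colors `i` and `j` in a coloring. -/
def cswap (i j : ℕ) (c : List (Option ℕ)) : List (Option ℕ) :=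
  c.map (Option.map (sw i j))

@[simp] lemma cswap_length (i j : ℕ) (c : List (Option ℕ)) :
    (cswap i j c).length = c.length := by simp [cswap]

lemma ext_cswap (i j m : ℕ) : ∀ (w : List ℤ) (c : List (Option ℕ)),
    ext m w (cswap i j c) = ext (sw i j m) w c
  | w, [] => by simp [cswap]
  | [], _ :: _ => by simp
  | a :: w, o :: c => by
    have hoc : ((Option.map (sw i j) o = some m) : Prop) ↔ (o = some (sw i j m)) := by
      cases o with
      | none => simp
      | some m' => simp [sw_eq_iff]
    show ext m (a :: w) (Option.map (sw i j) o :: cswap i j c) = _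
    rw [ext_cons, ext_cons, ext_cswap i j m w c]
    by_cases h : o = some (sw i j m)
    · rw [if_pos (hoc.2 h), if_pos h]
    · rw [if_neg (fun hh => h (hoc.1 hh)), if_neg h]

lemma cswap_countP (i j : ℕ) (c : List (Option ℕ)) :
    (cswap i j c).countP (fun o => o.isSome) = c.countP (fun o => o.isSome) := by
  unfold cswap
  rw [List.countP_map]
  apply List.countP_congr
  intro o _
  cases o <;> simp

lemma cswap_colors {k i j : ℕ} (hi : i < k) (hj : j < k) {c : List (Option ℕ)}
    (hc : ∀ o ∈ c, ∀ i' : ℕ, o = some i' → i' < k) :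
    ∀ o ∈ cswap i j c, ∀ i' : ℕ, o = some i' → i' < k := by
  intro o ho i' hoi'
  obtain ⟨o', ho', hmap⟩ := List.mem_map.1 ho
  rcases o' with _ | m
  · rw [hoi'] at hmap; simp at hmap
  · have hm := hc (some m) ho' m rfl
    rw [hoi'] at hmap
    simp only [Option.map_some, Option.some_inj] at hmap
    have hsw : sw i j m < k := by unfold sw; split_ifs <;> omega
    omega

/-- Split a coloring along a three-letter factorisation of the word. -/
lemma split3 {u v : List ℤ} {a b d : ℤ} {c : List (Option ℕ)}
    (h : c.length = (u ++ a :: b :: d :: v).length) :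
    ∃ cu o1 o2 o3 cv, c = cu ++ o1 :: o2 :: o3 :: cv ∧ cu.length = u.length ∧
      cv.length = v.length := by
  have hL : c.length = u.length + (v.length + 3) := by simp [h]; try omega
  have hsplit := (List.take_append_drop u.length c).symm
  have h1 : (c.take u.length).length = u.length := by
    rw [List.length_take]; omega
  have h2 : (c.drop u.length).length = v.length + 3 := by
    rw [List.length_drop]; omega
  rcases hd : c.drop u.length with _ | ⟨o1, cd1⟩
  · rw [hd] at h2; simp at h2
  rcases cd1 with _ | ⟨o2, cd2⟩
  · rw [hd] at h2; simp at h2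
  rcases cd2 with _ | ⟨o3, cv⟩
  · rw [hd] at h2; simp at h2
  rw [hd] at hsplit h2
  exact ⟨c.take u.length, o1, o2, o3, cv, hsplit, h1, by simpa using h2⟩

/-- Split a coloring along a two-letter factorisation of the word. -/
lemma split2 {u v : List ℤ} {a b : ℤ} {c : List (Option ℕ)}
    (h : c.length = (u ++ a :: b :: v).length) :
    ∃ cu o1 o2 cv, c = cu ++ o1 :: o2 :: cv ∧ cu.length = u.length ∧
      cv.length = v.length := by
  have hL : c.length = u.length + (v.length + 2) := by simp [h]; try omega
  have hsplit := (List.take_append_drop u.length c).symm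
  have h1 : (c.take u.length).length = u.length := by
    rw [List.length_take]; omega
  have h2 : (c.drop u.length).length = v.length + 2 := by
    rw [List.length_drop]; omega
  rcases hd : c.drop u.length with _ | ⟨o1, cd1⟩
  · rw [hd] at h2; simp at h2
  rcases cd1 with _ | ⟨o2, cv⟩
  · rw [hd] at h2; simp at h2
  rw [hd] at hsplit h2
  exact ⟨c.take u.length, o1, o2, cv, hsplit, h1, by simpa using h2⟩

end Greene2
section Greene3
open List

/-- Optional singleton. -/
def opt (i : ℕ) (o : Option ℕ) (a : ℤ) : List ℤ := if o = some i then [a] else []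

lemma ext_cons' (i : ℕ) (a : ℤ) (o : Option ℕ) (w : List ℤ) (c : List (Option ℕ)) :
    ext i (a :: w) (o :: c) = opt i o a ++ ext i w c := by
  by_cases h : o = some i <;> simp [ext_cons, opt, h]

lemma ext_decomp3 (i : ℕ) {u : List ℤ} {cu : List (Option ℕ)} (h : cu.length = u.length)
    (a b d : ℤ) (o1 o2 o3 : Option ℕ) (v : List ℤ) (cv : List (Option ℕ)) :
    ext i (u ++ a :: b :: d :: v) (cu ++ o1 :: o2 :: o3 :: cv) =
      ext i u cu ++ (opt i o1 a ++ opt i o2 b ++ opt i o3 d) ++ ext i v cv := by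
  rw [ext_append i h (a :: b :: d :: v) (o1 :: o2 :: o3 :: cv), ext_cons', ext_cons', ext_cons']
  simp [List.append_assoc]

lemma ext_decomp2 (i : ℕ) {u : List ℤ} {cu : List (Option ℕ)} (h : cu.length = u.length)
    (a b : ℤ) (o1 o2 : Option ℕ) (v : List ℤ) (cv : List (Option ℕ)) :
    ext i (u ++ a :: b :: v) (cu ++ o1 :: o2 :: cv) =
      ext i u cu ++ (opt i o1 a ++ opt i o2 b) ++ ext i v cv := by
  rw [ext_append i h (a :: b :: v) (o1 :: o2 :: cv), ext_cons', ext_cons']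
  simp [List.append_assoc]

lemma pw_mid1 {A B : List ℤ} {p : ℤ} :
    (A ++ p :: B).Pairwise (· ≤ ·) ↔
      A.Pairwise (· ≤ ·) ∧ B.Pairwise (· ≤ ·) ∧ (∀ a ∈ A, a ≤ p) ∧ (∀ b ∈ B, p ≤ b) ∧
      (∀ a ∈ A, ∀ b ∈ B, a ≤ b) := by
  simp [List.pairwise_append, List.pairwise_cons]
  aesop

lemma pw_mid2 {A B : List ℤ} {p q : ℤ} :
    (A ++ p :: q :: B).Pairwise (· ≤ ·) ↔
      A.Pairwise (· ≤ ·) ∧ B.Pairwise (· ≤ ·) ∧ p ≤ q ∧ (∀ a ∈ A, a ≤ p) ∧ (∀ a ∈ A, a ≤ q) ∧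
      (∀ b ∈ B, p ≤ b) ∧ (∀ b ∈ B, q ≤ b) ∧ (∀ a ∈ A, ∀ b ∈ B, a ≤ b) := by
  simp [List.pairwise_append, List.pairwise_cons]
  aesop

lemma pw_mid3 {A B : List ℤ} {p q r : ℤ} :
    (A ++ p :: q :: r :: B).Pairwise (· ≤ ·) →
      p ≤ q ∧ q ≤ r ∧ p ≤ r := by
  intro h
  rw [List.pairwise_append] at h
  have := h.2.1
  simp [List.pairwise_cons] at this
  tauto

lemma colors3 {k : ℕ} {cu cv : List (Option ℕ)} {p1 p2 p3 q1 q2 q3 : Option ℕ}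
    (h : ∀ o ∈ cu ++ p1 :: p2 :: p3 :: cv, ∀ i : ℕ, o = some i → i < k)
    (h1 : ∀ i : ℕ, q1 = some i → i < k) (h2 : ∀ i : ℕ, q2 = some i → i < k)
    (h3 : ∀ i : ℕ, q3 = some i → i < k) {cv' : List (Option ℕ)}
    (hcv : ∀ o ∈ cv', ∀ i : ℕ, o = some i → i < k) :
    ∀ o ∈ cu ++ q1 :: q2 :: q3 :: cv', ∀ i : ℕ, o = some i → i < k := by
  intro o ho i hi
  rcases List.mem_append.1 ho with h' | h'
  · exact h o (List.mem_append_left _ h') i hi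
  · rcases List.mem_cons.1 h' with rfl | h'
    · exact h1 i hi
    rcases List.mem_cons.1 h' with rfl | h'
    · exact h2 i hi
    rcases List.mem_cons.1 h' with rfl | h'
    · exact h3 i hi
    · exact hcv o h' i hi

lemma colors_mem {k : ℕ} {c : List (Option ℕ)}
    (h : ∀ o ∈ c, ∀ i : ℕ, o = some i → i < k) {c' : List (Option ℕ)}
    (hsub : ∀ o ∈ c', o ∈ c) : ∀ o ∈ c', ∀ i : ℕ, o = some i → i < k :=
  fun o ho => h o (hsub o ho)

end Greene3
section Greene4
open List

lemma transfer1F {u v : List ℤ} {x y z : ℤ} (hxy : x ≤ y) (hyz : y < z)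
    {k : ℕ} {c : List (Option ℕ)} (h : Valid k (u ++ x :: z :: y :: v) c) :
    ∃ c', Valid k (u ++ z :: x :: y :: v) c' ∧
      c'.countP (fun o => o.isSome) = c.countP (fun o => o.isSome) := by
  obtain ⟨hlen, hcol, hpw⟩ := h
  obtain ⟨cu, o1, o2, o3, cv, rfl, hcu, hcv⟩ := split3 hlen
  have hcvcol : ∀ o ∈ cv, ∀ i : ℕ, o = some i → i < k :=
    colors_mem hcol (fun o ho => by simp [ho])
  by_cases hhard : o1 = o2 ∧ o2.isSome
  · obtain ⟨heq, hsome⟩ := hhard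
    obtain ⟨i0, rfl⟩ := Option.isSome_iff_exists.1 hsome
    subst heq
    have hi0k : i0 < k := hcol (some i0) (by simp) i0 rfl
    have H : (ext i0 u cu ++ (opt i0 (some i0) x ++ opt i0 (some i0) z ++ opt i0 o3 y)
        ++ ext i0 v cv).Pairwise (· ≤ ·) := by
      have := hpw i0; rwa [ext_decomp3 i0 hcu] at this
    have ho3 : o3 ≠ some i0 := by
      rintro rfl
      have H' : (ext i0 u cu ++ x :: z :: y :: ext i0 v cv).Pairwise (· ≤ ·) := by
        simpa [opt, List.append_assoc] using H
      linarith [(pw_mid3 H').2.1]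
    have H2 : (ext i0 u cu ++ x :: z :: ext i0 v cv).Pairwise (· ≤ ·) := by
      simpa [opt, ho3, List.append_assoc] using H
    rw [pw_mid2] at H2
    obtain ⟨hEpw, hFpw, hxz, hEx, hEz, hxF, hzF, hEF⟩ := H2
    rcases o3 with _ | j
    · refine ⟨cu ++ none :: some i0 :: some i0 :: cv, ⟨by simp [hcu, hcv], ?_, ?_⟩, ?_⟩
      · exact colors3 hcol (by simp) (fun i hi => by simp at hi; omega)
          (fun i hi => by simp at hi; omega) hcvcol
      · intro i
        by_cases hii0 : i = i0
        · rw [hii0]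
          have e1 : ext i0 (u ++ z :: x :: y :: v) (cu ++ none :: some i0 :: some i0 :: cv)
              = ext i0 u cu ++ x :: y :: ext i0 v cv := by
            rw [ext_decomp3 i0 hcu]; simp [opt, List.append_assoc]
          rw [e1, pw_mid2]
          exact ⟨hEpw, hFpw, hxy, hEx, fun a ha => (hEx a ha).trans hxy,
            hxF, fun b hb => le_of_lt (lt_of_lt_of_le hyz (hzF b hb)), hEF⟩
        · have e3 : ext i (u ++ z :: x :: y :: v) (cu ++ none :: some i0 :: some i0 :: cv)
              = ext i (u ++ x :: z :: y :: v) (cu ++ some i0 :: some i0 :: none :: cv) := by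
            rw [ext_decomp3 i hcu, ext_decomp3 i hcu]
            simp [opt, hii0, Ne.symm hii0]
          rw [e3]; exact hpw i
      · simp [List.countP_append, List.countP_cons]
    · have hji0 : j ≠ i0 := fun hh => ho3 (by rw [hh])
      have hjk : j < k := hcol (some j) (by simp) j rfl
      have Hj : (ext j u cu ++ y :: ext j v cv).Pairwise (· ≤ ·) := by
        have := hpw j; rw [ext_decomp3 j hcu] at this
        simpa [opt, Ne.symm hji0, List.append_assoc] using this
      rw [pw_mid1] at Hj
      obtain ⟨hEjpw, hFjpw, hEjy, hyFj, hEjFj⟩ := Hj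
      have hsw1 : sw i0 j i0 = j := by simp [sw]
      have hsw2 : sw i0 j j = i0 := by
        unfold sw; rw [if_neg hji0, if_pos rfl]
      refine ⟨cu ++ some j :: some i0 :: some i0 :: cswap i0 j cv,
        ⟨by simp [hcu, hcv], ?_, ?_⟩, ?_⟩
      · exact colors3 hcol (fun i hi => by simp at hi; omega)
          (fun i hi => by simp at hi; omega) (fun i hi => by simp at hi; omega)
          (cswap_colors hi0k hjk hcvcol)
      · intro i
        by_cases hii0 : i = i0
        · rw [hii0]
          have e1 : ext i0 (u ++ z :: x :: y :: v)
                (cu ++ some j :: some i0 :: some i0 :: cswap i0 j cv)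
              = ext i0 u cu ++ x :: y :: ext j v cv := by
            rw [ext_decomp3 i0 hcu, ext_cswap, hsw1]
            simp [opt, hji0, Ne.symm hji0, List.append_assoc]
          rw [e1, pw_mid2]
          exact ⟨hEpw, hFjpw, hxy, hEx, fun a ha => (hEx a ha).trans hxy,
            fun b hb => hxy.trans (hyFj b hb), hyFj,
            fun a ha b hb => ((hEx a ha).trans hxy).trans (hyFj b hb)⟩
        · by_cases hij : i = j
          · rw [hij]
            have e2 : ext j (u ++ z :: x :: y :: v)
                  (cu ++ some j :: some i0 :: some i0 :: cswap i0 j cv)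
                = ext j u cu ++ z :: ext i0 v cv := by
              rw [ext_decomp3 j hcu, ext_cswap, hsw2]
              simp [opt, hji0, Ne.symm hji0, List.append_assoc]
            rw [e2, pw_mid1]
            exact ⟨hEjpw, hFpw, fun a ha => le_of_lt (lt_of_le_of_lt (hEjy a ha) hyz),
              hzF, fun a ha b hb => le_of_lt (lt_of_le_of_lt (hEjy a ha)
                (lt_of_lt_of_le hyz (hzF b hb)))⟩
          · have hswi : sw i0 j i = i := by
              unfold sw; rw [if_neg hii0, if_neg hij]
            have e3 : ext i (u ++ z :: x :: y :: v)
                  (cu ++ some j :: some i0 :: some i0 :: cswap i0 j cv)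
                = ext i (u ++ x :: z :: y :: v) (cu ++ some i0 :: some i0 :: some j :: cv) := by
              rw [ext_decomp3 i hcu, ext_decomp3 i hcu, ext_cswap, hswi]
              simp [opt, Ne.symm hii0, Ne.symm hij]
            rw [e3]; exact hpw i
      · simp [List.countP_append, List.countP_cons, cswap_countP]
  · refine ⟨cu ++ o2 :: o1 :: o3 :: cv, ⟨by simp [hcu, hcv], ?_, ?_⟩, ?_⟩
    · exact colors3 hcol (fun i hi => hcol o2 (by simp) i hi)
        (fun i hi => hcol o1 (by simp) i hi) (fun i hi => hcol o3 (by simp) i hi) hcvcol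
    · intro i
      have e : ext i (u ++ z :: x :: y :: v) (cu ++ o2 :: o1 :: o3 :: cv)
          = ext i (u ++ x :: z :: y :: v) (cu ++ o1 :: o2 :: o3 :: cv) := by
        rw [ext_decomp3 i hcu, ext_decomp3 i hcu]
        by_cases h1 : o1 = some i <;> by_cases h2 : o2 = some i
        · exact absurd ⟨h1.trans h2.symm, by rw [h2]; rfl⟩ hhard
        all_goals simp [opt, h1, h2]
      rw [e]; exact hpw i
    · simp [List.countP_append, List.countP_cons]; omega

end Greene4
section Greene5
open List

lemma colors_build {k : ℕ} {cu' cv' : List (Option ℕ)} {q1 q2 q3 : Option ℕ}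
    (hcu : ∀ o ∈ cu', ∀ i : ℕ, o = some i → i < k)
    (h1 : ∀ i : ℕ, q1 = some i → i < k) (h2 : ∀ i : ℕ, q2 = some i → i < k)
    (h3 : ∀ i : ℕ, q3 = some i → i < k)
    (hcv : ∀ o ∈ cv', ∀ i : ℕ, o = some i → i < k) :
    ∀ o ∈ cu' ++ q1 :: q2 :: q3 :: cv', ∀ i : ℕ, o = some i → i < k := by
  intro o ho i hi
  rcases List.mem_append.1 ho with h' | h'
  · exact hcu o h' i hi
  · rcases List.mem_cons.1 h' with rfl | h'
    · exact h1 i hi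
    rcases List.mem_cons.1 h' with rfl | h'
    · exact h2 i hi
    rcases List.mem_cons.1 h' with rfl | h'
    · exact h3 i hi
    · exact hcv o h' i hi

lemma transfer2F {u v : List ℤ} {x y z : ℤ} (hxy : x < y) (hyz : y ≤ z)
    {k : ℕ} {c : List (Option ℕ)} (h : Valid k (u ++ y :: x :: z :: v) c) :
    ∃ c', Valid k (u ++ y :: z :: x :: v) c' ∧
      c'.countP (fun o => o.isSome) = c.countP (fun o => o.isSome) := by
  obtain ⟨hlen, hcol, hpw⟩ := h
  obtain ⟨cu, o1, o2, o3, cv, rfl, hcu, hcv⟩ := split3 hlen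
  have hcvcol : ∀ o ∈ cv, ∀ i : ℕ, o = some i → i < k :=
    colors_mem hcol (fun o ho => by simp [ho])
  have hcucol : ∀ o ∈ cu, ∀ i : ℕ, o = some i → i < k :=
    colors_mem hcol (fun o ho => by simp [ho])
  by_cases hhard : o2 = o3 ∧ o3.isSome
  · obtain ⟨heq, hsome⟩ := hhard
    obtain ⟨i0, rfl⟩ := Option.isSome_iff_exists.1 hsome
    subst heq
    have hi0k : i0 < k := hcol (some i0) (by simp) i0 rfl
    have H : (ext i0 u cu ++ (opt i0 o1 y ++ opt i0 (some i0) x ++ opt i0 (some i0) z)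
        ++ ext i0 v cv).Pairwise (· ≤ ·) := by
      have := hpw i0; rwa [ext_decomp3 i0 hcu] at this
    have ho1 : o1 ≠ some i0 := by
      rintro rfl
      have H' : (ext i0 u cu ++ y :: x :: z :: ext i0 v cv).Pairwise (· ≤ ·) := by
        simpa [opt, List.append_assoc] using H
      linarith [(pw_mid3 H').1]
    have H2 : (ext i0 u cu ++ x :: z :: ext i0 v cv).Pairwise (· ≤ ·) := by
      simpa [opt, ho1, List.append_assoc] using H
    rw [pw_mid2] at H2
    obtain ⟨hEpw, hFpw, hxz, hEx, hEz, hxF, hzF, hEF⟩ := H2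
    rcases o1 with _ | j
    · refine ⟨cu ++ some i0 :: some i0 :: none :: cv, ⟨by simp [hcu, hcv], ?_, ?_⟩, ?_⟩
      · exact colors_build hcucol (fun i hi => by simp at hi; omega)
          (fun i hi => by simp at hi; omega) (by simp) hcvcol
      · intro i
        by_cases hii0 : i = i0
        · rw [hii0]
          have e1 : ext i0 (u ++ y :: z :: x :: v) (cu ++ some i0 :: some i0 :: none :: cv)
              = ext i0 u cu ++ y :: z :: ext i0 v cv := by
            rw [ext_decomp3 i0 hcu]; simp [opt, List.append_assoc]
          rw [e1, pw_mid2]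
          exact ⟨hEpw, hFpw, hyz, fun a ha => le_of_lt (lt_of_le_of_lt (hEx a ha) hxy),
            hEz, fun b hb => le_trans hyz (hzF b hb), hzF, hEF⟩
        · have e3 : ext i (u ++ y :: z :: x :: v) (cu ++ some i0 :: some i0 :: none :: cv)
              = ext i (u ++ y :: x :: z :: v) (cu ++ none :: some i0 :: some i0 :: cv) := by
            rw [ext_decomp3 i hcu, ext_decomp3 i hcu]
            simp [opt, Ne.symm hii0]
          rw [e3]; exact hpw i
      · simp [List.countP_append, List.countP_cons]
    · have hji0 : j ≠ i0 := fun hh => ho1 (by rw [hh])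
      have hjk : j < k := hcol (some j) (by simp) j rfl
      have Hj : (ext j u cu ++ y :: ext j v cv).Pairwise (· ≤ ·) := by
        have := hpw j; rw [ext_decomp3 j hcu] at this
        simpa [opt, Ne.symm hji0, List.append_assoc] using this
      rw [pw_mid1] at Hj
      obtain ⟨hEjpw, hFjpw, hEjy, hyFj, hEjFj⟩ := Hj
      have hsw1 : sw i0 j i0 = j := by simp [sw]
      have hsw2 : sw i0 j j = i0 := by
        unfold sw; rw [if_neg hji0, if_pos rfl]
      refine ⟨cswap i0 j cu ++ some i0 :: some i0 :: some j :: cv,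
        ⟨by simp [hcu, hcv], ?_, ?_⟩, ?_⟩
      · exact colors_build (cswap_colors hi0k hjk hcucol)
          (fun i hi => by simp at hi; omega) (fun i hi => by simp at hi; omega)
          (fun i hi => by simp at hi; omega) hcvcol
      · intro i
        by_cases hii0 : i = i0
        · rw [hii0]
          have e1 : ext i0 (u ++ y :: z :: x :: v)
                (cswap i0 j cu ++ some i0 :: some i0 :: some j :: cv)
              = ext j u cu ++ y :: z :: ext i0 v cv := by
            rw [ext_decomp3 i0 (by simpa using hcu), ext_cswap, hsw1]
            simp [opt, hji0, Ne.symm hji0, List.append_assoc]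
          rw [e1, pw_mid2]
          exact ⟨hEjpw, hFpw, hyz, hEjy, fun a ha => (hEjy a ha).trans hyz,
            fun b hb => hyz.trans (hzF b hb), hzF,
            fun a ha b hb => ((hEjy a ha).trans hyz).trans (hzF b hb)⟩
        · by_cases hij : i = j
          · rw [hij]
            have e2 : ext j (u ++ y :: z :: x :: v)
                  (cswap i0 j cu ++ some i0 :: some i0 :: some j :: cv)
                = ext i0 u cu ++ x :: ext j v cv := by
              rw [ext_decomp3 j (by simpa using hcu), ext_cswap, hsw2]
              simp [opt, hji0, Ne.symm hji0, List.append_assoc]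
            rw [e2, pw_mid1]
            exact ⟨hEpw, hFjpw, hEx, fun b hb => le_of_lt (lt_of_lt_of_le hxy (hyFj b hb)),
              fun a ha b hb => (hEx a ha).trans (le_of_lt (lt_of_lt_of_le hxy (hyFj b hb)))⟩
          · have hswi : sw i0 j i = i := by
              unfold sw; rw [if_neg hii0, if_neg hij]
            have e3 : ext i (u ++ y :: z :: x :: v)
                  (cswap i0 j cu ++ some i0 :: some i0 :: some j :: cv)
                = ext i (u ++ y :: x :: z :: v) (cu ++ some j :: some i0 :: some i0 :: cv) := by
              rw [ext_decomp3 i (by simpa using hcu), ext_decomp3 i hcu, ext_cswap, hswi]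
              simp [opt, Ne.symm hii0, Ne.symm hij]
            rw [e3]; exact hpw i
      · simp [List.countP_append, List.countP_cons, cswap_countP]
  · refine ⟨cu ++ o1 :: o3 :: o2 :: cv, ⟨by simp [hcu, hcv], ?_, ?_⟩, ?_⟩
    · exact colors_build hcucol (fun i hi => hcol o1 (by simp) i hi)
        (fun i hi => hcol o3 (by simp) i hi) (fun i hi => hcol o2 (by simp) i hi) hcvcol
    · intro i
      have e : ext i (u ++ y :: z :: x :: v) (cu ++ o1 :: o3 :: o2 :: cv)
          = ext i (u ++ y :: x :: z :: v) (cu ++ o1 :: o2 :: o3 :: cv) := by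
        rw [ext_decomp3 i hcu, ext_decomp3 i hcu]
        by_cases h2 : o2 = some i <;> by_cases h3 : o3 = some i
        · exact absurd ⟨h2.trans h3.symm, by rw [h3]; rfl⟩ hhard
        all_goals simp [opt, h2, h3, List.append_assoc]
      rw [e]; exact hpw i
    · simp [List.countP_append, List.countP_cons]; omega

lemma transfer1B {u v : List ℤ} {x y z : ℤ} (hxy : x ≤ y) (hyz : y < z)
    {k : ℕ} {c : List (Option ℕ)} (h : Valid k (u ++ z :: x :: y :: v) c) :
    ∃ c', Valid k (u ++ x :: z :: y :: v) c' ∧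
      c'.countP (fun o => o.isSome) = c.countP (fun o => o.isSome) := by
  obtain ⟨hlen, hcol, hpw⟩ := h
  obtain ⟨cu, o1, o2, o3, cv, rfl, hcu, hcv⟩ := split3 hlen
  have hcvcol : ∀ o ∈ cv, ∀ i : ℕ, o = some i → i < k :=
    colors_mem hcol (fun o ho => by simp [ho])
  have hcucol : ∀ o ∈ cu, ∀ i : ℕ, o = some i → i < k :=
    colors_mem hcol (fun o ho => by simp [ho])
  refine ⟨cu ++ o2 :: o1 :: o3 :: cv, ⟨by simp [hcu, hcv], ?_, ?_⟩, ?_⟩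
  · exact colors_build hcucol (fun i hi => hcol o2 (by simp) i hi)
      (fun i hi => hcol o1 (by simp) i hi) (fun i hi => hcol o3 (by simp) i hi) hcvcol
  · intro i
    have e : ext i (u ++ x :: z :: y :: v) (cu ++ o2 :: o1 :: o3 :: cv)
        = ext i (u ++ z :: x :: y :: v) (cu ++ o1 :: o2 :: o3 :: cv) := by
      rw [ext_decomp3 i hcu, ext_decomp3 i hcu]
      by_cases h1 : o1 = some i <;> by_cases h2 : o2 = some i
      · exfalso
        have H := hpw i
        rw [ext_decomp3 i hcu] at H
        have H2 : (ext i u cu ++ z :: x :: (opt i o3 y ++ ext i v cv)).Pairwise (· ≤ ·) := by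
          simpa [opt, h1, h2, List.append_assoc] using H
        rw [pw_mid2] at H2
        linarith [H2.2.2.1]
      all_goals simp [opt, h1, h2, List.append_assoc]
    rw [e]; exact hpw i
  · simp [List.countP_append, List.countP_cons]; omega

lemma transfer2B {u v : List ℤ} {x y z : ℤ} (hxy : x < y) (hyz : y ≤ z)
    {k : ℕ} {c : List (Option ℕ)} (h : Valid k (u ++ y :: z :: x :: v) c) :
    ∃ c', Valid k (u ++ y :: x :: z :: v) c' ∧
      c'.countP (fun o => o.isSome) = c.countP (fun o => o.isSome) := by
  obtain ⟨hlen, hcol, hpw⟩ := h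
  obtain ⟨cu, o1, o2, o3, cv, rfl, hcu, hcv⟩ := split3 hlen
  have hcvcol : ∀ o ∈ cv, ∀ i : ℕ, o = some i → i < k :=
    colors_mem hcol (fun o ho => by simp [ho])
  have hcucol : ∀ o ∈ cu, ∀ i : ℕ, o = some i → i < k :=
    colors_mem hcol (fun o ho => by simp [ho])
  refine ⟨cu ++ o1 :: o3 :: o2 :: cv, ⟨by simp [hcu, hcv], ?_, ?_⟩, ?_⟩
  · exact colors_build hcucol (fun i hi => hcol o1 (by simp) i hi)
      (fun i hi => hcol o3 (by simp) i hi) (fun i hi => hcol o2 (by simp) i hi) hcvcol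
  · intro i
    have e : ext i (u ++ y :: x :: z :: v) (cu ++ o1 :: o3 :: o2 :: cv)
        = ext i (u ++ y :: z :: x :: v) (cu ++ o1 :: o2 :: o3 :: cv) := by
      rw [ext_decomp3 i hcu, ext_decomp3 i hcu]
      by_cases h2 : o2 = some i <;> by_cases h3 : o3 = some i
      · exfalso
        have H := hpw i
        rw [ext_decomp3 i hcu] at H
        by_cases h1 : o1 = some i
        · have H' : (ext i u cu ++ y :: z :: x :: ext i v cv).Pairwise (· ≤ ·) := by
            simpa [opt, h1, h2, h3, List.append_assoc] using H
          linarith [(pw_mid3 H').2.1]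
        · have H2 : (ext i u cu ++ z :: x :: ext i v cv).Pairwise (· ≤ ·) := by
            simpa [opt, h1, h2, h3, List.append_assoc] using H
          rw [pw_mid2] at H2
          linarith [H2.2.2.1]
      all_goals simp [opt, h2, h3, List.append_assoc]
    rw [e]; exact hpw i
  · simp [List.countP_append, List.countP_cons]; omega

lemma transferLS {u v : List ℤ} {a b : ℤ} (hba : b < a)
    {k : ℕ} {c : List (Option ℕ)} (h : Valid k (u ++ a :: b :: v) c) :
    ∃ c', Valid k (u ++ b :: a :: v) c' ∧
      c'.countP (fun o => o.isSome) = c.countP (fun o => o.isSome) := by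
  obtain ⟨hlen, hcol, hpw⟩ := h
  obtain ⟨cu, o1, o2, cv, rfl, hcu, hcv⟩ := split2 hlen
  have hcvcol : ∀ o ∈ cv, ∀ i : ℕ, o = some i → i < k :=
    colors_mem hcol (fun o ho => by simp [ho])
  have hb1 : ∀ i : ℕ, o1 = some i → i < k := fun i hi => hcol o1 (by simp) i hi
  have hb2 : ∀ i : ℕ, o2 = some i → i < k := fun i hi => hcol o2 (by simp) i hi
  have hcucol : ∀ o ∈ cu, ∀ i : ℕ, o = some i → i < k :=
    colors_mem hcol (fun o ho => by simp [ho])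
  refine ⟨cu ++ o2 :: o1 :: cv, ⟨by simp [hcu, hcv], ?_, ?_⟩, ?_⟩
  · intro o ho i hi
    rcases List.mem_append.1 ho with h' | h'
    · exact hcucol o h' i hi
    · rcases List.mem_cons.1 h' with h'' | h'
      · exact hb2 i (h'' ▸ hi)
      rcases List.mem_cons.1 h' with h'' | h'
      · exact hb1 i (h'' ▸ hi)
      · exact hcvcol o h' i hi
  · intro i
    have e : ext i (u ++ b :: a :: v) (cu ++ o2 :: o1 :: cv)
        = ext i (u ++ a :: b :: v) (cu ++ o1 :: o2 :: cv) := by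
      rw [ext_decomp2 i hcu, ext_decomp2 i hcu]
      by_cases h1 : o1 = some i <;> by_cases h2 : o2 = some i
      · exfalso
        have H := hpw i
        rw [ext_decomp2 i hcu] at H
        have H2 : (ext i u cu ++ a :: b :: ext i v cv).Pairwise (· ≤ ·) := by
          simpa [opt, h1, h2, List.append_assoc] using H
        rw [pw_mid2] at H2
        linarith [H2.2.2.1]
      all_goals simp [opt, h1, h2, List.append_assoc]
    rw [e]; exact hpw i
  · simp [List.countP_append, List.countP_cons]; omega

end Greene5
section Greene6
open List

/-- Chains of Knuth moves in both directions. -/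
def KChain : List ℤ → List ℤ → Prop :=
  Relation.ReflTransGen (fun a b => KnuthStep a b ∨ KnuthStep b a)

lemma KChain.refl (a : List ℤ) : KChain a a := Relation.ReflTransGen.refl

lemma KChain.trans {a b c : List ℤ} (h1 : KChain a b) (h2 : KChain b c) : KChain a c :=
  Relation.ReflTransGen.trans h1 h2

lemma KChain.symm {a b : List ℤ} (h : KChain a b) : KChain b a :=
  (@Relation.ReflTransGen.symmetric _ _ ⟨fun _ _ hh => Or.symm hh⟩).symm _ _ h

lemma KChain.single_fwd {a b : List ℤ} (h : KnuthStep a b) : KChain a b :=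
  Relation.ReflTransGen.single (Or.inl h)

lemma KChain.single_bwd {a b : List ℤ} (h : KnuthStep b a) : KChain a b :=
  Relation.ReflTransGen.single (Or.inr h)

lemma knuthStep_context {a b : List ℤ} (p q : List ℤ) (h : KnuthStep a b) :
    KnuthStep (p ++ a ++ q) (p ++ b ++ q) := by
  cases h with
  | move1 u v x y z hxy hyz =>
    have := KnuthStep.move1 (p ++ u) (v ++ q) x y z hxy hyz
    simpa [List.append_assoc] using this
  | move2 u v x y z hxy hyz =>
    have := KnuthStep.move2 (p ++ u) (v ++ q) x y z hxy hyz
    simpa [List.append_assoc] using this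

lemma kchain_context {a b : List ℤ} (p q : List ℤ) (h : KChain a b) :
    KChain (p ++ a ++ q) (p ++ b ++ q) :=
  Relation.ReflTransGen.lift (fun l => p ++ l ++ q)
    (fun _ _ hh => hh.imp (knuthStep_context p q) (knuthStep_context p q)) _ _ h

lemma chainL1 {x y : ℤ} (hxy : x < y) : ∀ (r2 : List ℤ), (∀ t ∈ r2, y ≤ t) →
    r2.Pairwise (· ≤ ·) → KChain ((y :: r2) ++ [x]) (y :: x :: r2)
  | [], _, _ => KChain.refl _
  | t :: r2', hge, hpw => by
    have hyt : y ≤ t := hge t (by simp)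
    have ih : KChain ((t :: r2') ++ [x]) (t :: x :: r2') :=
      chainL1 (lt_of_lt_of_le hxy hyt) r2'
        (fun s hs => (List.pairwise_cons.1 hpw).1 s hs)
        (List.pairwise_cons.1 hpw).2
    have step1 : KChain (y :: ((t :: r2') ++ [x])) (y :: t :: x :: r2') := by
      have := kchain_context [y] [] ih
      simpa using this
    have step2 : KChain (y :: t :: x :: r2') (y :: x :: t :: r2') := by
      apply KChain.single_bwd
      have := KnuthStep.move2 [] r2' x y t hxy hyt
      simpa using this
    have e : (y :: t :: r2') ++ [x] = y :: ((t :: r2') ++ [x]) := by simp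
    rw [e]
    exact step1.trans step2

lemma chainL2 {y : ℤ} : ∀ (r1 : List ℤ) (m : ℤ) (s : List ℤ), r1.Pairwise (· ≤ ·) →
    (∀ a ∈ r1, a ≤ m) → m < y →
    KChain (r1 ++ y :: m :: s) (y :: (r1 ++ m :: s))
  | [], m, s, _, _, _ => KChain.refl _
  | p :: r1', m, s, hpw, hle, hmy => by
    have hpm : p ≤ m := hle p (by simp)
    have ih : KChain (r1' ++ y :: m :: s) (y :: (r1' ++ m :: s)) :=
      chainL2 r1' m s (List.pairwise_cons.1 hpw).2 (fun a ha => hle a (by simp [ha])) hmy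
    have step1 : KChain (p :: (r1' ++ y :: m :: s)) (p :: y :: (r1' ++ m :: s)) := by
      have := kchain_context [p] [] ih
      simpa using this
    have step2 : KChain (p :: y :: (r1' ++ m :: s)) (y :: p :: (r1' ++ m :: s)) := by
      apply KChain.single_fwd
      rcases r1' with _ | ⟨p', r1''⟩
      · have := KnuthStep.move1 [] s p m y hpm hmy
        simpa using this
      · have hpp' : p ≤ p' := (List.pairwise_cons.1 hpw).1 p' (by simp)
        have hp'y : p' < y := lt_of_le_of_lt (hle p' (by simp)) hmy
        have := KnuthStep.move1 [] (r1'' ++ m :: s) p p' y hpp' hp'y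
        simpa using this
    exact step1.trans step2

lemma rowInsert_spec (r : List ℤ) (x : ℤ) :
    (rowInsert r x = (r ++ [x], none) ∧ ∀ a ∈ r, a ≤ x) ∨
    (∃ r1 y r2, r = r1 ++ y :: r2 ∧ rowInsert r x = (r1 ++ x :: r2, some y) ∧
      (∀ a ∈ r1, a ≤ x) ∧ x < y) := by
  induction r with
  | nil => left; exact ⟨rfl, by simp⟩
  | cons a r ih =>
    by_cases h : x < a
    · right; exact ⟨[], a, r, rfl, by simp [rowInsert, h], by simp, h⟩
    · push_neg at h
      rcases ih with ⟨h1, h2⟩ | ⟨r1, y, r2, hr, hins, hle, hxy⟩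
      · left
        constructor
        · simp [rowInsert, not_lt.2 h, h1]
        · intro b hb
          rcases List.mem_cons.1 hb with rfl | hb
          · exact h
          · exact h2 b hb
      · right
        refine ⟨a :: r1, y, r2, by simp [hr], by simp [rowInsert, not_lt.2 h, hins], ?_, hxy⟩
        intro b hb
        rcases List.mem_cons.1 hb with rfl | hb
        · exact h
        · exact hle b hb

lemma row_chain {r : List ℤ} (hpw : r.Pairwise (· ≤ ·)) {x : ℤ} {r' : List ℤ} {y : ℤ}
    (hins : rowInsert r x = (r', some y)) : KChain (r ++ [x]) (y :: r') := by
  rcases rowInsert_spec r x with ⟨h1, _⟩ | ⟨r1, y0, r2, hr, hins0, hle, hxy⟩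
  · rw [h1] at hins; simp at hins
  · rw [hins0] at hins
    have h1' := congrArg Prod.fst hins
    have h2' := congrArg Prod.snd hins
    simp only [] at h1' h2'
    obtain rfl : r1 ++ x :: r2 = r' := h1'
    obtain rfl : y0 = y := Option.some.inj h2'
    subst hr
    rw [pw_mid1] at hpw
    obtain ⟨hr1pw, hr2pw, hr1y, hyr2, hr1r2⟩ := hpw
    have c1 : KChain (r1 ++ ((y0 :: r2) ++ [x])) (r1 ++ (y0 :: x :: r2)) := by
      have := kchain_context r1 [] (chainL1 hxy r2 hyr2 hr2pw)
      simpa using this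
    have c2 : KChain (r1 ++ y0 :: x :: r2) (y0 :: (r1 ++ x :: r2)) :=
      chainL2 r1 x r2 hr1pw hle hxy
    have e : (r1 ++ y0 :: r2) ++ [x] = r1 ++ ((y0 :: r2) ++ [x]) := by simp
    rw [e]
    exact (c1.trans (by simpa using c2))

/-- The row reading word of a tableau (bottom row first). -/
def rword (T : List (List ℤ)) : List ℤ := T.reverse.flatten

lemma rword_nil : rword ([] : List (List ℤ)) = [] := by simp [rword]

lemma rword_cons (r : List ℤ) (rs : List (List ℤ)) : rword (r :: rs) = rword rs ++ r := by
  simp [rword]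

lemma insert_chain : ∀ (T : List (List ℤ)), (∀ r ∈ T, r.Pairwise (· ≤ ·)) → ∀ (x : ℤ),
    KChain (rword T ++ [x]) (rword (insertT T x))
  | [], _, x => by
    rw [rword_nil]
    show KChain [x] (rword [[x]])
    rw [show rword [[x]] = [x] from by simp [rword]]
    exact KChain.refl _
  | r :: rs, hT, x => by
    rcases hspec : rowInsert r x with ⟨r', o⟩
    rcases o with _ | y
    · have hins : insertT (r :: rs) x = r' :: rs := by simp [insertT, hspec]
      have hr' : r' = r ++ [x] := by
        rcases rowInsert_spec r x with ⟨h1, _⟩ | ⟨r1, y0, r2, hr, hins0, _, _⟩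
        · rw [h1] at hspec
          have := congrArg Prod.fst hspec
          simpa using this.symm
        · rw [hins0] at hspec; simp at hspec
      rw [hins, rword_cons, rword_cons, hr']
      rw [show rword rs ++ (r ++ [x]) = rword rs ++ r ++ [x] from by simp]
      exact KChain.refl _
    · have hins : insertT (r :: rs) x = r' :: insertT rs y := by simp [insertT, hspec]
      have hrow : KChain (rword rs ++ (r ++ [x])) (rword rs ++ (y :: r')) := by
        have := kchain_context (rword rs) [] (row_chain (hT r (by simp)) hspec)
        simpa using this
      have hih : KChain ((rword rs ++ [y]) ++ r') (rword (insertT rs y) ++ r') := by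
        have := kchain_context [] r' (insert_chain rs (fun s hs => hT s (by simp [hs])) y)
        simpa using this
      rw [hins, rword_cons, rword_cons]
      rw [show rword rs ++ r ++ [x] = rword rs ++ (r ++ [x]) from by simp]
      refine hrow.trans ?_
      rw [show rword rs ++ (y :: r') = (rword rs ++ [y]) ++ r' from by simp]
      exact hih

end Greene6
section Greene7
open List

lemma getD_mem' (l : List ℤ) (n : ℕ) (h : n < l.length) : l.getD n 0 ∈ l := by
  rw [List.getD_eq_getElem l 0 h]; exact List.getElem_mem h

lemma getD_split_lt {A B : List ℤ} {b : ℤ} {j : ℕ} (h : j < A.length) :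
    (A ++ b :: B).getD j 0 = A.getD j 0 := List.getD_append A (b :: B) 0 j h

lemma getD_split_eq {A B : List ℤ} {b : ℤ} :
    (A ++ b :: B).getD A.length 0 = b := by
  rw [List.getD_append_right A (b :: B) 0 A.length (le_refl _)]
  simp

lemma getD_split_gt {A B : List ℤ} {b : ℤ} {j : ℕ} (h : A.length < j) :
    (A ++ b :: B).getD j 0 = B.getD (j - A.length - 1) 0 := by
  obtain ⟨d, hd⟩ : ∃ d, j - A.length = d + 1 := ⟨j - A.length - 1, by omega⟩
  rw [List.getD_append_right A (b :: B) 0 j (le_of_lt h), hd, List.getD_cons_succ]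
  simp

lemma shape_head {r s : List ℤ} {rs' : List (List ℤ)}
    (hshape : List.Chain' (fun a b => b ≤ a) ((r :: s :: rs').map List.length)) :
    s.length ≤ r.length := by
  simp only [List.map_cons, List.Chain', List.isChain_cons_cons] at hshape
  exact hshape.1

/-- A (semistandard, in the bumping convention) tableau: weakly increasing
rows, weakly decreasing row lengths, strictly increasing columns downward. -/
def Tab (T : List (List ℤ)) : Prop :=
  (∀ r ∈ T, r.Pairwise (· ≤ ·)) ∧
  List.Chain' (fun a b => b ≤ a) (T.map List.length) ∧
  ∀ i j, i + 1 < T.length → j < (T.getD (i + 1) []).length →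
    (T.getD i []).getD j 0 < (T.getD (i + 1) []).getD j 0

lemma tab_tail {r : List ℤ} {rs : List (List ℤ)} (h : Tab (r :: rs)) : Tab rs := by
  obtain ⟨hrows, hshape, hcols⟩ := h
  refine ⟨fun s hs => hrows s (by simp [hs]), by simpa [List.Chain'] using hshape.tail, ?_⟩
  intro i j hi hj
  have := hcols (i + 1) j (by simpa using hi) (by simpa using hj)
  simpa using this

lemma tab_nil : Tab [] := ⟨by simp, by simp [List.Chain'], fun i j hi => by simp at hi⟩

lemma insertT_tab : ∀ (T : List (List ℤ)), Tab T → ∀ x : ℤ, Tab (insertT T x)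
  | [], _, x => by
    refine ⟨?_, by simp [insertT, List.Chain'], ?_⟩
    · intro r hr
      simp only [insertT] at hr
      rcases List.mem_singleton.1 hr with rfl
      simp
    · intro i j hi
      simp [insertT] at hi
  | r :: rs, hT, x => by
    obtain ⟨hrows, hshape, hcols⟩ := hT
    have hrpw : r.Pairwise (· ≤ ·) := hrows r (by simp)
    have htabrs : Tab rs := tab_tail ⟨hrows, hshape, hcols⟩
    rcases rowInsert_spec r x with ⟨h1, h2⟩ | ⟨r1, y0, r2, hr, hins0, hle, hxy⟩
    · -- x is appended at the end of the first row
      have hins : insertT (r :: rs) x = (r ++ [x]) :: rs := by simp [insertT, h1]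
      rw [hins]
      refine ⟨?_, ?_, ?_⟩
      · intro s hs
        rcases List.mem_cons.1 hs with rfl | hs
        · rw [pw_mid1]
          exact ⟨hrpw, by simp, h2, by simp, by simp⟩
        · exact hrows s (by simp [hs])
      · rcases rs with _ | ⟨s, rs'⟩
        · simp [List.Chain']
        · have hsh := hshape
          simp only [List.map_cons, List.Chain', List.isChain_cons_cons] at hsh
          rw [List.map_cons, List.map_cons]
          refine List.isChain_cons_cons.2 ⟨by simp; omega, hsh.2⟩
      · intro i j hi hj
        rcases i with _ | n
        · rcases rs with _ | ⟨s, rs'⟩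
          · simp at hi
          · have hj' : j < s.length := by simpa using hj
            have hjr : j < r.length := lt_of_lt_of_le hj' (shape_head hshape)
            have hold := hcols 0 j (by simp) (by simpa using hj')
            simp only [List.getD_cons_zero, List.getD_cons_succ] at hold ⊢
            rwa [List.getD_append r [x] 0 j hjr]
        · have := hcols (n + 1) j (by simpa using hi) (by simpa using hj)
          simpa using this
    · -- x bumps y0 out of the first row
      have hins : insertT (r :: rs) x = (r1 ++ x :: r2) :: insertT rs y0 := by
        simp [insertT, hins0]
      have hlen_r' : (r1 ++ x :: r2).length = r.length := by simp [hr]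
      have hrdec := hrpw
      rw [hr, pw_mid1] at hrdec
      obtain ⟨hr1pw, hr2pw, hr1y, hyr2, hr1r2⟩ := hrdec
      have hr'pw : (r1 ++ x :: r2).Pairwise (· ≤ ·) := by
        rw [pw_mid1]
        exact ⟨hr1pw, hr2pw, hle, fun b hb => le_of_lt (lt_of_lt_of_le hxy (hyr2 b hb)),
          hr1r2⟩
      have hgetr_lt : ∀ j, j < r1.length → r.getD j 0 ≤ x := by
        intro j hjl
        rw [hr, getD_split_lt hjl]
        exact hle _ (getD_mem' r1 j hjl)
      have hget_eq : ∀ j, j ≠ r1.length → (r1 ++ x :: r2).getD j 0 = r.getD j 0 := by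
        intro j hj
        rcases lt_or_ge j r1.length with hlt | hge
        · rw [getD_split_lt hlt, hr, getD_split_lt hlt]
        · have hgt : r1.length < j := lt_of_le_of_ne hge (Ne.symm hj)
          rw [getD_split_gt hgt, hr, getD_split_gt hgt]
      have hget_p : (r1 ++ x :: r2).getD r1.length 0 = x := getD_split_eq
      have hget_py : r.getD r1.length 0 = y0 := by rw [hr]; exact getD_split_eq
      have hp_lt : r1.length < r.length := by rw [hr]; simp
      have hIH : Tab (insertT rs y0) := insertT_tab rs htabrs y0
      rw [hins]
      rcases rs with _ | ⟨s, rs'⟩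
      · -- single row tableau
        have hone : insertT ([] : List (List ℤ)) y0 = [[y0]] := by simp [insertT]
        rw [hone]
        refine ⟨?_, ?_, ?_⟩
        · intro t ht
          rcases List.mem_cons.1 ht with rfl | ht
          · exact hr'pw
          · rcases List.mem_singleton.1 ht with rfl
            simp
        · refine List.isChain_cons_cons.2 ⟨?_, by simp⟩
          show [y0].length ≤ (r1 ++ x :: r2).length
          simp only [List.length_singleton, List.length_append, List.length_cons, List.length_nil]
          omega
        · intro i j hi hj
          rcases i with _ | n
          · simp only [List.getD_cons_zero, List.getD_cons_succ] at hj ⊢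
            have hj0 : j = 0 := by simpa using hj
            subst hj0
            simp only [List.getD_cons_zero]
            rcases r1 with _ | ⟨a, r1'⟩
            · simpa using hxy
            · have ha : a ≤ x := hle a (by simp)
              simp only [List.cons_append, List.getD_cons_zero]
              omega
          · exact absurd hi (by simp)
      · -- at least two rows
        have hs_le : s.length ≤ r.length := shape_head hshape
        have hspw : s.Pairwise (· ≤ ·) := hrows s (by simp)
        have hcols0 : ∀ j, j < s.length → r.getD j 0 < s.getD j 0 := by
          intro j hj
          have := hcols 0 j (by simp) (by simpa using hj)
          simpa using this
        rcases rowInsert_spec s y0 with ⟨h1s, h2s⟩ | ⟨s1, y2, s2, hs, hins2, hles, hyy2⟩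
        · -- y0 appended at the end of s
          have hfr : insertT (s :: rs') y0 = (s ++ [y0]) :: rs' := by simp [insertT, h1s]
          have hslen : s.length ≤ r1.length := by
            by_contra hcon
            push_neg at hcon
            have hx1 : y0 < s.getD r1.length 0 := by
              have := hcols0 r1.length hcon
              rwa [hget_py] at this
            have hx2 : s.getD r1.length 0 ≤ y0 := h2s _ (getD_mem' s r1.length hcon)
            omega
          have hA : (s ++ [y0]).length ≤ (r1 ++ x :: r2).length := by
            simp only [List.length_append, List.length_cons, List.length_nil]
            omega
          have hB : ∀ j, j < (s ++ [y0]).length →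
              (r1 ++ x :: r2).getD j 0 < (s ++ [y0]).getD j 0 := by
            intro j hj
            simp only [List.length_append, List.length_cons, List.length_nil] at hj
            rcases lt_or_ge j s.length with hjs | hjs
            · rw [List.getD_append s [y0] 0 j hjs]
              have hjp : j < r1.length := by omega
              rw [getD_split_lt hjp]
              have := hcols0 j hjs
              rw [hr, getD_split_lt hjp] at this
              exact this
            · have hj_eq : j = s.length := by omega
              subst hj_eq
              rw [List.getD_append_right s [y0] 0 s.length (le_refl _)]
              simp only [Nat.sub_self, List.getD_cons_zero]
              rcases eq_or_lt_of_le hslen with hq | hq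
              · rw [hq, hget_p]; exact hxy
              · rw [hget_eq s.length (by omega)]
                have := hgetr_lt s.length hq
                omega
          rw [hfr]
          obtain ⟨hrows2, hshape2, hcols2⟩ : Tab ((s ++ [y0]) :: rs') := hfr ▸ hIH
          refine ⟨?_, ?_, ?_⟩
          · intro t ht
            rcases List.mem_cons.1 ht with rfl | ht
            · exact hr'pw
            · exact hrows2 t (by simp [ht])
          · rw [List.map_cons]
            refine List.isChain_cons.2 ⟨?_, by simpa [List.Chain'] using hshape2⟩
            intro zz hz
            rw [List.map_cons, List.head?_cons] at hz
            obtain rfl : (s ++ [y0]).length = zz := Option.some.inj hz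
            exact hA
          · intro i j hi hj
            rcases i with _ | n
            · simp only [List.getD_cons_zero, List.getD_cons_succ] at hj ⊢
              exact hB j hj
            · have := hcols2 n j (by simpa using hi) (by simpa using hj)
              simpa using this
        · -- y0 bumps y2 out of s
          have hfr : insertT (s :: rs') y0 = (s1 ++ y0 :: s2) :: insertT rs' y2 := by
            simp [insertT, hins2]
          have hslen' : (s1 ++ y0 :: s2).length = s.length := by simp [hs]
          have hspw' := hspw
          rw [hs, pw_mid1] at hspw'
          obtain ⟨hs1pw, hs2pw, hs1y2, hy2s2, hs1s2⟩ := hspw'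
          have hq_le : s1.length ≤ r1.length := by
            by_contra hcon
            push_neg at hcon
            have hrp_lt_s : r1.length < s.length := by rw [hs]; simp; omega
            have hx1 : y0 < s.getD r1.length 0 := by
              have := hcols0 r1.length hrp_lt_s
              rwa [hget_py] at this
            have hx2 : s.getD r1.length 0 ≤ y0 := by
              rw [hs, getD_split_lt hcon]
              exact hles _ (getD_mem' s1 r1.length hcon)
            omega
          have hA : (s1 ++ y0 :: s2).length ≤ (r1 ++ x :: r2).length := by
            rw [hlen_r', hslen']; exact hs_le
          have hB : ∀ j, j < (s1 ++ y0 :: s2).length →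
              (r1 ++ x :: r2).getD j 0 < (s1 ++ y0 :: s2).getD j 0 := by
            intro j hj
            rw [hslen'] at hj
            by_cases hjq : j = s1.length
            · subst hjq
              rw [getD_split_eq]
              rcases eq_or_lt_of_le hq_le with hq | hq
              · rw [hq, hget_p]; exact hxy
              · rw [hget_eq s1.length (by omega)]
                have := hgetr_lt s1.length hq
                omega
            · have hsj : (s1 ++ y0 :: s2).getD j 0 = s.getD j 0 := by
                rcases lt_or_ge j s1.length with hlt | hge
                · rw [getD_split_lt hlt, hs, getD_split_lt hlt]
                · have hgt : s1.length < j := lt_of_le_of_ne hge (Ne.symm hjq)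
                  rw [getD_split_gt hgt, hs, getD_split_gt hgt]
              rw [hsj]
              by_cases hjp : j = r1.length
              · subst hjp
                rw [hget_p]
                have hq_lt : s1.length < r1.length := lt_of_le_of_ne hq_le (Ne.symm hjq)
                have hy2le : y2 ≤ s.getD r1.length 0 := by
                  rw [hs, getD_split_gt hq_lt]
                  apply hy2s2
                  apply getD_mem'
                  have : r1.length < s.length := hj
                  rw [hs] at this
                  simp only [List.length_append, List.length_cons] at this
                  omega
                omega
              · rw [hget_eq j hjp]
                exact hcols0 j hj
          rw [hfr]
          obtain ⟨hrows2, hshape2, hcols2⟩ : Tab ((s1 ++ y0 :: s2) :: insertT rs' y2) :=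
            hfr ▸ hIH
          refine ⟨?_, ?_, ?_⟩
          · intro t ht
            rcases List.mem_cons.1 ht with rfl | ht
            · exact hr'pw
            · exact hrows2 t (by simp [ht])
          · rw [List.map_cons]
            refine List.isChain_cons.2 ⟨?_, by simpa [List.Chain'] using hshape2⟩
            intro zz hz
            rw [List.map_cons, List.head?_cons] at hz
            obtain rfl : (s1 ++ y0 :: s2).length = zz := Option.some.inj hz
            exact hA
          · intro i j hi hj
            rcases i with _ | n
            · simp only [List.getD_cons_zero, List.getD_cons_succ] at hj ⊢
              exact hB j hj
            · have := hcols2 n j (by simpa using hi) (by simpa using hj)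
              simpa using this

lemma tab_RS (w : List ℤ) : Tab (RS w) := by
  have : ∀ (l : List ℤ) (T : List (List ℤ)), Tab T → Tab (l.foldl insertT T) := by
    intro l
    induction l with
    | nil => intro T hT; exact hT
    | cons a l ih => intro T hT; exact ih _ (insertT_tab T hT a)
  exact this w [] tab_nil

lemma RS_chain (w : List ℤ) : KChain w (rword (RS w)) := by
  induction w using List.reverseRecOn with
  | nil =>
    show KChain [] (rword (RS []))
    rw [show RS ([] : List ℤ) = [] from rfl, rword_nil]
    exact KChain.refl _
  | append_singleton w x ih =>
    have hRS : RS (w ++ [x]) = insertT (RS w) x := by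
      unfold RS
      rw [List.foldl_concat]
    rw [hRS]
    have h1 : KChain (w ++ [x]) (rword (RS w) ++ [x]) := by
      have := kchain_context [] [x] ih
      simpa using this
    exact h1.trans (insert_chain (RS w) (tab_RS w).1 x)

end Greene7
section Greene8
open List

lemma shape_mono {T : List (List ℤ)} (hT : Tab T) :
    ∀ a b, a ≤ b → b < T.length → (T.getD b []).length ≤ (T.getD a []).length := by
  have hpw : (T.map List.length).Pairwise (fun x1 x2 => x2 ≤ x1) := by
    have := hT.2.1
    simp only [List.Chain', List.isChain_iff_pairwise] at this; exact this
  intro a b hab hb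
  have ha : a < T.length := lt_of_le_of_lt hab hb
  rcases eq_or_lt_of_le hab with rfl | hlt
  · exact le_refl _
  · rw [List.pairwise_iff_getElem] at hpw
    have h := hpw a b (by simpa using ha) (by simpa using hb) hlt
    simp only [List.getElem_map] at h
    rwa [List.getD_eq_getElem _ _ ha, List.getD_eq_getElem _ _ hb]

lemma tab_cols_lt {T : List (List ℤ)} (hT : Tab T) :
    ∀ a b j, a < b → b < T.length → j < (T.getD b []).length →
      (T.getD a []).getD j 0 < (T.getD b []).getD j 0 := by
  intro a b
  induction b with
  | zero => intro j h; omega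
  | succ n ih =>
    intro j hab hb hj
    rcases eq_or_lt_of_le (Nat.succ_le_of_lt hab) with h | h
    · obtain rfl : a = n := by omega
      exact hT.2.2 a j hb hj
    · have han : a < n := by omega
      have hn : n < T.length := by omega
      have hjn : j < (T.getD n []).length :=
        lt_of_lt_of_le hj (shape_mono hT n (n + 1) (by omega) hb)
      exact lt_trans (ih j han hn hjn) (hT.2.2 n j hb hj)

lemma getD_reverse {T : List (List ℤ)} {m : ℕ} (hm : m < T.length) :
    T.reverse.getD m [] = T.getD (T.length - 1 - m) [] := by
  rw [List.getD_eq_getElem _ _ (by simpa using hm),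
    List.getD_eq_getElem _ _ (by omega : T.length - 1 - m < T.length)]
  rw [List.getElem_reverse]
  all_goals (congr 1; omega)

lemma getD_none_of_ge {c : List (Option ℕ)} {j : ℕ} (h : c.length ≤ j) :
    c.getD j none = none := List.getD_eq_default _ _ h

lemma mem_ext {i : ℕ} {r : List ℤ} {cr : List (Option ℕ)} {j : ℕ}
    (hlen : cr.length = r.length) (hj : j < r.length) (hc : cr.getD j none = some i) :
    r.getD j 0 ∈ ext i r cr := by
  have hjz : j < (r.zip cr).length := by simp [List.length_zip]; omega
  have hz : (r.zip cr)[j] = (r.getD j 0, cr.getD j none) := by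
    rw [List.getElem_zip]
    rw [List.getD_eq_getElem _ _ hj, List.getD_eq_getElem _ _ (by omega : j < cr.length)]
  have hmem : (r.getD j 0, cr.getD j none) ∈ r.zip cr := hz ▸ List.getElem_mem hjz
  rw [hc] at hmem
  unfold ext
  refine List.mem_map.2 ⟨(r.getD j 0, some i), ?_, rfl⟩
  rw [List.mem_filter]
  exact ⟨hmem, by simp⟩

/-- Splitting a coloring of a concatenation into row colorings. -/
lemma exists_split : ∀ (L : List (List ℤ)) (c : List (Option ℕ)),
    c.length = L.flatten.length →
    ∃ cs : List (List (Option ℕ)), c = cs.flatten ∧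
      List.Forall₂ (fun (r : List ℤ) (cr : List (Option ℕ)) => cr.length = r.length) L cs
  | [], c, h => by
    simp at h
    exact ⟨[], by simpa using h, List.Forall₂.nil⟩
  | r :: L, c, h => by
    simp only [List.flatten_cons, List.length_append] at h
    have h1 : (c.take r.length).length = r.length := by
      rw [List.length_take]; omega
    have h2 : (c.drop r.length).length = L.flatten.length := by
      rw [List.length_drop]; omega
    obtain ⟨cs, hcs, hf⟩ := exists_split L (c.drop r.length) h2
    exact ⟨c.take r.length :: cs, by
      rw [List.flatten_cons, ← hcs, List.take_append_drop], List.Forall₂.cons h1 hf⟩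

lemma ext_flatten (i : ℕ) : ∀ {L : List (List ℤ)} {cs : List (List (Option ℕ))},
    List.Forall₂ (fun (r : List ℤ) (cr : List (Option ℕ)) => cr.length = r.length) L cs →
    ext i L.flatten cs.flatten = (List.zipWith (fun r cr => ext i r cr) L cs).flatten := by
  intro L cs h
  induction h with
  | nil => simp
  | @cons r cr L cs hlen hf ih =>
    rw [List.flatten_cons, List.flatten_cons, ext_append i hlen, ih, List.zipWith_cons_cons,
      List.flatten_cons]

lemma sum_take_getD : ∀ (l : List ℕ) (k : ℕ),
    (l.take k).sum = ∑ i ∈ Finset.range k, l.getD i 0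
  | l, 0 => by simp
  | [], k + 1 => by simp
  | a :: l, k + 1 => by
    rw [List.take_succ_cons, List.sum_cons, sum_take_getD l k, Finset.sum_range_succ']
    simp [List.getD_cons_succ, List.getD_cons_zero]
    ring

lemma countP_eq_sum_range (p : Option ℕ → Bool) :
    ∀ (c : List (Option ℕ)), c.countP p = ∑ j ∈ Finset.range c.length,
      if p (c.getD j none) then 1 else 0
  | [] => by simp
  | o :: c => by
    rw [List.countP_cons, List.length_cons, Finset.sum_range_succ', countP_eq_sum_range p c]
    by_cases h : p o <;> simp [List.getD_cons_succ, List.getD_cons_zero, h] <;> omega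

lemma length_zipWith_ext (i : ℕ) : ∀ {L : List (List ℤ)} {cs : List (List (Option ℕ))},
    List.Forall₂ (fun (r : List ℤ) (cr : List (Option ℕ)) => cr.length = r.length) L cs →
    ((List.zipWith (fun r cr => ext i r cr) L cs).map List.length).sum =
      ∑ m ∈ Finset.range L.length, (ext i (L.getD m []) (cs.getD m [])).length := by
  intro L cs h
  induction h with
  | nil => simp
  | @cons r cr L cs hlen hf ih =>
    rw [List.zipWith_cons_cons, List.map_cons, List.sum_cons, ih, List.length_cons,
      Finset.sum_range_succ']
    simp [List.getD_cons_succ, List.getD_cons_zero] <;> omega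

end Greene8
section Greene9
open List

lemma forall2_getD {L : List (List ℤ)} {cs : List (List (Option ℕ))}
    (h : List.Forall₂ (fun (r : List ℤ) (cr : List (Option ℕ)) => cr.length = r.length) L cs) :
    ∀ m, m < L.length → (cs.getD m []).length = (L.getD m []).length := by
  induction h with
  | nil => intro m hm; simp at hm
  | @cons r cr L cs hlen hf ih =>
    intro m hm
    rcases m with _ | m
    · simpa using hlen
    · simp only [List.getD_cons_succ]
      exact ih m (by simpa using hm)

lemma no_two_rows {T : List (List ℤ)} (hT : Tab T) {cs : List (List (Option ℕ))}
    (hf : List.Forall₂ (fun (r : List ℤ) (cr : List (Option ℕ)) => cr.length = r.length)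
      T.reverse cs)
    {i j m1 m2 : ℕ} (hm12 : m1 < m2) (hm2 : m2 < T.length)
    (hc1 : (cs.getD m1 []).getD j none = some i)
    (hc2 : (cs.getD m2 []).getD j none = some i)
    (hpw : (ext i T.reverse.flatten cs.flatten).Pairwise (· ≤ ·)) : False := by
  set n := T.length with hn
  have hm1 : m1 < n := lt_trans hm12 hm2
  have hm1' : m1 < T.reverse.length := by simpa using hm1
  have hm2' : m2 < T.reverse.length := by simpa using hm2
  have hlen1 : (cs.getD m1 []).length = (T.reverse.getD m1 []).length :=
    forall2_getD hf m1 hm1'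
  have hlen2 : (cs.getD m2 []).length = (T.reverse.getD m2 []).length :=
    forall2_getD hf m2 hm2'
  have hj1 : j < (T.reverse.getD m1 []).length := by
    by_contra hcon
    rw [getD_none_of_ge (by omega : (cs.getD m1 []).length ≤ j)] at hc1
    exact nomatch hc1
  have hj2 : j < (T.reverse.getD m2 []).length := by
    by_contra hcon
    rw [getD_none_of_ge (by omega : (cs.getD m2 []).length ≤ j)] at hc2
    exact nomatch hc2
  set v1 := (T.reverse.getD m1 []).getD j 0 with hv1
  set v2 := (T.reverse.getD m2 []).getD j 0 with hv2
  -- v1 ≤ v2 from the coloring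
  have hmem1 : v1 ∈ ext i (T.reverse.getD m1 []) (cs.getD m1 []) :=
    mem_ext hlen1 hj1 hc1
  have hmem2 : v2 ∈ ext i (T.reverse.getD m2 []) (cs.getD m2 []) :=
    mem_ext hlen2 hj2 hc2
  have hle : v1 ≤ v2 := by
    rw [ext_flatten i hf, List.pairwise_flatten] at hpw
    have hseg := hpw.2
    rw [List.pairwise_iff_getElem] at hseg
    have hlz : (List.zipWith (fun r cr => ext i r cr) T.reverse cs).length = n := by
      rw [List.length_zipWith, ← hf.length_eq]
      simp [hn]
    have := hseg m1 m2 (by omega) (by omega) hm12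
    rw [List.getElem_zipWith, List.getElem_zipWith] at this
    apply this
    · rw [← List.getD_eq_getElem _ _ (by omega : m1 < T.reverse.length)]
      rw [← List.getD_eq_getElem _ _ (by rw [← hf.length_eq]; simpa using hm1)]
      exact hmem1
    · rw [← List.getD_eq_getElem _ _ (by omega : m2 < T.reverse.length)]
      rw [← List.getD_eq_getElem _ _ (by rw [← hf.length_eq]; simpa using hm2)]
      exact hmem2
  -- v2 < v1 from column strictness
  have hlt : v2 < v1 := by
    rw [hv1, hv2, getD_reverse hm1, getD_reverse hm2]
    rw [getD_reverse hm1] at hj1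
    apply tab_cols_lt hT (n - 1 - m2) (n - 1 - m1) j (by omega) (by omega) hj1
  omega

end Greene9
section Greene10
open List

lemma sum_ite_range (f : ℕ → ℕ) (a b : ℕ) :
    (∑ m ∈ Finset.range a, if m < b then f m else 0) = ∑ m ∈ Finset.range (min a b), f m := by
  have h0 : ∑ m ∈ Finset.range (min a b), (if m < b then f m else 0) =
      ∑ m ∈ Finset.range a, (if m < b then f m else 0) :=
    Finset.sum_subset (Finset.range_subset_range.2 (min_le_left a b))
      (fun x hx hnx => by
        simp only [Finset.mem_range, lt_min_iff, not_and, not_lt] at hx hnx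
        rw [if_neg]; omega)
  rw [← h0]
  exact Finset.sum_congr rfl (fun m hm => by
    simp only [Finset.mem_range, lt_min_iff] at hm
    rw [if_pos hm.2])

lemma tabUB {T : List (List ℤ)} (hT : Tab T) {k : ℕ} {c : List (Option ℕ)}
    (hv : Valid k (rword T) c) : score k (rword T) c ≤ ((part T).take k).sum := by
  obtain ⟨hlen, hcol, hpw⟩ := hv
  obtain ⟨cs, rfl, hf⟩ := exists_split T.reverse c (by simpa [rword] using hlen)
  set n := T.length with hn
  rcases Nat.eq_zero_or_pos n with hn0 | hnpos
  · have hT0 : T = [] := List.length_eq_zero_iff.1 hn0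
    subst hT0
    cases hf with
    | nil => simp [score, rword, part, ext]
  set J := (T.getD 0 []).length with hJ
  set lam : ℕ → ℕ := fun m => (T.getD m []).length with hlam
  have hlamJ : ∀ m, m < n → lam m ≤ J := fun m hm => shape_mono hT 0 m (Nat.zero_le m) hm
  have hrevlen : ∀ m, m < n → (cs.getD m []).length = lam (n - 1 - m) := by
    intro m hm
    rw [forall2_getD hf m (by simpa using hm), getD_reverse (by simpa using hm)]
  have stepA : score k (rword T) cs.flatten =
      ∑ i ∈ Finset.range k, ∑ m ∈ Finset.range n,
        (ext i (T.reverse.getD m []) (cs.getD m [])).length := by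
    unfold score
    apply Finset.sum_congr rfl
    intro i _
    show (ext i T.reverse.flatten cs.flatten).length = _
    rw [ext_flatten i hf, List.length_flatten, length_zipWith_ext i hf]
    have : T.reverse.length = n := by simp [hn]
    rw [this]
  have stepB : ∀ i m, m < n → (ext i (T.reverse.getD m []) (cs.getD m [])).length =
      ∑ j ∈ Finset.range J, (if (cs.getD m []).getD j none = some i then 1 else 0) := by
    intro i m hm
    rw [ext_length i _ _ (forall2_getD hf m (by simpa using hm))]
    rw [countP_eq_sum_range]
    have hsub : Finset.range (cs.getD m []).length ⊆ Finset.range J := by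
      apply Finset.range_subset_range.2
      rw [hrevlen m hm]
      exact hlamJ _ (by omega)
    rw [Finset.sum_subset hsub (fun j hj hnj => by
      rw [getD_none_of_ge (by simp only [Finset.mem_range, not_lt] at hnj; omega)]
      simp)]
    apply Finset.sum_congr rfl
    intro j _
    by_cases h : (cs.getD m []).getD j none = some i <;> simp [h]
  have htot : score k (rword T) cs.flatten =
      ∑ j ∈ Finset.range J, ∑ m ∈ Finset.range n, ∑ i ∈ Finset.range k,
        (if (cs.getD m []).getD j none = some i then 1 else 0) := by
    rw [stepA]
    rw [Finset.sum_congr rfl (fun i (_ : i ∈ Finset.range k) =>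
      Finset.sum_congr rfl (fun m hm =>
        stepB i m (by simpa using Finset.mem_range.1 hm)))]
    rw [Finset.sum_comm]
    rw [Finset.sum_congr rfl (fun m (_ : m ∈ Finset.range n) => Finset.sum_comm)]
    rw [Finset.sum_comm]
  have hinj : ∀ i j, (∑ m ∈ Finset.range n,
      if (cs.getD m []).getD j none = some i then 1 else 0) ≤ 1 := by
    intro i j
    rw [Finset.sum_boole]
    simp only [Nat.cast_id]
    apply Finset.card_le_one.2
    intro a ha b hb
    simp only [Finset.mem_filter, Finset.mem_range] at ha hb
    by_contra hne
    rcases lt_trichotomy a b with h | h | h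
    · exact no_two_rows hT hf h hb.1 ha.2 hb.2 (hpw i)
    · exact hne h
    · exact no_two_rows hT hf h ha.1 hb.2 ha.2 (hpw i)
  have hrow : ∀ m j, m < n → (∑ i ∈ Finset.range k,
      if (cs.getD m []).getD j none = some i then 1 else 0) ≤
      (if j < lam (n - 1 - m) then 1 else 0) := by
    intro m j hm
    rcases ho : (cs.getD m []).getD j none with _ | i0
    · simp
    · have hjlen : j < (cs.getD m []).length := by
        by_contra hcon
        rw [getD_none_of_ge (by omega)] at ho
        exact nomatch ho
      rw [hrevlen m hm] at hjlen
      rw [if_pos hjlen]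
      have hcongr : ∀ i ∈ Finset.range k,
          (if (some i0 : Option ℕ) = some i then 1 else 0) = if i = i0 then (1:ℕ) else 0 := by
        intro i _
        by_cases h : i = i0
        · simp [h]
        · simp [h, Ne.symm h]
      rw [Finset.sum_congr rfl hcongr, Finset.sum_ite_eq' (Finset.range k) i0 (fun _ => (1:ℕ))]
      split <;> omega
  have hkey : ∀ j, (∑ m ∈ Finset.range n, ∑ i ∈ Finset.range k,
      if (cs.getD m []).getD j none = some i then 1 else 0) ≤
      ∑ m ∈ Finset.range n, (if m < k ∧ j < lam m then 1 else 0) := by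
    intro j
    have hb1 : (∑ m ∈ Finset.range n, ∑ i ∈ Finset.range k,
        if (cs.getD m []).getD j none = some i then 1 else 0) ≤ k := by
      rw [Finset.sum_comm]
      calc (∑ i ∈ Finset.range k, ∑ m ∈ Finset.range n,
            if (cs.getD m []).getD j none = some i then 1 else 0)
          ≤ ∑ _i ∈ Finset.range k, 1 := Finset.sum_le_sum (fun i _ => hinj i j)
        _ = k := by simp
    have hrefl : (∑ m ∈ Finset.range n, (if j < lam (n - 1 - m) then (1:ℕ) else 0)) =
        ∑ m ∈ Finset.range n, (if j < lam m then 1 else 0) :=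
      Finset.sum_range_reflect (fun m => if j < lam m then 1 else 0) n
    have hb2 : (∑ m ∈ Finset.range n, ∑ i ∈ Finset.range k,
        if (cs.getD m []).getD j none = some i then 1 else 0) ≤
        ∑ m ∈ Finset.range n, (if j < lam m then 1 else 0) := by
      refine le_trans (Finset.sum_le_sum (fun m hm => hrow m j (Finset.mem_range.1 hm)))
        (le_of_eq hrefl)
    set hj : ℕ := ∑ m ∈ Finset.range n, (if j < lam m then 1 else 0) with hhj
    have hhjcard : hj = ((Finset.range n).filter (fun m => j < lam m)).card := by
      rw [hhj, Finset.sum_boole]; simp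
    have hDC : ∀ m, m < hj → j < lam m := by
      intro m hmhj
      by_contra hcon
      push_neg at hcon
      have hsub : (Finset.range n).filter (fun m' => j < lam m') ⊆ Finset.range m := by
        intro m' hm'
        simp only [Finset.mem_filter, Finset.mem_range] at hm' ⊢
        by_contra hge
        push_neg at hge
        have hmono := shape_mono hT m m' hge hm'.1
        simp only [hlam] at hcon hm'
        omega
      have hcard := Finset.card_le_card hsub
      rw [← hhjcard, Finset.card_range] at hcard
      omega
    have hminle : min k hj ≤ ∑ m ∈ Finset.range n, (if m < k ∧ j < lam m then 1 else 0) := by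
      rw [Finset.sum_boole]
      simp only [Nat.cast_id]
      have hhjn : hj ≤ n := by
        rw [hhjcard]
        exact le_trans (Finset.card_filter_le _ _) (by simp)
      have hsub : Finset.range (min k hj) ⊆
          (Finset.range n).filter (fun m => m < k ∧ j < lam m) := by
        intro m hm
        simp only [Finset.mem_range, lt_min_iff] at hm
        simp only [Finset.mem_filter, Finset.mem_range]
        exact ⟨by omega, hm.1, hDC m hm.2⟩
      have := Finset.card_le_card hsub
      simpa using this
    exact le_trans (le_min hb1 hb2) hminle
  have hE : (∑ j ∈ Finset.range J, ∑ m ∈ Finset.range n,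
      (if m < k ∧ j < lam m then (1:ℕ) else 0))
      = ∑ m ∈ Finset.range n, (if m < k then lam m else 0) := by
    rw [Finset.sum_comm]
    apply Finset.sum_congr rfl
    intro m hm
    by_cases hmk : m < k
    · simp only [hmk, true_and]
      rw [Finset.sum_boole]
      simp only [Nat.cast_id, if_pos hmk]
      have : (Finset.range J).filter (fun j => j < lam m) = Finset.range (lam m) := by
        ext j
        simp only [Finset.mem_filter, Finset.mem_range]
        constructor
        · rintro ⟨_, h⟩; exact h
        · intro h
          exact ⟨lt_of_lt_of_le h (hlamJ m (Finset.mem_range.1 hm)), h⟩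
      rw [this, Finset.card_range]
      simp
    · simp [hmk]
  have hF : (∑ m ∈ Finset.range n, (if m < k then lam m else 0)) = ((part T).take k).sum := by
    rw [sum_take_getD]
    have hgd : ∀ m, (part T).getD m 0 = if m < n then lam m else 0 := by
      intro m
      by_cases hm : m < n
      · rw [if_pos hm]
        unfold part
        rw [List.getD_eq_getElem _ _ (by simpa using hm), List.getElem_map]
        rw [hlam]
        simp only []
        rw [List.getD_eq_getElem _ _ hm]
      · rw [if_neg hm]
        apply List.getD_eq_default
        simp only [part, List.length_map]
        omega
    rw [Finset.sum_congr rfl (fun m (_ : m ∈ Finset.range k) => hgd m)]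
    rw [sum_ite_range lam k n, sum_ite_range lam n k, min_comm]
  calc score k (rword T) cs.flatten
      = ∑ j ∈ Finset.range J, ∑ m ∈ Finset.range n, ∑ i ∈ Finset.range k,
          (if (cs.getD m []).getD j none = some i then 1 else 0) := htot
    _ ≤ ∑ j ∈ Finset.range J, ∑ m ∈ Finset.range n, (if m < k ∧ j < lam m then 1 else 0) :=
        Finset.sum_le_sum (fun j _ => hkey j)
    _ = ∑ m ∈ Finset.range n, (if m < k then lam m else 0) := hE
    _ = ((part T).take k).sum := hF

end Greene10
section Greene11
open List

/-- The canonical coloring of a tableau: row `r0 + m` (top indexed) gets color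
`r0 + m` if that is `< k`. -/
def colT (k : ℕ) : ℕ → List (List ℤ) → List (List (Option ℕ))
  | _, [] => []
  | r0, row :: rest =>
    List.replicate row.length (if r0 < k then some r0 else none) :: colT k (r0 + 1) rest

lemma colT_map_length (k : ℕ) : ∀ (r0 : ℕ) (T : List (List ℤ)),
    (colT k r0 T).map List.length = T.map List.length
  | _, [] => rfl
  | r0, row :: rest => by
    simp [colT, colT_map_length k (r0 + 1) rest]

lemma colT_len (k r0 : ℕ) (T : List (List ℤ)) :
    ((colT k r0 T).reverse.flatten).length = (rword T).length := by
  rw [List.length_flatten, rword, List.length_flatten, List.map_reverse, List.map_reverse,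
    List.sum_reverse, List.sum_reverse, colT_map_length]

lemma ext_replicate (i : ℕ) (o : Option ℕ) : ∀ (row : List ℤ),
    ext i row (List.replicate row.length o) = if o = some i then row else []
  | [] => by simp
  | a :: row => by
    rw [List.length_cons, List.replicate_succ, ext_cons, ext_replicate i o row]
    by_cases h : o = some i <;> simp [h]

lemma colT_colors {k : ℕ} : ∀ {r0 : ℕ} {T : List (List ℤ)},
    ∀ cr ∈ colT k r0 T, ∀ o ∈ cr, ∀ i : ℕ, o = some i → i < k := by
  intro r0 T
  induction T generalizing r0 with
  | nil => simp [colT]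
  | cons row rest ih =>
    intro cr hcr o ho i hi
    rcases List.mem_cons.1 hcr with rfl | hcr
    · have := List.eq_of_mem_replicate ho
      subst this
      by_cases h : r0 < k
      · rw [if_pos h] at hi; cases hi; exact h
      · rw [if_neg h] at hi; exact nomatch hi
    · exact ih cr hcr o ho i hi

lemma colT_ext (k : ℕ) : ∀ (T : List (List ℤ)) (r0 i : ℕ),
    ext i (rword T) ((colT k r0 T).reverse.flatten) =
      if r0 ≤ i ∧ i < k ∧ i - r0 < T.length then T.getD (i - r0) [] else []
  | [], r0, i => by simp [rword, colT]
  | row :: rest, r0, i => by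
    rw [rword_cons]
    have hc : (colT k r0 (row :: rest)).reverse.flatten =
        (colT k (r0 + 1) rest).reverse.flatten ++
          List.replicate row.length (if r0 < k then some r0 else none) := by
      simp [colT]
    rw [hc, ext_append i (colT_len k (r0 + 1) rest) _ _, colT_ext k rest (r0 + 1) i,
      ext_replicate]
    by_cases hi0 : i = r0
    · subst hi0
      by_cases hik : i < k
      · simp [hik, Nat.sub_self]
      · simp [hik]
    · by_cases hgt : r0 + 1 ≤ i
      · have h1 : (if r0 < k then some r0 else none) = some i → False := by
          intro h
          by_cases h' : r0 < k
          · rw [if_pos h'] at h; cases h; omega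
          · rw [if_neg h'] at h; exact nomatch h
        rw [if_neg h1]
        by_cases hcond : i < k ∧ i - (r0 + 1) < rest.length
        · rw [if_pos ⟨hgt, hcond.1, hcond.2⟩,
            if_pos ⟨by omega, hcond.1, by simp only [List.length_cons]; omega⟩]
          rw [List.append_nil]
          obtain ⟨d, hd⟩ : ∃ d, i - r0 = d + 1 := ⟨i - r0 - 1, by omega⟩
          rw [hd, List.getD_cons_succ]
          congr 1
          omega
        · rw [if_neg (fun hh => hcond ⟨hh.2.1, by omega⟩),
            if_neg (fun hh => hcond ⟨hh.2.1, by
              have h2 := hh.2.2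
              simp only [List.length_cons] at h2
              omega⟩)]
          simp
      · have hlt : i < r0 := by omega
        rw [if_neg (fun hh => by omega : ¬ (r0 + 1 ≤ i ∧ i < k ∧ i - (r0 + 1) < rest.length)),
          if_neg (fun hh => by omega : ¬ (r0 ≤ i ∧ i < k ∧ i - r0 < (row :: rest).length))]
        have h1 : (if r0 < k then some r0 else none) = some i → False := by
          intro h
          by_cases h' : r0 < k
          · rw [if_pos h'] at h; cases h; omega
          · rw [if_neg h'] at h; exact nomatch h
        rw [if_neg h1]
        simp

lemma tabAch {T : List (List ℤ)} (hT : Tab T) (k : ℕ) :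
    ∃ c, Valid k (rword T) c ∧ score k (rword T) c = ((part T).take k).sum := by
  refine ⟨(colT k 0 T).reverse.flatten, ⟨colT_len k 0 T, ?_, ?_⟩, ?_⟩
  · intro o ho i hi
    rw [List.mem_flatten] at ho
    obtain ⟨cr, hcr, ho⟩ := ho
    exact colT_colors cr (List.mem_reverse.1 hcr) o ho i hi
  · intro i
    rw [colT_ext k T 0 i]
    split
    · next h =>
      have : T.getD (i - 0) [] ∈ T := by
        rw [List.getD_eq_getElem _ _ h.2.2]
        exact List.getElem_mem _
      exact hT.1 _ this
    · simp
  · unfold score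
    rw [sum_take_getD]
    apply Finset.sum_congr rfl
    intro i hi
    rw [colT_ext k T 0 i]
    have hik : i < k := Finset.mem_range.1 hi
    by_cases hin : i < T.length
    · rw [if_pos ⟨Nat.zero_le i, hik, by omega⟩]
      rw [List.getD_eq_getElem (part T) 0 (by simp [part]; omega)]
      simp only [part, List.getElem_map]
      rw [List.getD_eq_getElem _ _ (by omega : i - 0 < T.length)]
      simp
    · rw [if_neg (by omega : ¬ (0 ≤ i ∧ i < k ∧ i - 0 < T.length))]
      rw [List.getD_eq_default _ _ (by simp [part]; omega)]
      simp

end Greene11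
section Greene12
open List

lemma step_transfer {w1 w2 : List ℤ} (h : KnuthStep w1 w2) {k : ℕ} {c : List (Option ℕ)}
    (hv : Valid k w1 c) :
    ∃ c', Valid k w2 c' ∧ c'.countP (fun o => o.isSome) = c.countP (fun o => o.isSome) := by
  cases h with
  | move1 u v x y z hxy hyz => exact transfer1F hxy hyz hv
  | move2 u v x y z hxy hyz => exact transfer2F hxy hyz hv

lemma step_transfer_rev {w1 w2 : List ℤ} (h : KnuthStep w2 w1) {k : ℕ} {c : List (Option ℕ)}
    (hv : Valid k w1 c) :
    ∃ c', Valid k w2 c' ∧ c'.countP (fun o => o.isSome) = c.countP (fun o => o.isSome) := by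
  cases h with
  | move1 u v x y z hxy hyz => exact transfer1B hxy hyz hv
  | move2 u v x y z hxy hyz => exact transfer2B hxy hyz hv

lemma chain_transfer {w1 w2 : List ℤ} (h : KChain w1 w2) {k : ℕ} :
    ∀ {c : List (Option ℕ)}, Valid k w1 c →
    ∃ c', Valid k w2 c' ∧ c'.countP (fun o => o.isSome) = c.countP (fun o => o.isSome) := by
  induction h with
  | refl => exact fun {c} hv => ⟨c, hv, rfl⟩
  | tail _ hstep ih =>
    intro c hv
    obtain ⟨c1, hv1, hc1⟩ := ih hv
    rcases hstep with hs | hs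
    · obtain ⟨c2, hv2, hc2⟩ := step_transfer hs hv1
      exact ⟨c2, hv2, hc2.trans hc1⟩
    · obtain ⟨c2, hv2, hc2⟩ := step_transfer_rev hs hv1
      exact ⟨c2, hv2, hc2.trans hc1⟩

lemma greeneUB (w : List ℤ) (k : ℕ) {c : List (Option ℕ)} (hv : Valid k w c) :
    score k w c ≤ ((part (RS w)).take k).sum := by
  obtain ⟨c', hv', hc'⟩ := chain_transfer (RS_chain w) hv
  have h1 : score k w c = score k (rword (RS w)) c' := by
    rw [score_eq_countP hv, score_eq_countP hv', hc']
  rw [h1]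
  exact tabUB (tab_RS w) hv'

lemma greeneAch (w : List ℤ) (k : ℕ) :
    ∃ c, Valid k w c ∧ score k w c = ((part (RS w)).take k).sum := by
  obtain ⟨c, hv, hs⟩ := tabAch (tab_RS w) k
  obtain ⟨c', hv', hc'⟩ := chain_transfer (KChain.symm (RS_chain w)) hv
  refine ⟨c', hv', ?_⟩
  rw [score_eq_countP hv', hc', ← score_eq_countP hv, hs]

lemma step_le {x y : List ℤ} (h : KnuthStep x y ∨ KnuthStep y x ∨ LSStep x y) (k : ℕ) :
    ((part (RS x)).take k).sum ≤ ((part (RS y)).take k).sum := by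
  obtain ⟨c, hv, hsc⟩ := greeneAch x k
  have htr : ∃ c', Valid k y c' ∧
      c'.countP (fun o => o.isSome) = c.countP (fun o => o.isSome) := by
    rcases h with hs | hs | hs
    · exact step_transfer hs hv
    · exact step_transfer_rev hs hv
    · cases hs with
      | swap u w a b hba => exact transferLS hba hv
  obtain ⟨c', hv', hc'⟩ := htr
  have h1 : score k y c' = score k x c := by
    rw [score_eq_countP hv', score_eq_countP hv, hc']
  calc ((part (RS x)).take k).sum = score k x c := hsc.symm
    _ = score k y c' := h1.symm
    _ ≤ ((part (RS y)).take k).sum := greeneUB y k hv'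

lemma step_len {x y : List ℤ} (h : KnuthStep x y ∨ KnuthStep y x ∨ LSStep x y) :
    x.length = y.length := by
  rcases h with hs | hs | hs
  · cases hs <;> simp
  · cases hs <;> simp
  · cases hs <;> simp

lemma part_sum_insert : ∀ (T : List (List ℤ)) (x : ℤ),
    (part (insertT T x)).sum = (part T).sum + 1
  | [], x => by simp [insertT, part]
  | r :: rs, x => by
    rcases rowInsert_spec r x with ⟨h1, _⟩ | ⟨r1, y0, r2, hr, hins0, _, _⟩
    · have hins : insertT (r :: rs) x = (r ++ [x]) :: rs := by simp [insertT, h1]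
      rw [hins]
      simp [part]
      omega
    · have hins : insertT (r :: rs) x = (r1 ++ x :: r2) :: insertT rs y0 := by
        simp [insertT, hins0]
      rw [hins]
      have := part_sum_insert rs y0
      simp [part] at this ⊢
      rw [this, hr]
      simp
      omega

lemma part_sum_RS (w : List ℤ) : (part (RS w)).sum = w.length := by
  induction w using List.reverseRecOn with
  | nil => simp [RS, part]
  | append_singleton w x ih =>
    have hRS : RS (w ++ [x]) = insertT (RS w) x := by
      unfold RS
      rw [List.foldl_concat]
    rw [hRS, part_sum_insert, ih]
    simp

end Greene12
/-- If `u` and `w` are words of integers and `w` can be obtained from `u` by a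
sequence of Knuth equivalences and larger-smaller transpositions, then
`part(RS(u)) ≤ part(RS(w))` in the dominance order on partitions. -/
theorem stmt2 (u w : List ℤ)
    (h : Relation.ReflTransGen
      (fun x y => KnuthStep x y ∨ KnuthStep y x ∨ LSStep x y) u w) :
    DomLE (part (RS u)) (part (RS w)) := by
  induction h with
  | refl => exact ⟨rfl, fun k => le_refl _⟩
  | @tail b c hub hstep ih =>
    obtain ⟨hsum, htake⟩ := ih
    refine ⟨?_, fun k => le_trans (htake k) (step_le hstep k)⟩
    rw [hsum, part_sum_RS, part_sum_RS, step_len hstep]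

end BG
end

section
/- Let a, b_1, …, b_m be integers with a > 0, b_1 < b_2 < … < b_m < 0 and −a < b_m. Then (a, b_1, …, b_m) ∼τ (b_1, …, b_m, −a). -/
namespace BG

variable {α : Type*}

lemma moveRight (a : ℤ) (s : List ℤ) : ∀ (u r : List ℤ) (d : ℤ),
    List.Chain' (· ≤ ·) (s ++ [d]) → (∀ x ∈ s ++ [d], x < a) →
    TauEquiv (u ++ a :: (s ++ d :: r)) (u ++ (s ++ a :: d :: r)) := by
  induction s with
  | nil => intro u r d _ _; exact Relation.EqvGen.refl _
  | cons x s ih =>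
    intro u r d hc hlt
    have hxy : x ≤ (s ++ [d]).head (by simp) := by
      cases s with
      | nil => simpa using hc.rel_head
      | cons y s' => simpa using hc.rel_head
    have hya : (s ++ [d]).head (by simp) < a := by
      apply hlt
      rw [List.cons_append]
      exact List.mem_cons_of_mem _ (List.head_mem _)
    have step : TauStep (u ++ x :: a :: (s ++ d :: r)) (u ++ a :: x :: (s ++ d :: r)) := by
      cases s with
      | nil =>
        simp only [List.nil_append] at hxy hya ⊢
        exact TauStep.knuth _ _ (KnuthStep.move1 u r x d a hxy hya)
      | cons y s' =>
        simp only [List.head_cons, List.cons_append] at hxy hya ⊢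
        exact TauStep.knuth _ _ (KnuthStep.move1 u (s' ++ d :: r) x y a hxy hya)
    have h1 : TauEquiv (u ++ a :: (x :: s ++ d :: r)) (u ++ x :: a :: (s ++ d :: r)) :=
      Relation.EqvGen.symm _ _ (Relation.EqvGen.rel _ _ step)
    have h2 := ih (u ++ [x]) r d hc.tail
      (fun y hy => hlt y (by simp only [List.cons_append, List.mem_cons]; right; exact hy))
    have h2' : TauEquiv (u ++ x :: a :: (s ++ d :: r)) (u ++ (x :: s ++ a :: d :: r)) := by
      simpa using h2
    exact Relation.EqvGen.trans _ _ _ h1 h2'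

/-- Let `a, b_1, …, b_m` be integers with `a > 0`, `b_1 < … < b_m < 0` and
`-a < b_m`.  Then `(a, b_1, …, b_m) ∼τ (b_1, …, b_m, -a)`. -/
theorem stmt3 (m : ℕ) (hm : 0 < m) (a : ℤ) (ha : 0 < a)
    (b : Fin m → ℤ) (hb : StrictMono b)
    (hbneg : b ⟨m - 1, by omega⟩ < 0)
    (hlast : -a < b ⟨m - 1, by omega⟩) :
    TauEquiv (a :: List.ofFn b) (List.ofFn b ++ [-a]) := by
  set l : List ℤ := List.ofFn b with hldef
  set d : ℤ := b ⟨m - 1, by omega⟩ with hddef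
  have hlne : l ≠ [] := by
    simp only [hldef, ne_eq, List.ofFn_eq_nil_iff]
    omega
  have hlen : l.length = m := by simp [hldef]
  have hlast_eq : l.getLast hlne = d := by
    rw [List.getLast_eq_getElem]
    simp only [hldef, List.getElem_ofFn]
    congr 1
    ext
    simp [hlen, hldef]
  set s : List ℤ := l.dropLast with hsdef
  have hsplit : l = s ++ [d] := by
    rw [hsdef, ← hlast_eq, List.dropLast_append_getLast]
  have hchain : List.Chain' (· ≤ ·) (s ++ [d]) := by
    rw [← hsplit, hldef]
    exact List.Pairwise.isChain ((List.pairwise_ofFn).2 (fun i j hij => (hb hij).le))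
  have hlt : ∀ x ∈ s ++ [d], x < a := by
    rw [← hsplit, hldef]
    intro x hx
    obtain ⟨i, rfl⟩ := (List.mem_ofFn).1 hx
    have h1 : b i ≤ d := hb.monotone (by rw [Fin.le_def]; simp only [Fin.val_mk]; omega : i ≤ ⟨m - 1, by omega⟩)
    exact lt_of_le_of_lt h1 (hbneg.trans ha)
  have h1 := moveRight a s [] [] d hchain hlt
  simp only [List.nil_append] at h1
  have h1' : TauEquiv (a :: l) (s ++ [a, d]) := by
    rw [hsplit]
    convert h1 using 2
  have h2 : TauStep (s ++ [a, d]) (s ++ [d, a]) :=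
    TauStep.swapLast s a d (mul_neg_of_pos_of_neg ha hbneg)
  have h3 : TauStep (s ++ [d, a]) (s ++ [d, -a]) := by
    apply TauStep.negLast s d a
    rw [abs_of_neg hbneg, abs_of_pos ha]
    omega
  have hfin : s ++ [d, -a] = l ++ [-a] := by
    rw [hsplit, List.append_assoc]
    rfl
  exact Relation.EqvGen.trans _ _ _ h1'
    (Relation.EqvGen.trans _ _ _ (Relation.EqvGen.rel _ _ h2)
      (hfin ▸ Relation.EqvGen.rel _ _ h3))

end BG
end

section
/- Let w = (a, b_1, …, b_m, c, 0, −c, −b_m, …, −b_1, −a) be a skew-symmetric word of integers such that part(RS(a, b_1, …, b_m, c)) = (m, 1, 1), b_1 < b_2 < … < b_m < 0, c < 0, and −c > a. Then w is Knuth equivalent to (a, b_1, …, b_m, −c, 0, c, −b_m, …, −b_1, −a). -/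
namespace BG

variable {α : Type*}

/-! ### Auxiliary lemmas -/

private lemma ke_rfl (w : List ℤ) : KnuthEquiv w w := Relation.EqvGen.refl w

private lemma ke_symm {w₁ w₂ : List ℤ} (h : KnuthEquiv w₁ w₂) : KnuthEquiv w₂ w₁ :=
  Relation.EqvGen.symm _ _ h

private lemma ke_trans {w₁ w₂ w₃ : List ℤ} (h₁ : KnuthEquiv w₁ w₂) (h₂ : KnuthEquiv w₂ w₃) :
    KnuthEquiv w₁ w₃ := Relation.EqvGen.trans _ _ _ h₁ h₂

private lemma ke_cast {w₁ w₂ w₁' w₂' : List ℤ} (h : KnuthEquiv w₁ w₂)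
    (e₁ : w₁ = w₁') (e₂ : w₂ = w₂') : KnuthEquiv w₁' w₂' := e₁ ▸ e₂ ▸ h

private lemma km1 (u v : List ℤ) (x y z : ℤ) (hxy : x ≤ y) (hyz : y < z) {w₁ w₂ : List ℤ}
    (h₁ : w₁ = u ++ x :: z :: y :: v) (h₂ : w₂ = u ++ z :: x :: y :: v) : KnuthEquiv w₁ w₂ := by
  subst h₁; subst h₂; exact Relation.EqvGen.rel _ _ (KnuthStep.move1 u v x y z hxy hyz)

private lemma km2 (u v : List ℤ) (x y z : ℤ) (hxy : x < y) (hyz : y ≤ z) {w₁ w₂ : List ℤ}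
    (h₁ : w₁ = u ++ y :: x :: z :: v) (h₂ : w₂ = u ++ y :: z :: x :: v) : KnuthEquiv w₁ w₂ := by
  subst h₁; subst h₂; exact Relation.EqvGen.rel _ _ (KnuthStep.move2 u v x y z hxy hyz)

private lemma rowInsert_none_s5 (x : ℤ) : ∀ (l : List ℤ), (∀ y ∈ l, ¬ x < y) →
    rowInsert l x = (l ++ [x], none)
  | [], _ => rfl
  | y :: l, h => by
    have hy : ¬ x < y := h y (by simp)
    have ih := rowInsert_none_s5 x l (fun z hz => h z (by simp [hz]))
    simp [rowInsert, hy, ih]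

private lemma rowInsert_some_s5 (c x : ℤ) (R : List ℤ) (hx : c < x) :
    ∀ (T : List ℤ), (∀ y ∈ T, ¬ c < y) →
    rowInsert (T ++ x :: R) c = (T ++ c :: R, some x)
  | [], _ => by simp [rowInsert, hx]
  | y :: T, h => by
    have hy : ¬ c < y := h y (by simp)
    have ih := rowInsert_some_s5 c x R hx T (fun z hz => h z (by simp [hz]))
    simp [rowInsert, hy, ih]

private lemma foldl_insertT_row : ∀ (bs : List ℤ), List.Pairwise (· < ·) bs →
    ∀ (l : List ℤ) (t : List (List ℤ)), (∀ x ∈ bs, ∀ y ∈ l, ¬ x < y) →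
    List.foldl insertT (l :: t) bs = (l ++ bs) :: t
  | [], _, l, t, _ => by simp
  | x :: bs, hp, l, t, h => by
    have h1 : ∀ y ∈ l, ¬ x < y := h x (by simp)
    have hins : insertT (l :: t) x = (l ++ [x]) :: t := by
      simp [insertT, rowInsert_none_s5 x l h1]
    rw [List.foldl_cons, hins,
      foldl_insertT_row bs hp.of_cons (l ++ [x]) t ?_]
    · simp
    · intro z hz y hy
      rcases List.mem_append.mp hy with hy | hy
      · exact h z (by simp [hz]) y hy
      · simp only [List.mem_singleton] at hy; subst hy
        exact not_lt.mpr (le_of_lt (List.rel_of_pairwise_cons hp hz))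

private lemma insertT_single_lt (a x : ℤ) (h : x < a) : insertT [[a]] x = [[x], [a]] := by
  simp [insertT, rowInsert, h]

private lemma insertT_single_ge (a x : ℤ) (h : ¬ x < a) : insertT [[a]] x = [[a, x]] := by
  simp [insertT, rowInsert, h]

private lemma insertT_single_len (r : List ℤ) (x : ℤ) : (insertT [r] x).length ≤ 2 := by
  rcases hrx : rowInsert r x with ⟨r', o⟩
  cases o <;> simp [insertT, hrx]

private lemma exists_split_s5 (c : ℤ) : ∀ (r : List ℤ), (∃ x ∈ r, c < x) →
    ∃ T x R, r = T ++ x :: R ∧ (∀ y ∈ T, ¬ c < y) ∧ c < x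
  | [], h => by simp at h
  | y :: r, h => by
    by_cases hy : c < y
    · exact ⟨[], y, r, by simp, by simp, hy⟩
    · obtain ⟨x, hx, hcx⟩ := h
      rcases List.mem_cons.mp hx with rfl | hx
      · exact absurd hcx hy
      · obtain ⟨T, x', R, hr, hT, hx'⟩ := exists_split_s5 c r ⟨x, hx, hcx⟩
        refine ⟨y :: T, x', R, by simp [hr], ?_, hx'⟩
        rintro z hz
        rcases List.mem_cons.mp hz with rfl | hz
        exacts [hy, hT z hz]

private lemma RS_shape (a c : ℤ) (bs : List ℤ) (hbs : bs ≠ [])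
    (hpw : List.Pairwise (· < ·) bs)
    (hpart : part (RS (a :: (bs ++ [c]))) = [bs.length, 1, 1]) :
    ∃ x ∈ bs, c < x ∧ x < a := by
  have hlen3 : (RS (a :: (bs ++ [c]))).length = 3 := by
    have := congrArg List.length hpart
    simpa [part] using this
  have hRS : RS (a :: (bs ++ [c])) = insertT (List.foldl insertT [[a]] bs) c := by
    rw [RS, List.foldl_cons, List.foldl_append, List.foldl_cons, List.foldl_nil]
    rfl
  obtain ⟨b0, bt, rfl⟩ := List.exists_cons_of_ne_nil hbs
  by_cases ha : b0 < a
  · -- first row becomes b0::bt with a bumped below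
    have hrow : List.foldl insertT [[a]] (b0 :: bt) = (b0 :: bt) :: [[a]] := by
      rw [List.foldl_cons, insertT_single_lt a b0 ha]
      have := foldl_insertT_row bt hpw.of_cons [b0] [[a]] ?_
      · simpa using this
      · intro z hz y hy
        simp only [List.mem_singleton] at hy; subst hy
        exact not_lt.mpr (le_of_lt (List.rel_of_pairwise_cons hpw hz))
    by_cases hex : ∃ x ∈ b0 :: bt, c < x
    · obtain ⟨T, x, R, hsp, hT, hcx⟩ := exists_split_s5 c _ hex
      refine ⟨x, by rw [hsp]; simp, hcx, ?_⟩
      by_contra hxa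
      have hRS2 : RS (a :: ((b0 :: bt) ++ [c])) = [T ++ c :: R, [a, x]] := by
        rw [hRS, hrow, hsp]
        have : insertT ((T ++ x :: R) :: [[a]]) c = (T ++ c :: R) :: insertT [[a]] x := by
          simp [insertT, rowInsert_some_s5 c x R hcx T hT]
        rw [this, insertT_single_ge a x hxa]
      rw [hRS2] at hlen3; simp at hlen3
    · push_neg at hex
      have hRS2 : RS (a :: ((b0 :: bt) ++ [c])) = ((b0 :: bt) ++ [c]) :: [[a]] := by
        rw [hRS, hrow]
        simp [insertT, rowInsert_none_s5 c _ (fun y hy => not_lt.mpr (hex y hy))]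
      rw [hRS2] at hlen3; simp at hlen3
  · -- a ≤ b0 : everything stays in the first row, at most two rows ever
    have hrow : List.foldl insertT [[a]] (b0 :: bt) = (a :: b0 :: bt) :: [] := by
      have := foldl_insertT_row (b0 :: bt) hpw [a] [] ?_
      · simpa using this
      · intro z hz y hy
        simp only [List.mem_singleton] at hy; subst hy
        rcases List.mem_cons.mp hz with rfl | hz
        · exact ha
        · exact not_lt.mpr (le_of_lt ((not_lt.mp ha).trans_lt (List.rel_of_pairwise_cons hpw hz)))
    rw [hRS, hrow] at hlen3
    have := insertT_single_len (a :: b0 :: bt) c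
    omega

private lemma p0 (P : List ℤ) : ∀ (u v : List ℤ) (aa w : ℤ),
    List.Pairwise (· < ·) (P ++ [w]) → (∀ x ∈ P ++ [w], x < aa) →
    KnuthEquiv (u ++ aa :: P ++ w :: v) (u ++ P ++ aa :: w :: v) := by
  induction P using List.reverseRecOn with
  | nil =>
    intro u v aa w _ _
    exact ke_cast (ke_rfl (u ++ aa :: w :: v)) (by simp) (by simp)
  | append_singleton P t ih =>
    intro u v aa w hpw hlt
    have hpwP : List.Pairwise (· < ·) (P ++ [t]) :=
      List.Pairwise.sublist (List.sublist_append_left _ _) hpw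
    have htw : t < w := (List.pairwise_append.mp hpw).2.2 t (by simp) w (by simp)
    have h1 : KnuthEquiv (u ++ aa :: P ++ t :: w :: v) (u ++ P ++ aa :: t :: w :: v) :=
      ih u (w :: v) aa t hpwP (fun x hx => hlt x (by
        rcases List.mem_append.mp hx with hx | hx
        · exact List.mem_append.mpr (Or.inl (List.mem_append.mpr (Or.inl hx)))
        · simp only [List.mem_singleton] at hx; subst hx; simp))
    have h2 : KnuthEquiv (u ++ P ++ aa :: t :: w :: v) (u ++ P ++ t :: aa :: w :: v) :=
      ke_symm (km1 (u ++ P) v t w aa htw.le (hlt w (by simp)) rfl rfl)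
    exact ke_cast (ke_trans h1 h2) (by simp) (by simp)

private lemma pa : ∀ (ds : List ℤ) (u v : List ℤ) (w c : ℤ),
    (∀ x ∈ w :: ds, c < x) → List.Pairwise (· < ·) (w :: ds) →
    KnuthEquiv (u ++ w :: ds ++ c :: v) (u ++ w :: c :: ds ++ v)
  | [], u, v, w, c, _, _ => ke_cast (ke_rfl (u ++ w :: c :: v)) (by simp) (by simp)
  | d :: ds, u, v, w, c, hc, hpw => by
    have h1 : KnuthEquiv (u ++ w :: d :: ds ++ c :: v) (u ++ w :: d :: c :: ds ++ v) := by
      have := pa ds (u ++ [w]) v d c (fun x hx => hc x (List.mem_cons_of_mem _ hx)) hpw.of_cons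
      exact ke_cast this (by simp) (by simp)
    have h2 : KnuthEquiv (u ++ w :: d :: c :: ds ++ v) (u ++ w :: c :: d :: ds ++ v) :=
      ke_symm (km2 u (ds ++ v) c w d (hc w (by simp))
        (le_of_lt (List.rel_of_pairwise_cons hpw (by simp))) (by simp) (by simp))
    exact ke_trans h1 h2

private lemma pb (L : List ℤ) : ∀ (u v : List ℤ) (C X : ℤ),
    List.Pairwise (· < ·) (L ++ [X]) → (∀ x ∈ L, x < C) → X < C →
    KnuthEquiv (u ++ L ++ C :: X :: v) (u ++ C :: L ++ X :: v) := by
  induction L using List.reverseRecOn with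
  | nil =>
    intro u v C X _ _ _
    exact ke_cast (ke_rfl (u ++ C :: X :: v)) (by simp) (by simp)
  | append_singleton L t ih =>
    intro u v C X hpw hlt hXC
    have hpwL : List.Pairwise (· < ·) (L ++ [t]) :=
      List.Pairwise.sublist (List.sublist_append_left _ _) hpw
    have htX : t < X := (List.pairwise_append.mp hpw).2.2 t (by simp) X (by simp)
    have h1 : KnuthEquiv (u ++ (L ++ [t]) ++ C :: X :: v) (u ++ L ++ C :: t :: X :: v) :=
      km1 (u ++ L) v t X C htX.le hXC (by simp) (by simp)
    have h2 : KnuthEquiv (u ++ L ++ C :: t :: X :: v) (u ++ C :: L ++ t :: X :: v) :=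
      ih u (X :: v) C t hpwL (fun x hx => hlt x (List.mem_append.mpr (Or.inl hx)))
        (hlt t (by simp))
    exact ke_cast (ke_trans h1 h2) (by simp) (by simp)

private lemma pd : ∀ (gs : List ℤ) (w t : ℤ) (u v : List ℤ) (c C : ℤ),
    (∀ x ∈ (w :: gs) ++ [t], c < x ∧ x < C) →
    List.Pairwise (· < ·) ((w :: gs) ++ [t]) →
    KnuthEquiv (u ++ C :: w :: c :: (gs ++ [t]) ++ v) (u ++ w :: gs ++ C :: t :: c :: v)
  | [], w, t, u, v, c, C, h, hpw => by
    have hcw : c < w := (h w (by simp)).1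
    have hwt : w < t := (List.pairwise_append.mp hpw).2.2 w (by simp) t (by simp)
    have htC : t < C := (h t (by simp)).2
    have h1 : KnuthEquiv (u ++ C :: w :: c :: ([] ++ [t]) ++ v) (u ++ C :: w :: t :: c :: v) :=
      km2 (u ++ [C]) v c w t hcw hwt.le (by simp) (by simp)
    have h2 : KnuthEquiv (u ++ C :: w :: t :: c :: v) (u ++ w :: C :: t :: c :: v) :=
      ke_symm (km1 u (c :: v) w t C hwt.le htC (by simp) (by simp))
    exact ke_cast (ke_trans h1 h2) rfl (by simp)
  | g :: gs, w, t, u, v, c, C, h, hpw => by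
    have hcw : c < w := (h w (by simp)).1
    have hwg : w < g := List.rel_of_pairwise_cons hpw (by simp)
    have hgC : g < C := (h g (by simp)).2
    have h1 : KnuthEquiv (u ++ C :: w :: c :: ((g :: gs) ++ [t]) ++ v)
        (u ++ C :: w :: g :: c :: (gs ++ [t]) ++ v) :=
      km2 (u ++ [C]) ((gs ++ [t]) ++ v) c w g hcw hwg.le (by simp) (by simp)
    have h2 : KnuthEquiv (u ++ C :: w :: g :: c :: (gs ++ [t]) ++ v)
        (u ++ w :: C :: g :: c :: (gs ++ [t]) ++ v) :=
      ke_symm (km1 u (c :: (gs ++ [t]) ++ v) w g C hwg.le hgC (by simp) (by simp))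
    have h3 := pd gs g t (u ++ [w]) v c C
      (fun x hx => h x (by
        rcases List.mem_append.mp hx with hx | hx
        · exact List.mem_append.mpr (Or.inl (List.mem_cons_of_mem _ hx))
        · exact List.mem_append.mpr (Or.inr hx)))
      (List.Pairwise.sublist (by simp) hpw)
    have h3' : KnuthEquiv (u ++ w :: C :: g :: c :: (gs ++ [t]) ++ v)
        (u ++ w :: g :: gs ++ C :: t :: c :: v) := ke_cast h3 (by simp) (by simp)
    exact ke_cast (ke_trans h1 (ke_trans h2 h3')) (by simp) (by simp)

private lemma mid (u v : List ℤ) (aa c C X d : ℤ) (ds : List ℤ)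
    (hpw : List.Pairwise (· < ·) (d :: ds))
    (hcds : ∀ x ∈ d :: ds, c < x) (h0 : ∀ x ∈ d :: ds, x < 0)
    (hda : d < aa) (haC : aa ≤ C) (hX0 : 0 < X) (hXC : X < C) (hc0 : c < 0) :
    KnuthEquiv (u ++ aa :: d :: ds ++ c :: 0 :: C :: X :: v)
               (u ++ aa :: d :: ds ++ C :: 0 :: c :: X :: v) := by
  have hC0 : (0 : ℤ) < C := hX0.trans hXC
  have hA : KnuthEquiv (u ++ aa :: d :: ds ++ c :: 0 :: C :: X :: v)
      (u ++ aa :: d :: c :: ds ++ 0 :: C :: X :: v) := by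
    have := pa ds (u ++ [aa]) (0 :: C :: X :: v) d c hcds hpw
    exact ke_cast this (by simp) (by simp)
  have hB : KnuthEquiv (u ++ aa :: d :: c :: ds ++ 0 :: C :: X :: v)
      (u ++ aa :: d :: c :: C :: ds ++ 0 :: X :: v) := by
    have hpw2 : List.Pairwise (· < ·) ((ds ++ [0]) ++ [X]) := by
      refine List.pairwise_append.mpr ⟨List.pairwise_append.mpr
        ⟨hpw.of_cons, by simp, ?_⟩, by simp, ?_⟩
      · intro x hx y hy
        simp only [List.mem_singleton] at hy; subst hy
        exact h0 x (List.mem_cons_of_mem _ hx)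
      · intro x hx y hy
        simp only [List.mem_singleton] at hy; subst hy
        rcases List.mem_append.mp hx with hx | hx
        · exact (h0 x (List.mem_cons_of_mem _ hx)).trans hX0
        · simp only [List.mem_singleton] at hx; subst hx; exact hX0
    have hlt2 : ∀ x ∈ ds ++ [0], x < C := by
      intro x hx
      rcases List.mem_append.mp hx with hx | hx
      · exact (h0 x (List.mem_cons_of_mem _ hx)).trans hC0
      · simp only [List.mem_singleton] at hx; subst hx; exact hC0
    have := pb (ds ++ [0]) (u ++ [aa, d, c]) v C X hpw2 hlt2 hXC
    exact ke_cast this (by simp) (by simp)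
  have hCm : KnuthEquiv (u ++ aa :: d :: c :: C :: ds ++ 0 :: X :: v)
      (u ++ aa :: d :: C :: c :: ds ++ 0 :: X :: v) :=
    km2 (u ++ [aa]) (ds ++ 0 :: X :: v) c d C (hcds d (by simp))
      ((h0 d (by simp)).le.trans hC0.le) (by simp) (by simp)
  have hC2 : KnuthEquiv (u ++ aa :: d :: C :: c :: ds ++ 0 :: X :: v)
      (u ++ aa :: C :: d :: c :: ds ++ 0 :: X :: v) :=
    km2 u (c :: ds ++ 0 :: X :: v) d aa C hda haC (by simp) (by simp)
  have hD : KnuthEquiv (u ++ aa :: C :: d :: c :: ds ++ 0 :: X :: v)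
      (u ++ aa :: d :: ds ++ C :: 0 :: c :: X :: v) := by
    have hall : ∀ x ∈ (d :: ds) ++ [(0 : ℤ)], c < x ∧ x < C := by
      intro x hx
      rcases List.mem_append.mp hx with hx | hx
      · exact ⟨hcds x hx, (h0 x hx).trans hC0⟩
      · simp only [List.mem_singleton] at hx; subst hx; exact ⟨hc0, hC0⟩
    have hpw3 : List.Pairwise (· < ·) ((d :: ds) ++ [(0 : ℤ)]) := by
      refine List.pairwise_append.mpr ⟨hpw, by simp, ?_⟩
      intro x hx y hy
      simp only [List.mem_singleton] at hy; subst hy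
      exact h0 x hx
    have := pd ds d 0 (u ++ [aa]) (X :: v) c C hall hpw3
    exact ke_cast this (by simp) (by simp)
  exact ke_trans hA (ke_trans hB (ke_trans hCm (ke_trans hC2 hD)))

/-- Let `w = (a, b_1, …, b_m, c, 0, -c, -b_m, …, -b_1, -a)` be a skew-symmetric
word of integers with `part(RS(a, b_1, …, b_m, c)) = (m, 1, 1)`,
`b_1 < … < b_m < 0`, `c < 0` and `-c > a`.  Then `w` is Knuth equivalent to
`(a, b_1, …, b_m, -c, 0, c, -b_m, …, -b_1, -a)`. -/
theorem stmt5 (m : ℕ) (hm : 0 < m) (a c : ℤ)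
    (b : Fin m → ℤ) (hb : StrictMono b)
    (hbm : b ⟨m - 1, by omega⟩ < 0) (hc : c < 0) (hca : a < -c)
    (hpart : part (RS (a :: (List.ofFn b ++ [c]))) = [m, 1, 1]) :
    KnuthEquiv
      (a :: (List.ofFn b ++ [c, 0, -c] ++ negRow (List.ofFn b) ++ [-a]))
      (a :: (List.ofFn b ++ [-c, 0, c] ++ negRow (List.ofFn b) ++ [-a])) := by
  classical
  have hbsne : List.ofFn b ≠ [] := by
    intro h
    have := congrArg List.length h
    simp at this
    omega
  have hpw : List.Pairwise (· < ·) (List.ofFn b) :=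
    List.pairwise_ofFn.mpr (fun i j h => hb h)
  have hneg : ∀ x ∈ List.ofFn b, x < 0 := by
    intro x hx
    obtain ⟨i, rfl⟩ := List.mem_ofFn.mp hx
    have hle : i ≤ (⟨m - 1, by omega⟩ : Fin m) := by
      rw [Fin.le_def]
      simp only []
      omega
    exact lt_of_le_of_lt (hb.monotone hle) hbm
  obtain ⟨x, hxbs, hcx, hxa⟩ := RS_shape a c (List.ofFn b) hbsne hpw
    (by rw [hpart, List.length_ofFn])
  obtain ⟨P, Q, hPQ⟩ := List.append_of_mem hxbs
  have hpwPQ : List.Pairwise (· < ·) (P ++ x :: Q) := by rw [← hPQ]; exact hpw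
  obtain ⟨hpwP, hpwxQ, hcross⟩ := List.pairwise_append.mp hpwPQ
  -- the largest letter b_m
  set X := (List.ofFn b).getLast hbsne with hXdef
  have hXmem : X ∈ List.ofFn b := List.getLast_mem hbsne
  have hX0 : X < 0 := hneg X hXmem
  have hxX : x ≤ X := by
    have hsplit : (List.ofFn b).dropLast ++ [X] = List.ofFn b :=
      List.dropLast_append_getLast hbsne
    have hpw' : List.Pairwise (· < ·) ((List.ofFn b).dropLast ++ [X]) := by
      rw [hsplit]; exact hpw
    have hx' : x ∈ (List.ofFn b).dropLast ++ [X] := by rw [hsplit]; exact hxbs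
    rcases List.mem_append.mp hx' with h | h
    · exact ((List.pairwise_append.mp hpw').2.2 x h X (by simp)).le
    · simp only [List.mem_singleton] at h; exact h ▸ le_refl _
  have hnegRow : negRow (List.ofFn b) =
      (-X) :: ((List.ofFn b).dropLast.reverse.map (fun y => -y)) := by
    rw [negRow]
    conv_lhs => rw [← List.dropLast_append_getLast hbsne]
    simp
    exact hXdef.symm
  set W := (List.ofFn b).dropLast.reverse.map (fun y => -y) with hWdef
  -- hypotheses for the moves
  have hpwPx : List.Pairwise (· < ·) (P ++ [x]) := by
    refine List.pairwise_append.mpr ⟨hpwP, by simp, ?_⟩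
    intro p hp y hy
    simp only [List.mem_singleton] at hy
    exact hy.symm ▸ hcross p hp x (by simp)
  have hlta : ∀ y ∈ P ++ [x], y < a := by
    intro y hy
    rcases List.mem_append.mp hy with hy | hy
    · exact (hcross y hy x (by simp)).trans hxa
    · simp only [List.mem_singleton] at hy; exact hy.symm ▸ hxa
  have hcds : ∀ y ∈ x :: Q, c < y := by
    intro y hy
    rcases List.mem_cons.mp hy with rfl | hy
    · exact hcx
    · exact hcx.trans (List.rel_of_pairwise_cons hpwxQ hy)
  have h0ds : ∀ y ∈ x :: Q, y < 0 := by
    intro y hy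
    exact hneg y (by rw [hPQ]; exact List.mem_append.mpr (Or.inr hy))
  -- the chain
  have e1 : KnuthEquiv (a :: (List.ofFn b ++ [c, 0, -c] ++ negRow (List.ofFn b) ++ [-a]))
      (P ++ a :: x :: Q ++ c :: 0 :: -c :: -X :: (W ++ [-a])) := by
    have := p0 P [] (Q ++ c :: 0 :: -c :: -X :: (W ++ [-a])) a x hpwPx hlta
    exact ke_cast this (by rw [hnegRow, hPQ]; simp) (by simp)
  have e2 : KnuthEquiv (P ++ a :: x :: Q ++ c :: 0 :: -c :: -X :: (W ++ [-a]))
      (P ++ a :: x :: Q ++ -c :: 0 :: c :: -X :: (W ++ [-a])) :=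
    mid P (W ++ [-a]) a c (-c) (-X) x Q hpwxQ hcds h0ds hxa hca.le
      (by omega) (by have : c < X := hcx.trans_le hxX; omega) hc
  have e3 : KnuthEquiv (P ++ a :: x :: Q ++ -c :: 0 :: c :: -X :: (W ++ [-a]))
      (a :: (List.ofFn b ++ [-c, 0, c] ++ negRow (List.ofFn b) ++ [-a])) := by
    have := p0 P [] (Q ++ -c :: 0 :: c :: -X :: (W ++ [-a])) a x hpwPx hlta
    exact ke_symm (ke_cast this (by rw [hnegRow, hPQ]; simp) (by simp))
  exact ke_trans e1 (ke_trans e2 e3)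


end BG
end

section
/- Let p < q be positive integers and let P be the symmetric pyramid with three rows of lengths 2p+1, 2q+1, 2p+1. If A ∈ sTab^≤(P) and A^{L−} is row equivalent to column strict, then A is justified row equivalent to column strict. -/
namespace BG

variable {α : Type*}

set_option maxHeartbeats 1000000 in
/-- Auxiliary splitting of `List.ofFn a` into its first `p` entries and the
reversed double negation of its last `p + 1` entries. -/
lemma splitA (p : ℕ) (a : Fin (2 * p + 1) → ℤ) :
    List.ofFn a = (List.ofFn fun i : Fin p => a ⟨i, by omega⟩) ++
      ((List.ofFn fun i : Fin (p + 1) => -a ⟨2 * p - i, by omega⟩).map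
        (fun x => -x)).reverse := by
  apply List.ext_getElem
  · simp only [List.length_ofFn, List.length_append, List.length_reverse,
      List.length_map]
    omega
  · intro n h1 h2
    simp only [List.length_ofFn] at h1
    rw [List.getElem_ofFn]
    by_cases hn : n < p
    · rw [List.getElem_append_left (by simp only [List.length_ofFn]; omega)]
      rw [List.getElem_ofFn]
    · rw [List.getElem_append_right (by simp only [List.length_ofFn]; omega)]
      rw [List.getElem_reverse, List.getElem_map, List.getElem_ofFn, neg_neg]
      congr 1
      refine Fin.ext ?_
      simp only [List.length_ofFn, List.length_map, List.length_reverse]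
      omega

set_option maxHeartbeats 1000000 in
/-- The bottom row of the new arrangement is a permutation of `negRow` of the
top row. -/
lemma permBot (p : ℕ) (a : Fin (2 * p + 1) → ℤ) (T Bo : List ℤ)
    (hT : (List.ofFn fun i : Fin p => a ⟨i, by omega⟩).Perm T)
    (hBo : (List.ofFn fun i : Fin (p + 1) => -a ⟨2 * p - i, by omega⟩).Perm Bo)
    (hBol : Bo.length = p + 1) :
    (negRow (List.ofFn a)).Perm
      (Bo.take p ++ (T.map (fun x => -x) ++ [Bo[p]'(by omega)])) := by
  have hBodrop : Bo.drop p = [Bo[p]'(by omega)] := by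
    rw [List.drop_eq_getElem_cons (by omega), List.drop_eq_nil_of_le (by omega)]
  have h2 : (negRow (List.ofFn a)).Perm (T.map (fun x => -x) ++ Bo) := by
    unfold negRow
    refine ((List.reverse_perm _).map _).trans ?_
    rw [splitA p a, List.map_append]
    refine List.Perm.append (hT.map _) ?_
    refine ((List.reverse_perm _).map _).trans ?_
    rw [List.map_map]
    have hcomp : ((fun x : ℤ => -x) ∘ (fun x : ℤ => -x)) = id := by
      funext x; simp
    rw [hcomp, List.map_id]
    exact hBo
  refine h2.trans (Multiset.coe_eq_coe.mp ?_)
  conv_lhs => rw [← List.take_append_drop p Bo]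
  rw [hBodrop]
  simp only [← Multiset.coe_add, ← Multiset.cons_coe, ← Multiset.singleton_add,
    Multiset.coe_nil]
  abel

set_option maxHeartbeats 1000000 in
/-- The top row of the new arrangement is a permutation of the top row. -/
lemma permTop (p : ℕ) (a : Fin (2 * p + 1) → ℤ) (T Bo : List ℤ)
    (hT : (List.ofFn fun i : Fin p => a ⟨i, by omega⟩).Perm T)
    (hBo : (List.ofFn fun i : Fin (p + 1) => -a ⟨2 * p - i, by omega⟩).Perm Bo) :
    (List.ofFn a).Perm (T ++ Bo.map (fun x => -x)) := by
  rw [splitA p a]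
  exact hT.append ((List.reverse_perm _).trans (hBo.map _))

set_option maxHeartbeats 1000000 in
/-- The middle row of the new arrangement is a permutation of the middle row. -/
lemma permMid (p q : ℕ) (b : Fin q → ℤ) (M : List ℤ)
    (hM : (List.ofFn b).Perm M) :
    (List.ofFn b ++ [0] ++ negRow (List.ofFn b)).Perm
      (M.take p ++ ((M.take p).map (fun x => -x) ++
        ((0 : ℤ) :: (M.drop p ++ (M.drop p).map (fun x => -x))))) := by
  have h1 : (List.ofFn b ++ [0] ++ negRow (List.ofFn b)).Perm
      (M ++ [(0 : ℤ)] ++ M.map (fun x => -x)) := by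
    refine List.Perm.append (List.Perm.append hM (List.Perm.refl _)) ?_
    unfold negRow
    exact ((List.reverse_perm _).map _).trans (hM.map _)
  refine h1.trans (Multiset.coe_eq_coe.mp ?_)
  conv_lhs => rw [← List.take_append_drop p M]
  simp only [List.map_append, ← Multiset.coe_add, ← Multiset.cons_coe,
    ← Multiset.singleton_add, Multiset.coe_nil]
  abel

set_option maxHeartbeats 1000000 in
/-- Column strictness of the new arrangement. -/
lemma colStrict (p q : ℕ) (hp : 0 < p) (hpq : p < q) (T M Bo : List ℤ)
    (hTl : T.length = p) (hMl : M.length = q) (hBol : Bo.length = p + 1)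
    (hcs : ColumnStrict [T, M, Bo]) (hMneg : ∀ x ∈ M, x ≤ 0) :
    ColumnStrict [T ++ Bo.map (fun x => -x),
      M.take p ++ ((M.take p).map (fun x => -x) ++
        ((0 : ℤ) :: (M.drop p ++ (M.drop p).map (fun x => -x)))),
      Bo.take p ++ (T.map (fun x => -x) ++ [Bo[p]'(by omega)])] := by
  have hTp : p ≤ T.length := by omega
  have hMp : p ≤ M.length := by omega
  have hBop : p ≤ Bo.length := by omega
  have hpBo : p < Bo.length := by omega
  have hpM : p < M.length := by omega
  have key : ∀ k (hk : k < p),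
      M[k]'(hk.trans_le hMp) < T[k]'(hk.trans_le hTp) ∧
        Bo[k]'(hk.trans_le hBop) < M[k]'(hk.trans_le hMp) := by
    intro k hk
    have hj := hcs k
    have e1 : T[k]? = some (T[k]'(hk.trans_le hTp)) :=
      List.getElem?_eq_getElem (hk.trans_le hTp)
    have e2 : M[k]? = some (M[k]'(hk.trans_le hMp)) :=
      List.getElem?_eq_getElem (hk.trans_le hMp)
    have e3 : Bo[k]? = some (Bo[k]'(hk.trans_le hBop)) :=
      List.getElem?_eq_getElem (hk.trans_le hBop)
    simp only [List.filterMap_cons, List.filterMap_nil, e1, e2, e3] at hj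
    simpa [List.Chain', List.isChain_cons_cons] using hj
  have keyp : Bo[p]'hpBo < M[p]'hpM := by
    have hj := hcs p
    have e1 : T[p]? = none := List.getElem?_eq_none (by omega)
    have e2 : M[p]? = some (M[p]'hpM) := List.getElem?_eq_getElem hpM
    have e3 : Bo[p]? = some (Bo[p]'hpBo) := List.getElem?_eq_getElem hpBo
    simp only [List.filterMap_cons, List.filterMap_nil, e1, e2, e3] at hj
    simpa [List.Chain', List.isChain_cons_cons] using hj
  have hg : Bo[p]'hpBo < 0 :=
    lt_of_lt_of_le keyp (hMneg _ (List.getElem_mem _))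
  intro j
  have hMtl : (M.take p).length = p := by rw [List.length_take]; omega
  have hMtnl : ((M.take p).map (fun x : ℤ => -x)).length = p := by
    rw [List.length_map]; exact hMtl
  have hBotl : (Bo.take p).length = p := by rw [List.length_take]; omega
  have hTnl : (T.map (fun x : ℤ => -x)).length = p := by
    rw [List.length_map]; exact hTl
  have hBonl : (Bo.map (fun x : ℤ => -x)).length = p + 1 := by
    rw [List.length_map]; exact hBol
  simp only [List.filterMap_cons, List.filterMap_nil]
  rcases lt_or_ge j p with hj | hj
  · have hjT : j < T.length := by omega
    have hjM : j < M.length := by omega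
    have hjBo : j < Bo.length := by omega
    have e0 : (T ++ Bo.map (fun x => -x))[j]? = some (T[j]'hjT) := by
      rw [List.getElem?_append_left (show j < T.length by omega)]
      exact List.getElem?_eq_getElem hjT
    have e1 : (M.take p ++ ((M.take p).map (fun x => -x) ++
        ((0 : ℤ) :: (M.drop p ++ (M.drop p).map (fun x => -x)))))[j]? =
        some (M[j]'hjM) := by
      rw [List.getElem?_append_left (show j < (M.take p).length by omega),
        List.getElem?_eq_getElem (show j < (M.take p).length by omega)]
      congr 1
      exact List.getElem_take
    have e2 : (Bo.take p ++ (T.map (fun x => -x) ++ [Bo[p]'hpBo]))[j]? =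
        some (Bo[j]'hjBo) := by
      rw [List.getElem?_append_left (show j < (Bo.take p).length by omega),
        List.getElem?_eq_getElem (show j < (Bo.take p).length by omega)]
      congr 1
      exact List.getElem_take
    rw [e0, e1, e2]
    simpa [List.Chain', List.isChain_cons_cons] using key j hj
  rcases lt_or_ge j (2 * p) with hj2 | hj2
  · -- p ≤ j < 2p
    have hk : j - p < p := by omega
    have hkT : j - p < T.length := by omega
    have hkM : j - p < M.length := by omega
    have hkBo : j - p < Bo.length := by omega
    have e0 : (T ++ Bo.map (fun x => -x))[j]? = some (-(Bo[j - p]'hkBo)) := by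
      rw [List.getElem?_append_right (show T.length ≤ j by omega), hTl,
        List.getElem?_eq_getElem
          (show j - p < (Bo.map (fun x : ℤ => -x)).length by omega)]
      congr 1
      exact List.getElem_map _
    have e1 : (M.take p ++ ((M.take p).map (fun x => -x) ++
        ((0 : ℤ) :: (M.drop p ++ (M.drop p).map (fun x => -x)))))[j]? =
        some (-(M[j - p]'hkM)) := by
      rw [List.getElem?_append_right (show (M.take p).length ≤ j by omega), hMtl,
        List.getElem?_append_left
          (show j - p < ((M.take p).map (fun x : ℤ => -x)).length by omega),
        List.getElem?_eq_getElem
          (show j - p < ((M.take p).map (fun x : ℤ => -x)).length by omega)]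
      congr 1
      rw [List.getElem_map]
      congr 1
      exact List.getElem_take
    have e2 : (Bo.take p ++ (T.map (fun x => -x) ++ [Bo[p]'hpBo]))[j]? =
        some (-(T[j - p]'hkT)) := by
      rw [List.getElem?_append_right (show (Bo.take p).length ≤ j by omega), hBotl,
        List.getElem?_append_left
          (show j - p < (T.map (fun x : ℤ => -x)).length by omega),
        List.getElem?_eq_getElem
          (show j - p < (T.map (fun x : ℤ => -x)).length by omega)]
      congr 1
      exact List.getElem_map _
    rw [e0, e1, e2]
    have := key (j - p) hk
    simp only [List.Chain', List.isChain_cons_cons, List.isChain_singleton, and_true]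
    omega
  rcases eq_or_lt_of_le hj2 with hj3 | hj3
  · -- j = 2p
    have e0 : (T ++ Bo.map (fun x => -x))[j]? = some (-(Bo[p]'hpBo)) := by
      rw [List.getElem?_append_right (show T.length ≤ j by omega), hTl,
        show j - p = p from by omega,
        List.getElem?_eq_getElem
          (show p < (Bo.map (fun x : ℤ => -x)).length by omega)]
      congr 1
      exact List.getElem_map _
    have e1 : (M.take p ++ ((M.take p).map (fun x => -x) ++
        ((0 : ℤ) :: (M.drop p ++ (M.drop p).map (fun x => -x)))))[j]? =
        some (0 : ℤ) := by
      rw [List.getElem?_append_right (show (M.take p).length ≤ j by omega), hMtl,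
        List.getElem?_append_right
          (show ((M.take p).map (fun x : ℤ => -x)).length ≤ j - p by omega),
        hMtnl, show j - p - p = 0 by omega]
      exact List.getElem?_cons_zero
    have e2 : (Bo.take p ++ (T.map (fun x => -x) ++ [Bo[p]'hpBo]))[j]? =
        some (Bo[p]'hpBo) := by
      rw [List.getElem?_append_right (show (Bo.take p).length ≤ j by omega), hBotl,
        List.getElem?_append_right
          (show (T.map (fun x : ℤ => -x)).length ≤ j - p by omega),
        hTnl, show j - p - p = 0 by omega]
      exact List.getElem?_cons_zero
    rw [e0, e1, e2]
    simp only [List.Chain', List.isChain_cons_cons, List.isChain_singleton, and_true]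
    omega
  · -- j > 2p
    have e0 : (T ++ Bo.map (fun x => -x))[j]? = none :=
      List.getElem?_eq_none (by
        rw [List.length_append, List.length_map]
        omega)
    have e2 : (Bo.take p ++ (T.map (fun x => -x) ++ [Bo[p]'hpBo]))[j]? = none :=
      List.getElem?_eq_none (by
        simp only [List.length_append, List.length_cons, List.length_nil,
          List.length_take, List.length_map]
        omega)
    rw [e0, e2]
    cases h1 : (M.take p ++ ((M.take p).map (fun x => -x) ++
        ((0 : ℤ) :: (M.drop p ++ (M.drop p).map (fun x => -x)))))[j]? <;>
      simp [List.Chain', List.isChain_singleton]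

/-- Let `p < q` be positive integers and let `P` be the symmetric pyramid with
three rows of lengths `2p+1, 2q+1, 2p+1`.  An element `A ∈ sTab^≤(P)` is given
by its top row `a_1 ≤ … ≤ a_{2p+1}` and the first half `b_1 ≤ … ≤ b_q ≤ 0` of
its middle row `(b_1, …, b_q, 0, -b_q, …, -b_1)`; the bottom row is
`(-a_{2p+1}, …, -a_1)` by skew-symmetry.  If `A^{L-}` (rows
`(a_1, …, a_p)`, `(b_1, …, b_q)`, `(-a_{2p+1}, …, -a_{p+1})`) is row
equivalent to column strict, then `A` is justified row equivalent to column
strict. -/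
theorem stmt7 (p q : ℕ) (hp : 0 < p) (hpq : p < q)
    (a : Fin (2 * p + 1) → ℤ) (b : Fin q → ℤ)
    (ha : Monotone a) (hb : Monotone b) (hb0 : b ⟨q - 1, by omega⟩ ≤ 0)
    (hLminus : RowEquivColumnStrict
      [List.ofFn (fun i : Fin p => a ⟨i, by omega⟩),
       List.ofFn b,
       List.ofFn (fun i : Fin (p + 1) => -a ⟨2 * p - i, by omega⟩)]) :
    RowEquivColumnStrict
      [List.ofFn a,
       List.ofFn b ++ [0] ++ negRow (List.ofFn b),
       negRow (List.ofFn a)] := by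
  obtain ⟨B, hforall, hcs⟩ := hLminus
  rw [List.forall₂_cons_left_iff] at hforall
  obtain ⟨T, B1, hT, hforall, rfl⟩ := hforall
  rw [List.forall₂_cons_left_iff] at hforall
  obtain ⟨M, B2, hM, hforall, rfl⟩ := hforall
  rw [List.forall₂_cons_left_iff] at hforall
  obtain ⟨Bo, B3, hBo, hforall, rfl⟩ := hforall
  obtain rfl : B3 = [] := List.forall₂_nil_left_iff.mp hforall
  have hTl : T.length = p := by simpa using hT.length_eq.symm
  have hMl : M.length = q := by simpa using hM.length_eq.symm
  have hBol : Bo.length = p + 1 := by simpa using hBo.length_eq.symm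
  have hMneg : ∀ x ∈ M, x ≤ 0 := by
    intro x hx
    have hx' : x ∈ List.ofFn b := hM.mem_iff.mpr hx
    rw [List.mem_ofFn] at hx'
    obtain ⟨i, rfl⟩ := hx'
    have hle : b i ≤ b ⟨q - 1, by omega⟩ := by
      apply hb
      have := i.2
      exact Fin.le_def.mpr (by simp; omega)
    exact hle.trans hb0
  refine ⟨[T ++ Bo.map (fun x => -x),
           M.take p ++ ((M.take p).map (fun x => -x) ++
             ((0 : ℤ) :: (M.drop p ++ (M.drop p).map (fun x => -x)))),
           Bo.take p ++ (T.map (fun x => -x) ++ [Bo[p]'(by omega)])], ?_, ?_⟩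
  · exact List.Forall₂.cons (permTop p a T Bo hT hBo)
      (List.Forall₂.cons (permMid p q b M hM)
        (List.Forall₂.cons (permBot p a T Bo hT hBo hBol) List.Forall₂.nil))
  · exact colStrict p q hp hpq T M Bo hTl hMl hBol hcs hMneg

end BG
end
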